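/- arXiv:1806.05989 — 5 statements merged into one kernel-verified Lean document; each statement's English description precedes it below -/
import Mathlib

section
/- For every irrational α and every index n ≥ 1, max(λ_{n−1}(α), λ_n(α)) ≥ K, where K = √((√5+1)/2) − 1. -/
/-- Complete quotients of the continued fraction expansion of α. -/
noncomputable def cq (α : ℝ) : ℕ → ℝ
  | 0 => α
  | n + 1 => (Int.fract (cq α n))⁻¹

/-- Denominators q_n of the continued fraction convergents of α. -/
noncomputable def qden (α : ℝ) : ℕ → ℤ
  | 0 => 1
  | 1 => ⌊cq α 1⌋
  | n + 2 => ⌊cq α (n + 2)⌋ * qden α (n + 1) + qden α n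

/-- Numerators p_n of the continued fraction convergents of α. -/
noncomputable def pnum (α : ℝ) : ℕ → ℤ
  | 0 => ⌊α⌋
  | 1 => ⌊cq α 1⌋ * ⌊α⌋ + 1
  | n + 2 => ⌊cq α (n + 2)⌋ * pnum α (n + 1) + pnum α n

/-- ξ_n = |q_n α − p_n|. -/
noncomputable def xi (α : ℝ) (n : ℕ) : ℝ := |(qden α n : ℝ) * α - (pnum α n : ℝ)|

/-- λ_n(α) = √(α_{n+1}) − 1. -/
noncomputable def lam (α : ℝ) (n : ℕ) : ℝ := Real.sqrt (cq α (n + 1)) - 1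

lemma cq_irrational (α : ℝ) (hα : Irrational α) : ∀ n, Irrational (cq α n) := by
  intro n
  induction n with
  | zero => exact hα
  | succ n ih =>
    show Irrational (Int.fract (cq α n))⁻¹
    have h1 : Irrational (Int.fract (cq α n)) := by
      unfold Int.fract
      exact Irrational.sub_intCast ih _
    exact h1.inv

lemma cq_gt_one (α : ℝ) (hα : Irrational α) (n : ℕ) : 1 < cq α (n + 1) := by
  have hirr : Irrational (Int.fract (cq α n)) := by
    unfold Int.fract; exact Irrational.sub_intCast (cq_irrational α hα n) _
  have h0 : 0 < Int.fract (cq α n) := by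
    rcases lt_or_eq_of_le (Int.fract_nonneg (cq α n)) with h | h
    · exact h
    · exact absurd h.symm (by simpa using hirr.ne_int 0)
  have h1 : Int.fract (cq α n) < 1 := Int.fract_lt_one _
  show 1 < (Int.fract (cq α n))⁻¹
  exact (one_lt_inv₀ h0).mpr h1

/-- Hilfssatz 2 (ii): max(λ_{n−1}(α), λ_n(α)) ≥ K where K = √((√5+1)/2) − 1. -/
theorem hilfssatz2_ii (α : ℝ) (hα : Irrational α) (n : ℕ) (hn : 1 ≤ n) :
    max (lam α (n - 1)) (lam α n) ≥ Real.sqrt ((Real.sqrt 5 + 1) / 2) - 1 := by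
  obtain ⟨m, rfl⟩ := Nat.exists_eq_add_of_le hn
  set τ : ℝ := (Real.sqrt 5 + 1) / 2 with hτdef
  have hs5 : (2:ℝ) ≤ Real.sqrt 5 := by
    nlinarith [Real.sq_sqrt (by norm_num : (5:ℝ) ≥ 0), Real.sqrt_nonneg 5]
  have hτpos : 0 < τ := by rw [hτdef]; positivity
  have hτsq : τ ^ 2 = τ + 1 := by
    rw [hτdef]; nlinarith [Real.sq_sqrt (by norm_num : (5:ℝ) ≥ 0)]
  have hτ2 : τ ≤ 2 := by nlinarith
  -- main claim: max (cq α (1+m)) (cq α (1+m+1)) ≥ τ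
  have key : τ ≤ max (cq α (1 + m)) (cq α (1 + m + 1)) := by
    set x := cq α (1 + m) with hx
    set y := cq α (1 + m + 1) with hy
    have hx1 : 1 < x := by rw [hx, Nat.add_comm]; exact cq_gt_one α hα m
    have hy1 : 1 < y := cq_gt_one α hα (1 + m)
    have hrel : x = ⌊x⌋ + 1 / y := by
      have : y = (Int.fract x)⁻¹ := rfl
      have hfrac : Int.fract x = 1 / y := by
        rw [this, one_div, inv_inv]
      have := Int.fract_add_floor x
      rw [hfrac] at this
      linarith [this]
    by_cases hfl : (2:ℤ) ≤ ⌊x⌋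
    · have : (2:ℝ) ≤ (⌊x⌋:ℝ) := by exact_mod_cast hfl
      have : (2:ℝ) ≤ x := by
        have hy0 : 0 < y := lt_trans one_pos hy1
        rw [hrel]; have : 0 < 1 / y := by positivity
        linarith
      exact le_trans (le_trans hτ2 this) (le_max_left x y)
    · push_neg at hfl
      have hfl1 : ⌊x⌋ = 1 := by
        have : (1:ℤ) ≤ ⌊x⌋ := Int.le_floor.mpr (by exact_mod_cast hx1.le)
        omega
      rw [hfl1] at hrel
      by_cases hyτ : τ ≤ y
      · exact le_trans hyτ (le_max_right x y)
      · push_neg at hyτ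
        have hy0 : 0 < y := lt_trans one_pos hy1
        have : 1 / τ < 1 / y := by
          apply one_div_lt_one_div_of_lt hy0 hyτ
        have hτx : τ ≤ x := by
          rw [hrel]
          have h1τ : 1 + 1 / τ = τ := by
            field_simp
            nlinarith
          push_cast
          linarith
        exact le_trans hτx (le_max_left x y)
  -- convert to sqrt
  have hres : Real.sqrt τ - 1 ≤ max (Real.sqrt (cq α (1 + m))) (Real.sqrt (cq α (1 + m + 1))) - 1 := by
    rcases le_max_iff.mp key with h | h
    · have := Real.sqrt_le_sqrt h
      have h2 := le_max_left (Real.sqrt (cq α (1 + m))) (Real.sqrt (cq α (1 + m + 1)))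
      linarith
    · have := Real.sqrt_le_sqrt h
      have h2 := le_max_right (Real.sqrt (cq α (1 + m))) (Real.sqrt (cq α (1 + m + 1)))
      linarith
  have hidx : 1 + m - 1 + 1 = 1 + m := by omega
  have h1 : lam α (1 + m - 1) = Real.sqrt (cq α (1 + m)) - 1 := by
    unfold lam; rw [hidx]
  have h2 : lam α (1 + m) = Real.sqrt (cq α (1 + m + 1)) - 1 := rfl
  rw [ge_iff_le, h1, h2]
  rcases max_cases (Real.sqrt (cq α (1 + m))) (Real.sqrt (cq α (1 + m + 1))) with ⟨he, _⟩ | ⟨he, _⟩ <;>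
    rw [he] at hres <;> simp [le_max_iff] <;> [left; right] <;> linarith
end

section
/- Main theorem: Let α and β be irrational numbers with α + β ∉ ℤ and α − β ∉ ℤ. Then for every T ≥ 1 there exists t ≥ T such that |ψ_α(t) − ψ_β(t)| ≥ K · min(ψ_α(t), ψ_β(t)), where K = √((√5+1)/2) − 1. -/
/-- Distance from a real number to the nearest integer. -/
noncomputable def dni (x : ℝ) : ℝ := |x - round x|

/-- The irrationality measure function ψ_ξ(t) = min_{1 ≤ q ≤ t, q ∈ ℤ} ‖qξ‖. -/
noncomputable def psi (ξ t : ℝ) : ℝ :=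
  sInf {v : ℝ | ∃ q : ℤ, 1 ≤ q ∧ (q : ℝ) ≤ t ∧ v = dni ((q : ℝ) * ξ)}

namespace Satz1Aux

/-- signed error -/
noncomputable def del (ξ : ℝ) (q : ℤ) : ℝ := (q : ℝ) * ξ - round ((q : ℝ) * ξ)

/-- numerator -/
noncomputable def pnum (ξ : ℝ) (q : ℤ) : ℤ := round ((q : ℝ) * ξ)

/-- integer-argument version of psi -/
noncomputable def mm (ξ : ℝ) (N : ℤ) : ℝ :=
  sInf {v : ℝ | ∃ q : ℤ, 1 ≤ q ∧ q ≤ N ∧ v = dni ((q : ℝ) * ξ)}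

/-- best approximation denominator (record) -/
def IsRec (ξ : ℝ) (Q : ℤ) : Prop :=
  1 ≤ Q ∧ ∀ q : ℤ, 1 ≤ q → q < Q → dni ((Q : ℝ) * ξ) < dni ((q : ℝ) * ξ)

/-- consecutive records -/
def Consec (ξ : ℝ) (Q Q' : ℤ) : Prop :=
  IsRec ξ Q ∧ IsRec ξ Q' ∧ Q < Q' ∧
    ∀ q : ℤ, Q < q → q < Q' → dni ((Q : ℝ) * ξ) ≤ dni ((q : ℝ) * ξ)

/-- sign -/
noncomputable def sg (x : ℝ) : ℤ := if 0 < x then 1 else -1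

lemma sg_sq (x : ℝ) : sg x * sg x = 1 := by
  unfold sg; split <;> norm_num

lemma pos_right_of_mul_neg {u v : ℝ} (h : u * v < 0) (hu : u < 0) : 0 < v := by
  rcases mul_neg_iff.mp h with ⟨h1, h2⟩ | ⟨h1, h2⟩
  · linarith
  · exact h2

lemma neg_right_of_mul_neg {u v : ℝ} (h : u * v < 0) (hu : 0 < u) : v < 0 := by
  rcases mul_neg_iff.mp h with ⟨h1, h2⟩ | ⟨h1, h2⟩
  · exact h2
  · linarith

lemma pos_right_of_mul_pos {u v : ℝ} (h : 0 < u * v) (hu : 0 < u) : 0 < v := by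
  rcases mul_pos_iff.mp h with ⟨h1, h2⟩ | ⟨h1, h2⟩
  · exact h2
  · linarith

lemma neg_right_of_mul_pos {u v : ℝ} (h : 0 < u * v) (hu : u < 0) : v < 0 := by
  rcases mul_pos_iff.mp h with ⟨h1, h2⟩ | ⟨h1, h2⟩
  · linarith
  · exact h2

lemma dni_eq_del (ξ : ℝ) (q : ℤ) : dni ((q : ℝ) * ξ) = |del ξ q| := rfl

lemma del_eq (ξ : ℝ) (q : ℤ) : del ξ q = (q : ℝ) * ξ - (pnum ξ q : ℝ) := rfl

lemma round_min (x : ℝ) (m : ℤ) : |x - round x| ≤ |x - m| := by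
  by_contra h
  push_neg at h
  have h2 : |x - (m : ℝ)| < 1 / 2 := lt_of_lt_of_le h (abs_sub_round x)
  rw [abs_lt] at h2
  have hr : round x = m := by
    rw [round_eq]
    apply Int.floor_eq_iff.mpr
    constructor
    · push_cast; linarith [h2.2]
    · push_cast; linarith [h2.1]
  rw [hr] at h
  exact absurd h (by simp)

lemma dni_nonneg (x : ℝ) : 0 ≤ dni x := abs_nonneg _

lemma dni_pos {x : ℝ} (hx : Irrational x) : 0 < dni x := by
  rw [dni, abs_pos, sub_ne_zero]
  exact hx.ne_int (round x)

lemma irr_mul {ξ : ℝ} (hξ : Irrational ξ) {q : ℤ} (hq : 1 ≤ q) :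
    Irrational ((q : ℝ) * ξ) :=
  hξ.intCast_mul (by omega)

lemma del_ne {ξ : ℝ} (hξ : Irrational ξ) {q : ℤ} (hq : 1 ≤ q) : del ξ q ≠ 0 := by
  have := dni_pos (irr_mul hξ hq)
  rw [dni_eq_del] at this
  exact abs_pos.mp this

noncomputable def FS (ξ : ℝ) (N : ℤ) : Finset ℝ :=
  (Finset.Icc 1 N).image (fun q : ℤ => dni ((q : ℝ) * ξ))

lemma FS_nonempty (ξ : ℝ) {N : ℤ} (hN : 1 ≤ N) : (FS ξ N).Nonempty := by
  refine ⟨dni ((1 : ℝ) * ξ), ?_⟩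
  simp only [FS, Finset.mem_image]
  exact ⟨1, by simp [Finset.mem_Icc, hN], by norm_num⟩

lemma mm_eq_min' (ξ : ℝ) {N : ℤ} (hN : 1 ≤ N) :
    mm ξ N = (FS ξ N).min' (FS_nonempty ξ hN) := by
  have hset : {v : ℝ | ∃ q : ℤ, 1 ≤ q ∧ q ≤ N ∧ v = dni ((q : ℝ) * ξ)} = ↑(FS ξ N) := by
    ext v
    simp only [Set.mem_setOf_eq, FS, Finset.coe_image, Set.mem_image, Finset.mem_coe,
      Finset.mem_Icc]
    constructor
    · rintro ⟨q, h1, h2, h3⟩; exact ⟨q, ⟨h1, h2⟩, h3.symm⟩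
    · rintro ⟨q, ⟨h1, h2⟩, h3⟩; exact ⟨q, h1, h2, h3.symm⟩
  rw [mm, hset, (FS_nonempty ξ hN).csInf_eq_min']

lemma mm_le (ξ : ℝ) {N q : ℤ} (h1 : 1 ≤ q) (h2 : q ≤ N) :
    mm ξ N ≤ dni ((q : ℝ) * ξ) := by
  rw [mm_eq_min' ξ (le_trans h1 h2)]
  apply Finset.min'_le
  simp only [FS, Finset.mem_image]
  exact ⟨q, by simp [Finset.mem_Icc, h1, h2], rfl⟩

lemma mm_exists (ξ : ℝ) {N : ℤ} (hN : 1 ≤ N) :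
    ∃ q : ℤ, 1 ≤ q ∧ q ≤ N ∧ mm ξ N = dni ((q : ℝ) * ξ) := by
  have := (FS ξ N).min'_mem (FS_nonempty ξ hN)
  rw [← mm_eq_min' ξ hN] at this
  simp only [FS, Finset.mem_image, Finset.mem_Icc] at this
  obtain ⟨q, ⟨h1, h2⟩, h3⟩ := this
  exact ⟨q, h1, h2, h3.symm⟩

lemma mm_pos {ξ : ℝ} (hξ : Irrational ξ) {N : ℤ} (hN : 1 ≤ N) : 0 < mm ξ N := by
  obtain ⟨q, h1, _, h3⟩ := mm_exists ξ hN
  rw [h3]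
  exact dni_pos (irr_mul hξ h1)

lemma mm_anti (ξ : ℝ) {N N' : ℤ} (h1 : 1 ≤ N) (h2 : N ≤ N') : mm ξ N' ≤ mm ξ N := by
  obtain ⟨q, hq1, hq2, hq3⟩ := mm_exists ξ h1
  rw [hq3]
  exact mm_le ξ hq1 (le_trans hq2 h2)

lemma psi_eq_mm (ξ : ℝ) {t : ℝ} (ht : 1 ≤ t) : psi ξ t = mm ξ ⌊t⌋ := by
  unfold psi mm
  congr 1
  ext v
  constructor
  · rintro ⟨q, h1, h2, h3⟩
    exact ⟨q, h1, Int.le_floor.mpr h2, h3⟩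
  · rintro ⟨q, h1, h2, h3⟩
    exact ⟨q, h1, Int.le_floor.mp h2, h3⟩

lemma mm_le_inv (ξ : ℝ) {N : ℤ} (hN : 1 ≤ N) : mm ξ N ≤ 1 / ((N : ℝ) + 1) := by
  have hpos : 0 < N.toNat := by omega
  obtain ⟨j, k, hk0, hkn, hb⟩ := Real.exists_int_int_abs_mul_sub_le ξ hpos
  have hkN : k ≤ N := by omega
  have h1 : mm ξ N ≤ dni ((k : ℝ) * ξ) := mm_le ξ (by omega) hkN
  have h2 : dni ((k : ℝ) * ξ) ≤ |(k : ℝ) * ξ - j| := round_min _ _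
  have h3 : ((N.toNat : ℝ) + 1) = (N : ℝ) + 1 := by
    have : (N.toNat : ℤ) = N := by omega
    exact_mod_cast congrArg (fun z : ℤ => (z : ℝ) + 1) this
  rw [h3] at hb
  linarith

lemma mm_rec {ξ : ℝ} {Q : ℤ} (h : IsRec ξ Q) : mm ξ Q = dni ((Q : ℝ) * ξ) := by
  apply le_antisymm (mm_le ξ h.1 le_rfl)
  obtain ⟨q, h1, h2, h3⟩ := mm_exists ξ h.1
  rw [h3]
  rcases eq_or_lt_of_le h2 with he | hlt
  · rw [he]
  · exact le_of_lt (h.2 q h1 hlt)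

lemma mm_between {ξ : ℝ} {Q Q' : ℤ} (h : Consec ξ Q Q') {N : ℤ} (h1 : Q ≤ N) (h2 : N < Q') :
    mm ξ N = dni ((Q : ℝ) * ξ) := by
  apply le_antisymm (mm_le ξ h.1.1 h1)
  obtain ⟨q, hq1, hq2, hq3⟩ := mm_exists ξ (le_trans h.1.1 h1)
  rw [hq3]
  rcases lt_trichotomy q Q with hc | hc | hc
  · exact le_of_lt (h.1.2 q hq1 hc)
  · rw [hc]
  · exact h.2.2.2 q hc (lt_of_le_of_lt hq2 h2)

lemma mm_no_jump {ξ : ℝ} {N : ℤ} (h : ¬ IsRec ξ N) (hN : 2 ≤ N) :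
    mm ξ N = mm ξ (N - 1) := by
  apply le_antisymm (mm_anti ξ (by omega) (by omega))
  obtain ⟨q, h1, h2, h3⟩ := mm_exists ξ (by omega : (1:ℤ) ≤ N)
  rcases eq_or_lt_of_le h2 with he | hlt
  · rw [IsRec] at h
    push_neg at h
    obtain ⟨q', hq1, hq2, hq3⟩ := h (by omega)
    calc mm ξ (N - 1) ≤ dni ((q' : ℝ) * ξ) := mm_le ξ hq1 (by omega)
    _ ≤ dni ((N : ℝ) * ξ) := hq3
    _ = mm ξ N := by rw [h3, he]
  · rw [h3]
    exact mm_le ξ h1 (by omega)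

lemma rec_dni_lt {ξ : ℝ} {Q Q' : ℤ} (h : IsRec ξ Q') (h1 : 1 ≤ Q) (h2 : Q < Q') :
    dni ((Q' : ℝ) * ξ) < dni ((Q : ℝ) * ξ) := h.2 Q h1 h2

lemma exists_rec_le (ξ : ℝ) {N : ℤ} (hN : 1 ≤ N) :
    ∃ Q : ℤ, IsRec ξ Q ∧ Q ≤ N ∧ dni ((Q : ℝ) * ξ) = mm ξ N := by
  classical
  set A := (Finset.Icc (1 : ℤ) N).filter (fun q : ℤ => dni ((q : ℝ) * ξ) = mm ξ N) with hA
  have hne : A.Nonempty := by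
    obtain ⟨q, h1, h2, h3⟩ := mm_exists ξ hN
    exact ⟨q, by simp [hA, Finset.mem_Icc, h1, h2, h3.symm]⟩
  refine ⟨A.min' hne, ?_, ?_, ?_⟩
  · have hm := A.min'_mem hne
    simp only [hA, Finset.mem_filter, Finset.mem_Icc] at hm
    refine ⟨hm.1.1, fun q hq1 hq2 => ?_⟩
    have hqN : q ≤ N := le_trans (le_of_lt hq2) hm.1.2
    have hle : mm ξ N ≤ dni ((q : ℝ) * ξ) := mm_le ξ hq1 hqN
    rcases eq_or_lt_of_le hle with he | hlt
    · exfalso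
      have : q ∈ A := by simp [hA, Finset.mem_Icc, hq1, hqN, he.symm]
      have := A.min'_le q this
      omega
    · rw [hm.2]; exact hlt
  · have hm := A.min'_mem hne
    simp only [hA, Finset.mem_filter, Finset.mem_Icc] at hm
    exact hm.1.2
  · have hm := A.min'_mem hne
    simp only [hA, Finset.mem_filter, Finset.mem_Icc] at hm
    exact hm.2

lemma exists_rec_gt {ξ : ℝ} (hξ : Irrational ξ) {B : ℤ} (hB : 1 ≤ B) :
    ∃ Q : ℤ, IsRec ξ Q ∧ B < Q ∧ dni ((Q : ℝ) * ξ) < mm ξ B := by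
  have hpos := mm_pos hξ hB
  obtain ⟨n, hn⟩ := exists_nat_gt (1 / mm ξ B)
  set N : ℤ := max B n with hNdef
  have hN1 : 1 ≤ N := le_trans hB (le_max_left _ _)
  have hNb : (1 : ℝ) / ((N : ℝ) + 1) < mm ξ B := by
    have hn' : (n : ℝ) ≤ (N : ℝ) := by exact_mod_cast le_max_right B (n : ℤ)
    have hNpos : (0 : ℝ) < (N : ℝ) + 1 := by positivity
    have h' : 1 / mm ξ B < (N : ℝ) + 1 := by linarith
    rw [div_lt_iff₀ hpos] at h'
    rw [div_lt_iff₀ hNpos]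
    nlinarith
  obtain ⟨Q, hQrec, hQN, hQval⟩ := exists_rec_le ξ hN1
  refine ⟨Q, hQrec, ?_, ?_⟩
  · by_contra hc
    push_neg at hc
    have : mm ξ B ≤ dni ((Q : ℝ) * ξ) := mm_le ξ hQrec.1 hc
    have : mm ξ N ≤ 1 / ((N : ℝ) + 1) := mm_le_inv ξ hN1
    nlinarith [mm_anti ξ hB (le_max_left B (n : ℤ))]
  · calc dni ((Q : ℝ) * ξ) = mm ξ N := hQval
    _ ≤ 1 / ((N : ℝ) + 1) := mm_le_inv ξ hN1
    _ < mm ξ B := hNb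

lemma exists_next {ξ : ℝ} (hξ : Irrational ξ) {Q : ℤ} (hQ : IsRec ξ Q) :
    ∃ Q' : ℤ, Consec ξ Q Q' := by
  classical
  obtain ⟨R, hRrec, hRQ, hRval⟩ := exists_rec_gt hξ hQ.1
  rw [mm_rec hQ] at hRval
  have hQ1 := hQ.1
  set A := (Finset.Icc (Q + 1) R).filter
    (fun q : ℤ => dni ((q : ℝ) * ξ) < dni ((Q : ℝ) * ξ)) with hA
  have hRA : R ∈ A := by
    simp only [hA, Finset.mem_filter, Finset.mem_Icc]
    exact ⟨⟨by omega, le_rfl⟩, hRval⟩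
  have hne : A.Nonempty := ⟨R, hRA⟩
  obtain ⟨Q', hQ'A, hQ'min⟩ : ∃ Q' ∈ A, ∀ q ∈ A, Q' ≤ q :=
    ⟨A.min' hne, A.min'_mem hne, fun q hq => A.min'_le q hq⟩
  simp only [hA, Finset.mem_filter, Finset.mem_Icc] at hQ'A hQ'min
  have hQQ' : Q < Q' := by have := hQ'A.1.1; omega
  have hbetween : ∀ q : ℤ, Q < q → q < Q' → dni ((Q : ℝ) * ξ) ≤ dni ((q : ℝ) * ξ) := by
    intro q hq1 hq2
    by_contra hcon
    push_neg at hcon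
    have := hQ'min q ⟨⟨by omega, by have := hQ'A.1.2; omega⟩, hcon⟩
    omega
  refine ⟨Q', hQ, ⟨by omega, fun q hq1 hq2 => ?_⟩, hQQ', hbetween⟩
  rcases lt_trichotomy q Q with hcs | hcs | hcs
  · exact lt_trans hQ'A.2 (hQ.2 q hq1 hcs)
  · rw [hcs]; exact hQ'A.2
  · exact lt_of_lt_of_le hQ'A.2 (hbetween q hcs hq2)

lemma consec_dni_le_inv {ξ : ℝ} {Q Q' : ℤ} (h : Consec ξ Q Q') :
    dni ((Q : ℝ) * ξ) ≤ 1 / (Q' : ℝ) := by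
  have hQ1 := h.1.1
  have hQQ' := h.2.2.1
  have h1 : mm ξ (Q' - 1) = dni ((Q : ℝ) * ξ) := mm_between h (by omega) (by omega)
  have h2 : mm ξ (Q' - 1) ≤ 1 / (((Q' - 1 : ℤ) : ℝ) + 1) := by
    apply mm_le_inv ξ
    omega
  rw [h1] at h2
  have : (((Q' - 1 : ℤ) : ℝ) + 1) = (Q' : ℝ) := by push_cast; ring
  rwa [this] at h2

lemma alt {ξ : ℝ} (hξ : Irrational ξ) {Q Q' : ℤ} (h : Consec ξ Q Q') :
    del ξ Q * del ξ Q' < 0 := by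
  have hQ1 : 1 ≤ Q := h.1.1
  have hu : del ξ Q ≠ 0 := del_ne hξ hQ1
  have hv : del ξ Q' ≠ 0 := del_ne hξ (by have := h.2.2.1; omega)
  by_contra hc
  push_neg at hc
  have hprod : 0 < del ξ Q * del ξ Q' := by
    rcases lt_or_eq_of_le hc with h' | h'
    · exact h'
    · exact absurd h'.symm (mul_ne_zero hu hv)
  set u := del ξ Q with hu'
  set v := del ξ Q' with hv'
  have habs : |v| < |u| := by
    rw [← dni_eq_del, ← dni_eq_del]
    exact rec_dni_lt h.2.1 hQ1 h.2.2.1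
  set q₀ := Q' - Q with hq₀
  have hq₀1 : 1 ≤ q₀ := by have := h.2.2.1; omega
  have hq₀N : q₀ ≤ Q' - 1 := by omega
  have hkey : dni ((q₀ : ℝ) * ξ) ≤ |v - u| := by
    have := round_min ((q₀ : ℝ) * ξ) (pnum ξ Q' - pnum ξ Q)
    rw [dni]
    apply le_trans this
    have : (q₀ : ℝ) * ξ - ((pnum ξ Q' - pnum ξ Q : ℤ) : ℝ) = v - u := by
      rw [hv', hu', del_eq, del_eq]
      push_cast [hq₀]
      ring
    rw [this]
  have hvu : |v - u| = |u| - |v| := by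
    rcases lt_or_gt_of_ne hu with hneg | hpos
    · have hvneg : v < 0 := by nlinarith
      have h1 : |u| = -u := abs_of_neg hneg
      have h2 : |v| = -v := abs_of_neg hvneg
      have h3 : 0 ≤ v - u := by rw [h1, h2] at habs; linarith
      rw [abs_of_nonneg h3, h1, h2]; ring
    · have hvpos : 0 < v := by nlinarith
      have h1 : |u| = u := abs_of_pos hpos
      have h2 : |v| = v := abs_of_pos hvpos
      have h3 : v - u ≤ 0 := by rw [h1, h2] at habs; linarith
      rw [abs_of_nonpos h3, h1, h2]; ring
  have hlow : dni ((Q : ℝ) * ξ) ≤ dni ((q₀ : ℝ) * ξ) := by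
    calc dni ((Q : ℝ) * ξ) = mm ξ (Q' - 1) := (mm_between h (by omega) (by omega)).symm
    _ ≤ mm ξ q₀ := mm_anti ξ hq₀1 hq₀N
    _ ≤ dni ((q₀ : ℝ) * ξ) := mm_le ξ hq₀1 le_rfl
  rw [dni_eq_del] at hlow
  rw [hvu] at hkey
  have : |v| > 0 := abs_pos.mpr hv
  linarith

lemma det1 {ξ : ℝ} (hξ : Irrational ξ) {Q Q' : ℤ} (h : Consec ξ Q Q') :
    Q * pnum ξ Q' - Q' * pnum ξ Q = sg (del ξ Q) := by
  set u := del ξ Q with hu'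
  set v := del ξ Q' with hv'
  set d : ℤ := Q * pnum ξ Q' - Q' * pnum ξ Q with hd
  have hQ1 : 1 ≤ Q := h.1.1
  have hQ'1 : Q < Q' := h.2.2.1
  have hkey : (d : ℝ) = (Q' : ℝ) * u - (Q : ℝ) * v := by
    rw [hd, hu', hv', del_eq, del_eq]
    push_cast
    ring
  have halt : u * v < 0 := alt hξ h
  have hQpos : (0 : ℝ) < (Q : ℝ) := by exact_mod_cast hQ1
  have hQ'pos : (0 : ℝ) < (Q' : ℝ) := by exact_mod_cast (by omega : (0:ℤ) < Q')
  have h1 : (Q' : ℝ) * |u| ≤ 1 := by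
    have := consec_dni_le_inv h
    rw [dni_eq_del] at this
    rw [mul_comm, ← le_div_iff₀ hQ'pos]
    exact this
  have habsuv : |v| < |u| := by
    rw [← dni_eq_del, ← dni_eq_del]
    exact rec_dni_lt h.2.1 hQ1 hQ'1
  have h2 : (Q : ℝ) * |v| < 1 := by
    have hQQ' : (Q : ℝ) < (Q' : ℝ) := by exact_mod_cast hQ'1
    nlinarith [abs_nonneg v, abs_nonneg u]
  have hdabs : |(d : ℝ)| < 2 := by
    rw [hkey]
    calc |(Q' : ℝ) * u - (Q : ℝ) * v| ≤ |(Q' : ℝ) * u| + |(Q : ℝ) * v| := abs_sub _ _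
    _ = (Q' : ℝ) * |u| + (Q : ℝ) * |v| := by
        rw [abs_mul, abs_mul, abs_of_pos hQ'pos, abs_of_pos hQpos]
    _ < 2 := by linarith
  have hune : u ≠ 0 := del_ne hξ hQ1
  have hvne : v ≠ 0 := del_ne hξ (by omega)
  have hdne : d ≠ 0 := by
    intro h0
    rw [h0] at hkey
    push_cast at hkey
    have heq : (Q' : ℝ) * u = (Q : ℝ) * v := by linarith
    have h3 : (Q' : ℝ) * (u * v) = (Q : ℝ) * (v * v) := by linear_combination v * heq
    have h4 : (Q' : ℝ) * (u * v) < 0 := mul_neg_of_pos_of_neg hQ'pos halt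
    have h5 : (0 : ℝ) < (Q : ℝ) * (v * v) := mul_pos hQpos (mul_self_pos.mpr hvne)
    linarith
  have hd2 : d = 1 ∨ d = -1 := by
    have h' := abs_lt.mp hdabs
    have hl' : (-2 : ℤ) < d := by exact_mod_cast h'.1
    have hr' : d < 2 := by exact_mod_cast h'.2
    omega
  rcases lt_or_gt_of_ne hune with hneg | hpos
  · have hvpos : 0 < v := by nlinarith
    have : (d : ℝ) < 0 := by rw [hkey]; nlinarith
    have hdneg : d < 0 := by exact_mod_cast this
    have : d = -1 := by omega
    rw [this, sg, if_neg (by linarith : ¬ (0:ℝ) < u)]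
  · have hvneg : v < 0 := by nlinarith
    have : (0 : ℝ) < (d : ℝ) := by rw [hkey]; nlinarith
    have hdpos : 0 < d := by exact_mod_cast this
    have : d = 1 := by omega
    rw [this, sg, if_pos hpos]

lemma basis {ξ : ℝ} (hξ : Irrational ξ) {Q Q' Q'' : ℤ}
    (h1 : Consec ξ Q Q') (h2 : Consec ξ Q' Q'') :
    ∃ a : ℤ, 1 ≤ a ∧ Q'' = a * Q' + Q ∧ pnum ξ Q'' = a * pnum ξ Q' + pnum ξ Q ∧
      dni ((Q : ℝ) * ξ) = (a : ℝ) * dni ((Q' : ℝ) * ξ) + dni ((Q'' : ℝ) * ξ) := by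
  set p := pnum ξ Q with hp
  set p' := pnum ξ Q' with hp'
  set p'' := pnum ξ Q'' with hp''
  set D1 : ℤ := Q * p' - Q' * p with hD1
  have hD1v : D1 = sg (del ξ Q) := det1 hξ h1
  have hD1sq : D1 * D1 = 1 := by rw [hD1v]; exact sg_sq _
  set D2 : ℤ := Q' * p'' - Q'' * p' with hD2
  have hD2v : D2 = sg (del ξ Q') := det1 hξ h2
  have hD2sq : D2 * D2 = 1 := by rw [hD2v]; exact sg_sq _
  set a : ℤ := (Q * p'' - Q'' * p) * D1 with ha
  set b : ℤ := (Q'' * p' - Q' * p'') * D1 with hb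
  have eq1 : a * Q' + b * Q = Q'' := by
    rw [ha, hb, hD1]
    linear_combination Q'' * hD1sq
  have eq2 : a * p' + b * p = p'' := by
    rw [ha, hb, hD1]
    linear_combination p'' * hD1sq
  have hbb : b = 1 ∨ b = -1 := by
    have : b = -(D2 * D1) := by rw [hb, hD2]; ring
    have hD1' : D1 = 1 ∨ D1 = -1 := by
      rw [hD1v]; unfold sg; split <;> simp
    have hD2' : D2 = 1 ∨ D2 = -1 := by
      rw [hD2v]; unfold sg; split <;> simp
    rcases hD1' with h | h <;> rcases hD2' with h' | h' <;> rw [this, h, h'] <;> norm_num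
  have cQ : (a : ℝ) * (Q' : ℝ) + (b : ℝ) * (Q : ℝ) = (Q'' : ℝ) := by exact_mod_cast congrArg (fun z : ℤ => (z : ℝ)) eq1
  have cP : (a : ℝ) * (p' : ℝ) + (b : ℝ) * (p : ℝ) = (p'' : ℝ) := by exact_mod_cast congrArg (fun z : ℤ => (z : ℝ)) eq2
  have hdel : del ξ Q'' = (a : ℝ) * del ξ Q' + (b : ℝ) * del ξ Q := by
    rw [del_eq, del_eq, del_eq, ← hp, ← hp', ← hp'']
    linear_combination cP - ξ * cQ
  have hs1 : del ξ Q * del ξ Q' < 0 := alt hξ h1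
  have hs2 : del ξ Q' * del ξ Q'' < 0 := alt hξ h2
  have hQ1 : 1 ≤ Q := h1.1.1
  have hQ'Q : Q < Q' := h1.2.2.1
  have hQ''Q' : Q' < Q'' := h2.2.2.1
  have habs1 : |del ξ Q'| < |del ξ Q| := by
    rw [← dni_eq_del, ← dni_eq_del]; exact rec_dni_lt h1.2.1 hQ1 hQ'Q
  have habs2 : |del ξ Q''| < |del ξ Q'| := by
    rw [← dni_eq_del, ← dni_eq_del]; exact rec_dni_lt h2.2.1 (by omega) hQ''Q'
  have hune : del ξ Q ≠ 0 := del_ne hξ hQ1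
  have hvne : del ξ Q' ≠ 0 := del_ne hξ (by omega)
  have hwne : del ξ Q'' ≠ 0 := del_ne hξ (by omega)
  have hQ''pos : 1 ≤ Q'' := by omega
  -- rule out b = -1
  have hsq : 0 < del ξ Q' * del ξ Q' := mul_self_pos.mpr hvne
  have hb1 : b = 1 := by
    rcases hbb with h | h
    · exact h
    · exfalso
      rw [h] at hdel
      push_cast at hdel
      have hkey : (a : ℝ) * (del ξ Q' * del ξ Q') = del ξ Q' * del ξ Q'' + del ξ Q * del ξ Q' := by
        linear_combination (-(del ξ Q')) * hdel
      have haneg : (a : ℝ) < 0 := by nlinarith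
      have haneg' : a ≤ -1 := by
        have : a < 0 := by exact_mod_cast haneg
        omega
      have heqQ : Q'' = a * Q' - Q := by rw [← eq1, h]; ring
      have hprod : a * Q' ≤ -Q' := by nlinarith
      linarith
  rw [hb1] at hdel eq1 eq2
  push_cast at hdel
  -- hdel : del ξ Q'' = a * del ξ Q' + 1 * del ξ Q
  have hww : 0 < del ξ Q * del ξ Q'' := by
    nlinarith [mul_pos_of_neg_of_neg hs1 hs2]
  have habs3 : |del ξ Q''| < |del ξ Q| := lt_trans habs2 habs1
  have h2' : del ξ Q * del ξ Q'' < del ξ Q * del ξ Q := by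
    calc del ξ Q * del ξ Q'' ≤ |del ξ Q * del ξ Q''| := le_abs_self _
    _ = |del ξ Q| * |del ξ Q''| := abs_mul _ _
    _ < |del ξ Q| * |del ξ Q| := mul_lt_mul_of_pos_left habs3 (abs_pos.mpr hune)
    _ = del ξ Q * del ξ Q := by rw [← abs_mul, abs_mul_self]
  have hkey2 : (a : ℝ) * (del ξ Q * del ξ Q') = del ξ Q * del ξ Q'' - del ξ Q * del ξ Q := by
    linear_combination (-(del ξ Q)) * hdel
  have hapos : 1 ≤ a := by
    have hneg2 : del ξ Q * del ξ Q'' - del ξ Q * del ξ Q < 0 := by linarith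
    have hpa : (0 : ℝ) < (a : ℝ) := by
      by_contra hna
      push_neg at hna
      have h9 : 0 ≤ (-(a : ℝ)) * (-(del ξ Q * del ξ Q')) :=
        mul_nonneg (by linarith) (by linarith [hs1])
      nlinarith
    have : 0 < a := by exact_mod_cast hpa
    omega
  refine ⟨a, hapos, by linarith [eq1], by linarith [eq2], ?_⟩
  rw [dni_eq_del, dni_eq_del, dni_eq_del]
  rcases lt_or_gt_of_ne hune with hneg | hpos
  · have hv : 0 < del ξ Q' := pos_right_of_mul_neg hs1 hneg
    have hw : del ξ Q'' < 0 := neg_right_of_mul_pos hww hneg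
    rw [abs_of_neg hneg, abs_of_pos hv, abs_of_neg hw]
    linarith [hdel]
  · have hv : del ξ Q' < 0 := neg_right_of_mul_neg hs1 hpos
    have hw : 0 < del ξ Q'' := pos_right_of_mul_pos hww hpos
    rw [abs_of_pos hpos, abs_of_neg hv, abs_of_pos hw]
    linarith [hdel]

lemma det2 {ξ : ℝ} (hξ : Irrational ξ) {Q R Q' : ℤ}
    (h1 : Consec ξ Q R) (h2 : Consec ξ R Q')
    (hdrop : dni ((Q : ℝ) * ξ) < 2 * dni ((R : ℝ) * ξ)) :
    Q * pnum ξ Q' - Q' * pnum ξ Q = sg (del ξ Q) := by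
  obtain ⟨a, ha1, haQ, haP, haD⟩ := basis hξ h1 h2
  have hR1 : 1 ≤ R := h1.2.1.1
  have hdpos : 0 < dni ((R : ℝ) * ξ) := dni_pos (irr_mul hξ hR1)
  have hdnn : 0 ≤ dni ((Q' : ℝ) * ξ) := abs_nonneg _
  have ha2 : (a : ℝ) < 2 := by nlinarith
  have haa : a = 1 := by
    have : a < 2 := by exact_mod_cast ha2
    omega
  rw [haa] at haQ haP
  have hd := det1 hξ h1
  linear_combination hd + Q * haP - pnum ξ Q * haQ

lemma step_bound {α β c : ℝ} {N₀ : ℤ}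
    (HA : ∀ N : ℤ, N₀ ≤ N → mm α N < c * mm β N ∧ mm β N < c * mm α N)
    (hc : 1 ≤ c) (hN₀ : 1 ≤ N₀) {Q Q' : ℤ} (hQ : N₀ ≤ Q)
    (h1 : Consec α Q Q') (h2 : ¬ IsRec β Q') :
    dni ((Q : ℝ) * α) < c * c * dni ((Q' : ℝ) * α) := by
  have hQQ' : Q < Q' := h1.2.2.1
  have e1 : mm α (Q' - 1) = dni ((Q : ℝ) * α) := mm_between h1 (by omega) (by omega)
  have e2 : mm β Q' = mm β (Q' - 1) := mm_no_jump h2 (by omega)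
  have e3 : mm α Q' = dni ((Q' : ℝ) * α) := mm_rec h1.2.1
  have hA1 := HA (Q' - 1) (by omega)
  have hA2 := HA Q' (by omega)
  have hcpos : 0 < c := by linarith
  calc dni ((Q : ℝ) * α) = mm α (Q' - 1) := e1.symm
  _ < c * mm β (Q' - 1) := hA1.1
  _ = c * mm β Q' := by rw [e2]
  _ < c * (c * mm α Q') := by
      have := hA2.2
      nlinarith
  _ = c * c * dni ((Q' : ℝ) * α) := by rw [e3]; ring

lemma no_double_miss {α β c : ℝ} (hα : Irrational α) {N₀ : ℤ}
    (HA : ∀ N : ℤ, N₀ ≤ N → mm α N < c * mm β N ∧ mm β N < c * mm α N)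
    (hc : 1 ≤ c) (hcc : c * c * (c * c) = c * c + 1) (hN₀ : 1 ≤ N₀)
    {Q Q' Q'' : ℤ} (hQ : N₀ ≤ Q)
    (h1 : Consec α Q Q') (h2 : Consec α Q' Q'')
    (m1 : ¬ IsRec β Q') (m2 : ¬ IsRec β Q'') : False := by
  have s1 := step_bound HA hc hN₀ hQ h1 m1
  have s2 := step_bound HA hc hN₀ (by have := h1.2.2.1; omega) h2 m2
  obtain ⟨a, ha1, _, _, haD⟩ := basis hα h1 h2
  have hp1 : 0 < dni ((Q' : ℝ) * α) := dni_pos (irr_mul hα h2.1.1)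
  have hp2 : 0 < dni ((Q'' : ℝ) * α) := dni_pos (irr_mul hα (by have := h2.2.2.1; have := h2.1.1; omega))
  have hac : (1:ℝ) ≤ (a:ℝ) := by exact_mod_cast ha1
  have hXpos : (0:ℝ) < c * c := by nlinarith
  have h7 : (1:ℝ) * dni ((Q' : ℝ) * α) ≤ (a:ℝ) * dni ((Q' : ℝ) * α) :=
    mul_le_mul_of_nonneg_right hac (le_of_lt hp1)
  have h6 : dni ((Q'' : ℝ) * α) < (c * c - 1) * dni ((Q' : ℝ) * α) := by linarith
  have h8 : c * c * dni ((Q'' : ℝ) * α) < c * c * ((c * c - 1) * dni ((Q' : ℝ) * α)) :=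
    mul_lt_mul_of_pos_left h6 hXpos
  have h10 : c * c * (c * c) * dni ((Q' : ℝ) * α) = (c * c + 1) * dni ((Q' : ℝ) * α) := by
    rw [hcc]
  nlinarith [h8, h10, s2]

lemma sg_add_eq_zero {u v : ℝ} (hu : u ≠ 0) (hv : v ≠ 0) (h : u * v < 0) :
    sg u + sg v = 0 := by
  unfold sg
  rcases lt_or_gt_of_ne hu with h1 | h1
  · have h2 : 0 < v := pos_right_of_mul_neg h h1
    rw [if_neg (by linarith), if_pos h2]
    ring
  · have h2 : v < 0 := neg_right_of_mul_neg h h1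
    rw [if_pos h1, if_neg (by linarith)]
    ring

lemma sg_eq {u v : ℝ} (hu : u ≠ 0) (hv : v ≠ 0) (h : 0 < u * v) :
    sg u = sg v := by
  unfold sg
  rcases lt_or_gt_of_ne hu with h1 | h1
  · have h2 : v < 0 := neg_right_of_mul_pos h h1
    rw [if_neg (by linarith), if_neg (by linarith)]
  · have h2 : 0 < v := pos_right_of_mul_pos h h1
    rw [if_pos h1, if_pos h2]

lemma conclude {α β : ℝ} (hα : Irrational α) (hβ : Irrational β) {Q Qt : ℤ}
    (hQQ : Q < Qt)
    (hrecA : IsRec α Q) (hrecB : IsRec β Q)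
    (hdA : Q * pnum α Qt - Qt * pnum α Q = sg (del α Q))
    (hdB : Q * pnum β Qt - Qt * pnum β Q = sg (del β Q)) :
    ∃ κ : ℤ, |α - β - κ| ≤ 2 / (Q : ℝ) ^ 2 ∨ |α + β - κ| ≤ 2 / (Q : ℝ) ^ 2 := by
  have hQ1 : 1 ≤ Q := hrecA.1
  have hQpos : (0 : ℝ) < (Q : ℝ) := by exact_mod_cast hQ1
  set u := del α Q with hu'
  set v := del β Q with hv'
  have hu : u ≠ 0 := del_ne hα hQ1
  have hv : v ≠ 0 := del_ne hβ hQ1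
  have hub : |u| ≤ 1 / (Q : ℝ) := by
    have h1 : |u| = mm α Q := by rw [mm_rec hrecA, dni_eq_del]
    have h2 := mm_le_inv α hQ1
    have h3 : 1 / ((Q:ℝ) + 1) ≤ 1 / (Q : ℝ) := by
      apply div_le_div_of_nonneg_left (by norm_num) hQpos (by linarith)
    rw [h1]; linarith
  have hvb : |v| ≤ 1 / (Q : ℝ) := by
    have h1 : |v| = mm β Q := by rw [mm_rec hrecB, dni_eq_del]
    have h2 := mm_le_inv β hQ1
    have h3 : 1 / ((Q:ℝ) + 1) ≤ 1 / (Q : ℝ) := by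
      apply div_le_div_of_nonneg_left (by norm_num) hQpos (by linarith)
    rw [h1]; linarith
  have hcop : IsCoprime Q Qt := by
    refine ⟨sg (del α Q) * pnum α Qt, -(sg (del α Q)) * pnum α Q, ?_⟩
    have hs := sg_sq (del α Q)
    linear_combination sg (del α Q) * hdA + hs
  rcases lt_or_gt_of_ne (mul_ne_zero hu hv) with hprod | hprod
  · -- opposite signs: use α + β
    have hsg : sg u + sg v = 0 := sg_add_eq_zero hu hv hprod
    set M : ℤ := pnum α Q + pnum β Q with hM
    set Mt : ℤ := pnum α Qt + pnum β Qt with hMt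
    have heq : Q * Mt = Qt * M := by
      rw [hM, hMt]
      have : Q * (pnum α Qt + pnum β Qt) - Qt * (pnum α Q + pnum β Q)
          = (Q * pnum α Qt - Qt * pnum α Q) + (Q * pnum β Qt - Qt * pnum β Q) := by ring
      have h0 : Q * (pnum α Qt + pnum β Qt) - Qt * (pnum α Q + pnum β Q) = 0 := by
        rw [this, hdA, hdB]
        exact hsg
      omega
    have hdvd : Q ∣ M := by
      apply hcop.dvd_of_dvd_mul_left
      exact ⟨Mt, by omega⟩
    obtain ⟨κ, hκ⟩ := hdvd
    refine ⟨κ, Or.inr ?_⟩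
    have hform : α + β - κ = (u + v) / (Q : ℝ) := by
      rw [hu', hv', del_eq, del_eq]
      have hMr : ((M : ℤ) : ℝ) = (Q : ℝ) * (κ : ℝ) := by exact_mod_cast congrArg (fun z : ℤ => (z : ℝ)) hκ
      rw [hM] at hMr
      push_cast at hMr ⊢
      field_simp
      linarith [hMr]
    rw [hform, abs_div, abs_of_pos hQpos]
    rw [div_le_div_iff₀ hQpos (by positivity)]
    have : |u + v| ≤ |u| + |v| := abs_add_le _ _
    have h2Q : |u| + |v| ≤ 2 / (Q : ℝ) := by
      calc |u| + |v| ≤ 1 / (Q:ℝ) + 1 / (Q:ℝ) := add_le_add hub hvb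
      _ = 2 / (Q:ℝ) := by ring
    calc |u + v| * (Q:ℝ)^2 ≤ (2 / (Q:ℝ)) * (Q:ℝ)^2 := by
          apply mul_le_mul_of_nonneg_right (by linarith) (by positivity)
    _ = 2 * (Q : ℝ) := by field_simp
  · -- same signs: use α - β
    have hsg : sg u = sg v := sg_eq hu hv hprod
    set M : ℤ := pnum α Q - pnum β Q with hM
    set Mt : ℤ := pnum α Qt - pnum β Qt with hMt
    have heq : Q * Mt = Qt * M := by
      rw [hM, hMt]
      have h0 : Q * (pnum α Qt - pnum β Qt) - Qt * (pnum α Q - pnum β Q) = 0 := by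
        have : Q * (pnum α Qt - pnum β Qt) - Qt * (pnum α Q - pnum β Q)
            = (Q * pnum α Qt - Qt * pnum α Q) - (Q * pnum β Qt - Qt * pnum β Q) := by ring
        rw [this, hdA, hdB]
        rw [hsg]
        ring
      omega
    have hdvd : Q ∣ M := by
      apply hcop.dvd_of_dvd_mul_left
      exact ⟨Mt, by omega⟩
    obtain ⟨κ, hκ⟩ := hdvd
    refine ⟨κ, Or.inl ?_⟩
    have hform : α - β - κ = (u - v) / (Q : ℝ) := by
      rw [hu', hv', del_eq, del_eq]
      have hMr : ((M : ℤ) : ℝ) = (Q : ℝ) * (κ : ℝ) := by exact_mod_cast congrArg (fun z : ℤ => (z : ℝ)) hκ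
      rw [hM] at hMr
      push_cast at hMr ⊢
      field_simp
      linarith [hMr]
    rw [hform, abs_div, abs_of_pos hQpos]
    rw [div_le_div_iff₀ hQpos (by positivity)]
    have : |u - v| ≤ |u| + |v| := abs_sub _ _
    have h2Q : |u| + |v| ≤ 2 / (Q : ℝ) := by
      calc |u| + |v| ≤ 1 / (Q:ℝ) + 1 / (Q:ℝ) := add_le_add hub hvb
      _ = 2 / (Q:ℝ) := by ring
    calc |u - v| * (Q:ℝ)^2 ≤ (2 / (Q:ℝ)) * (Q:ℝ)^2 := by
          apply mul_le_mul_of_nonneg_right (by linarith) (by positivity)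
    _ = 2 * (Q : ℝ) := by field_simp

lemma not_rec_of_between_consec {ξ : ℝ} {Q Q' R : ℤ} (h : Consec ξ Q Q')
    (h1 : Q < R) (h2 : R < Q') : ¬ IsRec ξ R := by
  intro hr
  have hle := h.2.2.2 R h1 h2
  have hlt := hr.2 Q h.1.1 h1
  linarith

lemma step' {α β c : ℝ} (hα : Irrational α) (hβ : Irrational β)
    (hc : 1 ≤ c) (hcc : c * c * (c * c) = c * c + 1) (hc2 : c * c < 2)
    {N₀ : ℤ} (hN₀ : 1 ≤ N₀)
    (HA : ∀ N : ℤ, N₀ ≤ N → mm α N < c * mm β N ∧ mm β N < c * mm α N)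
    {Q a₁ a₂ b₁ b₂ : ℤ} (hQ0 : N₀ ≤ Q)
    (hrA : IsRec α Q) (hrB : IsRec β Q)
    (ha1 : Consec α Q a₁) (ha2 : Consec α a₁ a₂)
    (hb1 : Consec β Q b₁) (hb2 : Consec β b₁ b₂)
    (hle : a₁ ≤ b₁) :
    ∃ κ : ℤ, |α - β - κ| ≤ 2 / (Q : ℝ) ^ 2 ∨ |α + β - κ| ≤ 2 / (Q : ℝ) ^ 2 := by
  have HA' : ∀ N : ℤ, N₀ ≤ N → mm β N < c * mm α N ∧ mm α N < c * mm β N :=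
    fun N hN => ⟨(HA N hN).2, (HA N hN).1⟩
  rcases eq_or_lt_of_le hle with heq | hlt
  · -- a₁ = b₁ : adjacent common pair
    refine conclude hα hβ ha1.2.2.1 hrA hrB (det1 hα ha1) ?_
    rw [heq]
    exact det1 hβ hb1
  · -- a₁ < b₁ : a₁ is an α-only record (β misses at a₁)
    have hmissa1 : ¬ IsRec β a₁ := not_rec_of_between_consec hb1 ha1.2.2.1 hlt
    have hdrop1 : dni ((Q : ℝ) * α) < c * c * dni ((a₁ : ℝ) * α) :=
      step_bound HA hc hN₀ hQ0 ha1 hmissa1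
    rcases lt_trichotomy a₂ b₁ with hc1 | hc1 | hc1
    · -- a₂ < b₁ : double α miss, contradiction
      have hmissa2 : ¬ IsRec β a₂ := not_rec_of_between_consec hb1 (lt_trans ha1.2.2.1 ha2.2.2.1) hc1
      exact (no_double_miss hα HA hc hcc hN₀ hQ0 ha1 ha2 hmissa1 hmissa2).elim
    · -- a₂ = b₁ : common pair (Q, a₂) with one α-record between
      refine conclude hα hβ (lt_trans ha1.2.2.1 ha2.2.2.1) hrA hrB
        (det2 hα ha1 ha2 (by nlinarith [dni_nonneg ((a₁ : ℝ) * α)])) ?_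
      rw [← hc1] at hb1
      exact det1 hβ hb1
    · -- b₁ < a₂ : b₁ is a β-only record
      have hmissb1 : ¬ IsRec α b₁ := not_rec_of_between_consec ha2 hlt hc1
      have hdropb : dni ((Q : ℝ) * β) < c * c * dni ((b₁ : ℝ) * β) :=
        step_bound HA' hc hN₀ hQ0 hb1 hmissb1
      rcases lt_trichotomy a₂ b₂ with hc2' | hc2' | hc2'
      · -- a₂ strictly inside (b₁, b₂): α double miss
        have hmissa2 : ¬ IsRec β a₂ := not_rec_of_between_consec hb2 hc1 hc2'
        exact (no_double_miss hα HA hc hcc hN₀ hQ0 ha1 ha2 hmissa1 hmissa2).elim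
      · -- a₂ = b₂ : common pair with one record of each between
        refine conclude hα hβ (lt_trans ha1.2.2.1 ha2.2.2.1) hrA hrB
          (det2 hα ha1 ha2 (by nlinarith [dni_nonneg ((a₁ : ℝ) * α)])) ?_
        rw [← hc2'] at hb2
        exact det2 hβ hb1 hb2 (by nlinarith [dni_nonneg ((b₁ : ℝ) * β)])
      · -- b₂ strictly inside (a₁, a₂): β double miss
        have hmissb2 : ¬ IsRec α b₂ :=
          not_rec_of_between_consec ha2 (lt_trans hlt hb2.2.2.1) hc2'
        exact (no_double_miss hβ HA' hc hcc hN₀ hQ0 hb1 hb2 hmissb1 hmissb2).elim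

end Satz1Aux

open Satz1Aux

/-- Satz 1: if α, β are irrational and α ± β ∉ ℤ, then for every T ≥ 1 there is
t ≥ T with |ψ_α(t) − ψ_β(t)| ≥ K·min(ψ_α(t), ψ_β(t)), K = √((√5+1)/2) − 1. -/
theorem satz1 (α β : ℝ) (hα : Irrational α) (hβ : Irrational β)
    (hsum : ∀ z : ℤ, α + β ≠ (z : ℝ)) (hdiff : ∀ z : ℤ, α - β ≠ (z : ℝ)) :
    ∀ T : ℝ, 1 ≤ T → ∃ t : ℝ, T ≤ t ∧
      |psi α t - psi β t| ≥
        (Real.sqrt ((Real.sqrt 5 + 1) / 2) - 1) * min (psi α t) (psi β t) := by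
  intro T hT
  by_contra hcon
  push_neg at hcon
  set c : ℝ := Real.sqrt ((Real.sqrt 5 + 1) / 2) with hcdef
  -- facts about c
  have h5 : Real.sqrt 5 * Real.sqrt 5 = 5 := Real.mul_self_sqrt (by norm_num)
  have h5nn : 0 ≤ Real.sqrt 5 := Real.sqrt_nonneg 5
  have h5ge : 2 ≤ Real.sqrt 5 := by nlinarith
  have htau : c * c = (Real.sqrt 5 + 1) / 2 := Real.mul_self_sqrt (by nlinarith)
  have hc : 1 ≤ c := by nlinarith [Real.sqrt_nonneg ((Real.sqrt 5 + 1) / 2)]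
  have hcc : c * c * (c * c) = c * c + 1 := by rw [htau]; nlinarith
  have hc2 : c * c < 2 := by rw [htau]; nlinarith
  set N₀ : ℤ := max 1 ⌈T⌉ with hN₀def
  have hN₀1 : 1 ≤ N₀ := le_max_left _ _
  have HA : ∀ N : ℤ, N₀ ≤ N → mm α N < c * mm β N ∧ mm β N < c * mm α N := by
    intro N hN
    have hN1 : 1 ≤ N := le_trans hN₀1 hN
    have hN1' : (1 : ℝ) ≤ (N : ℝ) := by exact_mod_cast hN1
    have hTN : T ≤ (N : ℝ) := by
      have h1 : (⌈T⌉ : ℝ) ≤ (N : ℝ) := by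
        exact_mod_cast le_trans (le_max_right 1 ⌈T⌉) hN
      linarith [Int.le_ceil T]
    have hcon' := hcon (N : ℝ) hTN
    rw [psi_eq_mm α hN1', psi_eq_mm β hN1', Int.floor_intCast] at hcon'
    have hpα : 0 < mm α N := mm_pos hα hN1
    have hpβ : 0 < mm β N := mm_pos hβ hN1
    have hK : (0 : ℝ) ≤ c - 1 := by linarith
    constructor
    · have h1 : mm α N - mm β N ≤ |mm α N - mm β N| := le_abs_self _
      have h2 : min (mm α N) (mm β N) ≤ mm β N := min_le_right _ _
      nlinarith [hcon']
    · have h1 : mm β N - mm α N ≤ |mm α N - mm β N| := by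
        rw [abs_sub_comm]; exact le_abs_self _
      have h2 : min (mm α N) (mm β N) ≤ mm α N := min_le_left _ _
      nlinarith [hcon']
  have HA' : ∀ N : ℤ, N₀ ≤ N → mm β N < c * mm α N ∧ mm α N < c * mm β N :=
    fun N hN => ⟨(HA N hN).2, (HA N hN).1⟩
  -- positive distances of α±β to the integers
  set d1 : ℝ := |α - β - round (α - β)| with hd1def
  set d2 : ℝ := |α + β - round (α + β)| with hd2def
  have hd1 : 0 < d1 := by
    rw [hd1def, abs_pos, sub_ne_zero]
    exact fun h => hdiff (round (α - β)) h
  have hd2 : 0 < d2 := by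
    rw [hd2def, abs_pos, sub_ne_zero]
    exact fun h => hsum (round (α + β)) h
  set ε : ℝ := min d1 d2 with hεdef
  have hε : 0 < ε := lt_min hd1 hd2
  -- choose B
  obtain ⟨nB, hnB⟩ := exists_nat_gt (2 / ε)
  set B : ℤ := max N₀ (max 1 nB) with hBdef
  have hB1 : 1 ≤ B := le_trans (le_max_left (1:ℤ) (nB:ℤ)) (le_max_right _ _)
  have hBN₀ : N₀ ≤ B := le_max_left _ _
  have hBr : (0:ℝ) < (B:ℝ) := by exact_mod_cast hB1
  have hBε : 2 / (B : ℝ) ^ 2 < ε := by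
    have hnBB : (nB : ℝ) ≤ (B : ℝ) := by
      have h' : (nB : ℤ) ≤ B := le_trans (le_max_right (1:ℤ) (nB:ℤ)) (le_max_right N₀ _)
      exact_mod_cast h'
    have h1 : 2 / ε < (B : ℝ) := lt_of_lt_of_le hnB hnBB
    have hBr1 : (1:ℝ) ≤ (B:ℝ) := by exact_mod_cast hB1
    have hB2 : (B:ℝ) ≤ (B:ℝ)^2 := by nlinarith
    rw [div_lt_iff₀ (by positivity)]
    rw [div_lt_iff₀ hε] at h1
    nlinarith
  -- find a common record Q > B
  obtain ⟨q₁, hq₁rec, hq₁gt, _⟩ := exists_rec_gt hα hB1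
  obtain ⟨q₂, hc12⟩ := exists_next hα hq₁rec
  obtain ⟨q₃, hc23⟩ := exists_next hα hc12.2.1
  have hq₁N₀ : N₀ ≤ q₁ := by omega
  have hcommon : ∃ Q : ℤ, IsRec α Q ∧ IsRec β Q ∧ B < Q := by
    by_cases hr2 : IsRec β q₂
    · exact ⟨q₂, hc12.2.1, hr2, by have := hc12.2.2.1; omega⟩
    · by_cases hr3 : IsRec β q₃
      · exact ⟨q₃, hc23.2.1, hr3,
          by have := hc12.2.2.1; have := hc23.2.2.1; omega⟩
      · exact (no_double_miss hα HA hc hcc hN₀1 hq₁N₀ hc12 hc23 hr2 hr3).elim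
  obtain ⟨Q, hQrecα, hQrecβ, hQgtB⟩ := hcommon
  have hQN₀ : N₀ ≤ Q := by omega
  obtain ⟨a₁, ha1⟩ := exists_next hα hQrecα
  obtain ⟨a₂, ha2⟩ := exists_next hα ha1.2.1
  obtain ⟨b₁, hb1⟩ := exists_next hβ hQrecβ
  obtain ⟨b₂, hb2⟩ := exists_next hβ hb1.2.1
  have hκ : ∃ κ : ℤ, |α - β - κ| ≤ 2 / (Q : ℝ) ^ 2 ∨ |α + β - κ| ≤ 2 / (Q : ℝ) ^ 2 := by
    rcases le_total a₁ b₁ with hle | hle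
    · exact step' hα hβ hc hcc hc2 hN₀1 HA hQN₀ hQrecα hQrecβ ha1 ha2 hb1 hb2 hle
    · obtain ⟨κ, hκ⟩ := step' hβ hα hc hcc hc2 hN₀1 HA' hQN₀ hQrecβ hQrecα hb1 hb2 ha1 ha2 hle
      rcases hκ with h | h
      · refine ⟨-κ, Or.inl ?_⟩
        have : |β - α - (κ:ℝ)| = |α - β - ((-κ : ℤ) : ℝ)| := by
          push_cast
          rw [abs_sub_comm]
          congr 1
          ring
        rwa [this] at h
      · refine ⟨κ, Or.inr ?_⟩
        have : |β + α - (κ:ℝ)| = |α + β - (κ:ℝ)| := by rw [add_comm]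
        rwa [this] at h
  obtain ⟨κ, hκ⟩ := hκ
  have hQr : (B:ℝ) < (Q:ℝ) := by exact_mod_cast hQgtB
  have hQQB : 2 / (Q : ℝ) ^ 2 ≤ 2 / (B : ℝ) ^ 2 := by
    apply div_le_div_of_nonneg_left (by norm_num) (by positivity)
    nlinarith
  rcases hκ with h | h
  · have hmin : d1 ≤ |α - β - κ| := by
      rw [hd1def]
      exact round_min (α - β) κ
    have : ε ≤ d1 := min_le_left _ _
    linarith
  · have hmin : d2 ≤ |α + β - κ| := by
      rw [hd2def]
      exact round_min (α + β) κ
    have : ε ≤ d2 := min_le_right _ _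
    linarith
end

section
/- Corollary: Let α and β be irrational with α ± β ∉ ℤ. Then for every T ≥ 1 there exists t ≥ T such that |1/ψ_α(t) − 1/ψ_β(t)| ≥ K·t, with K = √((√5+1)/2) − 1. -/
lemma dni_nonneg (x : ℝ) : 0 ≤ dni x := abs_nonneg _
lemma dni_le (x : ℝ) (z : ℤ) : dni x ≤ |x - z| := round_le x z
lemma dni_pos {ξ : ℝ} (hξ : Irrational ξ) {q : ℤ} (hq : q ≠ 0) : 0 < dni ((q:ℝ) * ξ) := by
  have h1 : Irrational ((q:ℝ) * ξ) := hξ.intCast_mul hq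
  exact abs_pos.mpr (sub_ne_zero.mpr (h1.ne_int _))
lemma dirichlet (ξ : ℝ) (n : ℕ) (hn : 0 < n) :
    ∃ q : ℤ, 1 ≤ q ∧ q ≤ (n:ℤ) ∧ dni ((q:ℝ) * ξ) ≤ 1/((n:ℝ)+1) := by
  obtain ⟨j, k, hk0, hkn, h⟩ := Real.exists_int_int_abs_mul_sub_le ξ hn
  exact ⟨k, hk0, hkn, le_trans (dni_le _ j) h⟩

/-- `q` is a best-approximation denominator of `ξ`. -/
def Den (ξ : ℝ) (q : ℤ) : Prop :=
  1 ≤ q ∧ ∀ m : ℤ, 1 ≤ m → m < q → dni ((q:ℝ)*ξ) < dni ((m:ℝ)*ξ)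

lemma den_one (ξ : ℝ) : Den ξ 1 := ⟨le_refl _, fun m h1 h2 => absurd (lt_of_le_of_lt h1 h2) (lt_irrefl _)⟩

/-- value of psi when we know the minimizing interval -/
lemma psi_eq {ξ t : ℝ} {q : ℤ} (hden : Den ξ q) (hqt : (q:ℝ) ≤ t)
    (hmin : ∀ m : ℤ, q < m → (m:ℝ) ≤ t → dni ((q:ℝ)*ξ) ≤ dni ((m:ℝ)*ξ)) :
    psi ξ t = dni ((q:ℝ)*ξ) := by
  have hmem : dni ((q:ℝ)*ξ) ∈ {v : ℝ | ∃ m : ℤ, 1 ≤ m ∧ (m : ℝ) ≤ t ∧ v = dni ((m : ℝ) * ξ)} :=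
    ⟨q, hden.1, hqt, rfl⟩
  have hlb : ∀ v ∈ {v : ℝ | ∃ m : ℤ, 1 ≤ m ∧ (m : ℝ) ≤ t ∧ v = dni ((m : ℝ) * ξ)},
      dni ((q:ℝ)*ξ) ≤ v := by
    rintro v ⟨m, hm1, hmt, rfl⟩
    rcases lt_trichotomy m q with h | h | h
    · exact le_of_lt (hden.2 m hm1 h)
    · subst h; exact le_refl _
    · exact hmin m h hmt
  exact le_antisymm (csInf_le ⟨_, hlb⟩ hmem) (le_csInf ⟨_, hmem⟩ hlb)


lemma psi_le_one_div {ξ t : ℝ} (ht : 1 ≤ t) : psi ξ t ≤ 1/t := by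
  set n : ℕ := ⌊t⌋₊ with hn
  have hn1 : 0 < n := Nat.floor_pos.mpr ht
  obtain ⟨q, hq1, hqn, hqd⟩ := dirichlet ξ n hn1
  have hqt : (q:ℝ) ≤ t := by
    calc (q:ℝ) ≤ (n:ℤ) := by exact_mod_cast hqn
    _ ≤ t := by exact_mod_cast Nat.floor_le (le_trans zero_le_one ht)
  have hmem : dni ((q:ℝ)*ξ) ∈ {v : ℝ | ∃ m : ℤ, 1 ≤ m ∧ (m : ℝ) ≤ t ∧ v = dni ((m : ℝ) * ξ)} :=
    ⟨q, hq1, hqt, rfl⟩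
  have hbdd : BddBelow {v : ℝ | ∃ m : ℤ, 1 ≤ m ∧ (m : ℝ) ≤ t ∧ v = dni ((m : ℝ) * ξ)} := by
    refine ⟨0, ?_⟩
    rintro v ⟨m, _, _, rfl⟩
    exact dni_nonneg _
  have h1 : psi ξ t ≤ dni ((q:ℝ)*ξ) := csInf_le hbdd hmem
  have h2 : (1:ℝ)/((n:ℝ)+1) ≤ 1/t := by
    apply one_div_le_one_div_of_le (lt_of_lt_of_le zero_lt_one ht)
    exact le_of_lt (Nat.lt_floor_add_one t)
  linarith

section Next
variable {ξ : ℝ} (hξ : Irrational ξ)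

lemma exists_small (hξ : Irrational ξ) {ε : ℝ} (hε : 0 < ε) :
    ∃ m : ℤ, 1 ≤ m ∧ dni ((m:ℝ)*ξ) < ε := by
  obtain ⟨n, hn⟩ := exists_nat_gt (1/ε)
  have hn0 : 0 < n := by
    by_contra h
    push_neg at h
    interval_cases n
    · simp at hn; linarith [one_div_pos.mpr hε, hn]
  obtain ⟨q, hq1, _, hqd⟩ := dirichlet ξ n hn0
  refine ⟨q, hq1, lt_of_le_of_lt hqd ?_⟩
  rw [div_lt_iff₀ (by positivity)]
  rw [div_lt_iff₀ hε] at hn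
  nlinarith
lemma exists_better (hξ : Irrational ξ) (q : ℤ) (hq : 1 ≤ q) :
    ∃ m : ℤ, q < m ∧ dni ((m:ℝ)*ξ) < dni ((q:ℝ)*ξ) := by
  -- take ε = min over [1,q]
  have hfin : ((Finset.Icc 1 q).image (fun m : ℤ => dni ((m:ℝ)*ξ))).Nonempty := by
    refine ⟨dni ((q:ℝ)*ξ), Finset.mem_image.mpr ⟨q, Finset.mem_Icc.mpr ⟨hq, le_refl _⟩, rfl⟩⟩
  set ε := ((Finset.Icc 1 q).image (fun m : ℤ => dni ((m:ℝ)*ξ))).min' hfin with hε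
  have hεpos : 0 < ε := by
    have := ((Finset.Icc 1 q).image (fun m : ℤ => dni ((m:ℝ)*ξ))).min'_mem hfin
    rw [← hε] at this
    obtain ⟨m, hm, hme⟩ := Finset.mem_image.mp this
    rw [← hme]
    exact dni_pos hξ (by rcases Finset.mem_Icc.mp hm with ⟨h1, _⟩; omega)
  obtain ⟨m, hm1, hmd⟩ := exists_small hξ hεpos
  have hmq : q < m := by
    by_contra h
    push_neg at h
    have : dni ((m:ℝ)*ξ) ∈ (Finset.Icc 1 q).image (fun m : ℤ => dni ((m:ℝ)*ξ)) :=
      Finset.mem_image.mpr ⟨m, Finset.mem_Icc.mpr ⟨hm1, h⟩, rfl⟩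
    have := Finset.min'_le _ _ this
    rw [← hε] at this
    linarith
  have hεq : ε ≤ dni ((q:ℝ)*ξ) :=
    Finset.min'_le _ _ (Finset.mem_image.mpr ⟨q, Finset.mem_Icc.mpr ⟨hq, le_refl _⟩, rfl⟩)
  exact ⟨m, hmq, lt_of_lt_of_le hmd hεq⟩

open Classical in
/-- the next best-approximation denominator after `q`. -/
noncomputable def nxt (ξ : ℝ) (q : ℤ) : ℤ :=
  if h : ∃ m : ℤ, q < m ∧ dni ((m:ℝ)*ξ) < dni ((q:ℝ)*ξ) then
    Classical.choose (Int.exists_least_of_bdd (P := fun m => q < m ∧ dni ((m:ℝ)*ξ) < dni ((q:ℝ)*ξ))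
      ⟨q, fun z hz => le_of_lt hz.1⟩ h)
  else q

lemma nxt_spec (hξ : Irrational ξ) {q : ℤ} (hq : 1 ≤ q) :
    (q < nxt ξ q ∧ dni (((nxt ξ q):ℝ)*ξ) < dni ((q:ℝ)*ξ)) ∧
      ∀ m : ℤ, q < m ∧ dni ((m:ℝ)*ξ) < dni ((q:ℝ)*ξ) → nxt ξ q ≤ m := by
  have h := exists_better hξ q hq
  rw [nxt, dif_pos h]
  exact Classical.choose_spec (Int.exists_least_of_bdd
    (P := fun m => q < m ∧ dni ((m:ℝ)*ξ) < dni ((q:ℝ)*ξ)) ⟨q, fun z hz => le_of_lt hz.1⟩ h)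

end Next

section DenS
variable {ξ : ℝ}

lemma nxt_gt (hξ : Irrational ξ) {q : ℤ} (hq : 1 ≤ q) : q < nxt ξ q := ((nxt_spec hξ hq).1).1
lemma nxt_dni_lt (hξ : Irrational ξ) {q : ℤ} (hq : 1 ≤ q) :
    dni (((nxt ξ q):ℝ)*ξ) < dni ((q:ℝ)*ξ) := ((nxt_spec hξ hq).1).2
lemma nxt_min (hξ : Irrational ξ) {q m : ℤ} (hq : 1 ≤ q) (h1 : q < m) (h2 : m < nxt ξ q) :
    dni ((q:ℝ)*ξ) ≤ dni ((m:ℝ)*ξ) := by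
  by_contra h
  push_neg at h
  exact absurd ((nxt_spec hξ hq).2 m ⟨h1, h⟩) (by omega)

lemma den_nxt (hξ : Irrational ξ) {q : ℤ} (hden : Den ξ q) : Den ξ (nxt ξ q) := by
  refine ⟨le_trans hden.1 (le_of_lt (nxt_gt hξ hden.1)), fun m hm1 hm2 => ?_⟩
  rcases lt_trichotomy m q with h | h | h
  · exact lt_trans (nxt_dni_lt hξ hden.1) (hden.2 m hm1 h)
  · subst h; exact nxt_dni_lt hξ hden.1
  · exact lt_of_lt_of_le (nxt_dni_lt hξ hden.1) (nxt_min hξ hden.1 h hm2)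

lemma den_between (hξ : Irrational ξ) {q b : ℤ} (hden : Den ξ q) (hb : Den ξ b) (h : q < b) :
    nxt ξ q ≤ b :=
  (nxt_spec hξ hden.1).2 b ⟨h, hb.2 q hden.1 h⟩

/-- ψ on the plateau [q, nxt q). -/
lemma psi_on (hξ : Irrational ξ) {q : ℤ} {t : ℝ} (hden : Den ξ q) (h1 : (q:ℝ) ≤ t)
    (h2 : t < ((nxt ξ q : ℤ):ℝ)) : psi ξ t = dni ((q:ℝ)*ξ) := by
  refine psi_eq hden h1 (fun m hm hmt => ?_)
  have : m < nxt ξ q := by exact_mod_cast lt_of_le_of_lt hmt h2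
  exact nxt_min hξ hden.1 hm this

/-- the denominator interval containing a time t ≥ 1 -/
lemma exists_interval (hξ : Irrational ξ) {t : ℝ} (ht : 1 ≤ t) :
    ∃ b : ℤ, Den ξ b ∧ (b:ℝ) ≤ t ∧ t < ((nxt ξ b : ℤ):ℝ) := by
  have hbd : ∀ z : ℤ, (Den ξ z ∧ (z:ℝ) ≤ t) → z ≤ ⌈t⌉ := by
    rintro z ⟨_, hz⟩
    exact_mod_cast le_trans hz (Int.le_ceil t)
  obtain ⟨b, ⟨hb1, hb2⟩, hb3⟩ := Int.exists_greatest_of_bdd (P := fun z => Den ξ z ∧ (z:ℝ) ≤ t)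
    ⟨⌈t⌉, hbd⟩ ⟨1, den_one ξ, by exact_mod_cast ht⟩
  refine ⟨b, hb1, hb2, ?_⟩
  by_contra h
  push_neg at h
  have := hb3 (nxt ξ b) ⟨den_nxt hξ hb1, h⟩
  have := nxt_gt hξ hb1.1
  omega

/-- every large denominator has a predecessor denominator -/
lemma exists_prev (hξ : Irrational ξ) {q : ℤ} (hden : Den ξ q) (hq : 2 ≤ q) :
    ∃ x : ℤ, Den ξ x ∧ nxt ξ x = q := by
  have h1 : (1:ℝ) ≤ (q:ℝ) - 1/2 := by
    have : (2:ℝ) ≤ (q:ℝ) := by exact_mod_cast hq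
    linarith
  obtain ⟨x, hx1, hx2, hx3⟩ := exists_interval hξ h1
  refine ⟨x, hx1, ?_⟩
  have hxq : x < q := by
    have : (x:ℝ) < q := by linarith
    exact_mod_cast this
  have h4 := den_between hξ hx1 hden hxq
  have h5 : (q:ℝ) - 1/2 < ((nxt ξ x : ℤ):ℝ) := hx3
  have : q - 1 < nxt ξ x := by
    have : ((q:ℤ):ℝ) - 1 < ((nxt ξ x : ℤ):ℝ) := by linarith
    exact_mod_cast this
  omega

end DenS

noncomputable def er (ξ : ℝ) (q : ℤ) : ℝ := (q:ℝ)*ξ - (round ((q:ℝ)*ξ) : ℤ)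

lemma dni_eq_abs_er (ξ : ℝ) (q : ℤ) : dni ((q:ℝ)*ξ) = |er ξ q| := rfl

noncomputable def dt (ξ : ℝ) (q : ℤ) : ℤ :=
  q * round (((nxt ξ q : ℤ):ℝ)*ξ) - (nxt ξ q) * round ((q:ℝ)*ξ)

section Pair
variable {ξ : ℝ} (hξ : Irrational ξ)

lemma er_ne_zero (hξ : Irrational ξ) {q : ℤ} (hq : 1 ≤ q) : er ξ q ≠ 0 := by
  have := dni_pos hξ (show q ≠ 0 by omega)
  rw [dni_eq_abs_er] at this
  exact abs_pos.mp this

lemma min_below (hξ : Irrational ξ) {q : ℤ} (hden : Den ξ q) :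
    ∀ m : ℤ, 1 ≤ m → m < nxt ξ q → dni ((q:ℝ)*ξ) ≤ dni ((m:ℝ)*ξ) := by
  intro m hm1 hm2
  rcases lt_trichotomy m q with h | h | h
  · exact le_of_lt (hden.2 m hm1 h)
  · subst h; exact le_refl _
  · exact nxt_min hξ hden.1 h hm2

lemma sign_opp (hξ : Irrational ξ) {q : ℤ} (hden : Den ξ q) :
    er ξ q * er ξ (nxt ξ q) < 0 := by
  set q' := nxt ξ q with hq'
  have hq'1 : 1 ≤ q' := le_trans hden.1 (le_of_lt (nxt_gt hξ hden.1))
  have h0 : er ξ q ≠ 0 := er_ne_zero hξ hden.1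
  have h0' : er ξ q' ≠ 0 := er_ne_zero hξ hq'1
  rcases lt_trichotomy (er ξ q * er ξ q') 0 with h | h | h
  · exact h
  · exact absurd (mul_eq_zero.mp h) (by tauto)
  · exfalso
    -- same sign; consider m = q' - q
    set m := q' - q with hm
    have hm1 : 1 ≤ m := by have := nxt_gt hξ hden.1; omega
    have hmq' : m < q' := by have := hden.1; omega
    have key : dni ((m:ℝ)*ξ) ≤ |er ξ q' - er ξ q| := by
      have : (m:ℝ)*ξ - ((round (((q':ℤ):ℝ)*ξ) - round ((q:ℝ)*ξ) : ℤ):ℝ) = er ξ q' - er ξ q := by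
        simp only [er]
        push_cast [hm]
        ring
      calc dni ((m:ℝ)*ξ) ≤ |(m:ℝ)*ξ - ((round (((q':ℤ):ℝ)*ξ) - round ((q:ℝ)*ξ) : ℤ):ℝ)| :=
            dni_le _ _
      _ = |er ξ q' - er ξ q| := by rw [this]
    have habs : |er ξ q' - er ξ q| < |er ξ q| := by
      have hlt : |er ξ q'| < |er ξ q| := by
        have := nxt_dni_lt hξ hden.1
        rwa [dni_eq_abs_er, dni_eq_abs_er] at this
      rcases lt_or_gt_of_ne h0 with hneg | hpos
      · have : er ξ q' < 0 := by nlinarith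
        rw [abs_of_neg hneg] at hlt ⊢
        rw [abs_of_neg this] at hlt
        rw [abs_lt]; constructor <;> nlinarith
      · have : 0 < er ξ q' := by nlinarith
        rw [abs_of_pos hpos] at hlt ⊢
        rw [abs_of_pos this] at hlt
        rw [abs_lt]; constructor <;> nlinarith
    have hmin := min_below hξ hden m hm1 (by omega)
    rw [dni_eq_abs_er ξ q] at hmin
    have := le_trans hmin key
    linarith

lemma dni_le_inv_nxt (hξ : Irrational ξ) {q : ℤ} (hden : Den ξ q) :
    dni ((q:ℝ)*ξ) ≤ 1 / ((nxt ξ q : ℤ):ℝ) := by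
  set q' := nxt ξ q with hq'
  have hq'2 : 2 ≤ q' := by have := nxt_gt hξ hden.1; have := hden.1; omega
  set n : ℕ := (q' - 1).toNat with hn
  have hn0 : 0 < n := by omega
  obtain ⟨mm, hm1, hm2, hm3⟩ := dirichlet ξ n hn0
  have hmlt : mm < q' := by omega
  have := min_below hξ hden mm hm1 hmlt
  refine le_trans this (le_trans hm3 ?_)
  have heq : ((n:ℝ)+1) = ((q':ℤ):ℝ) := by
    have h' : (n:ℤ) = q' - 1 := by omega
    have h'' : (n:ℝ) = ((q':ℤ):ℝ) - 1 := by exact_mod_cast congrArg (fun z : ℤ => (z:ℝ)) h'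
    linarith
  rw [heq]

lemma pair_iden (hξ : Irrational ξ) {q : ℤ} (hden : Den ξ q) :
    ((nxt ξ q : ℤ):ℝ) * dni ((q:ℝ)*ξ) + (q:ℝ) * dni (((nxt ξ q : ℤ):ℝ)*ξ) = 1 ∧
      (0 < er ξ q → dt ξ q = 1) ∧ (er ξ q < 0 → dt ξ q = -1) := by
  set q' := nxt ξ q with hq'
  have hq'1 : 1 ≤ q' := le_trans hden.1 (le_of_lt (nxt_gt hξ hden.1))
  have hqgt : q < q' := nxt_gt hξ hden.1
  have hcast : ((dt ξ q : ℤ):ℝ) = (q':ℝ) * er ξ q - (q:ℝ) * er ξ q' := by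
    simp only [dt, er, ← hq']
    push_cast
    ring
  have hopp := sign_opp hξ hden
  rw [← hq'] at hopp
  have h1 : (q':ℝ) * dni ((q:ℝ)*ξ) ≤ 1 := by
    have := dni_le_inv_nxt hξ hden
    rw [← hq'] at this
    have hq'pos : (0:ℝ) < (q':ℝ) := by exact_mod_cast hq'1
    calc (q':ℝ) * dni ((q:ℝ)*ξ) ≤ (q':ℝ) * (1/(q':ℝ)) := by
          exact mul_le_mul_of_nonneg_left this (le_of_lt hq'pos)
    _ = 1 := by field_simp
  have h2 : (q:ℝ) * dni (((q':ℤ):ℝ)*ξ) < (q':ℝ) * dni ((q:ℝ)*ξ) := by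
    have ha : (0:ℝ) < (q:ℝ) := by exact_mod_cast hden.1
    have hb : (q:ℝ) < (q':ℝ) := by exact_mod_cast hqgt
    have hc : dni (((q':ℤ):ℝ)*ξ) < dni ((q:ℝ)*ξ) := nxt_dni_lt hξ hden.1
    have hd : 0 ≤ dni (((q':ℤ):ℝ)*ξ) := dni_nonneg _
    nlinarith
  have habs : |((dt ξ q : ℤ):ℝ)| = (q':ℝ) * dni ((q:ℝ)*ξ) + (q:ℝ) * dni (((q':ℤ):ℝ)*ξ) := by
    rw [hcast, dni_eq_abs_er, dni_eq_abs_er]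
    have hq'pos : (0:ℝ) < (q':ℝ) := by exact_mod_cast hq'1
    have hqpos : (0:ℝ) < (q:ℝ) := by exact_mod_cast hden.1
    rcases lt_or_gt_of_ne (er_ne_zero hξ hden.1 : er ξ q ≠ 0) with hneg | hpos
    · have hpos' : 0 < er ξ q' := by nlinarith
      rw [abs_of_neg hneg, abs_of_pos hpos', abs_of_neg (by nlinarith : (q':ℝ) * er ξ q - (q:ℝ) * er ξ q' < 0)]
      ring
    · have hneg' : er ξ q' < 0 := by nlinarith
      rw [abs_of_pos hpos, abs_of_neg hneg', abs_of_pos (by nlinarith : (0:ℝ) < (q':ℝ) * er ξ q - (q:ℝ) * er ξ q')]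
      ring
  have hne : dt ξ q ≠ 0 := by
    intro h
    rw [h] at habs
    simp at habs
    have hq'pos : (0:ℝ) < (q':ℝ) := by exact_mod_cast hq'1
    have := dni_pos hξ (show q ≠ 0 by have := hden.1; omega)
    have := dni_nonneg (((q':ℤ):ℝ)*ξ)
    have hqpos : (0:ℝ) < (q:ℝ) := by exact_mod_cast hden.1
    nlinarith
  have hlt2 : |((dt ξ q : ℤ):ℝ)| < 2 := by rw [habs]; linarith
  have habs1 : dt ξ q = 1 ∨ dt ξ q = -1 := by
    have h1' : 1 ≤ |dt ξ q| := Int.one_le_abs (by omega)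
    rw [← Int.cast_abs] at hlt2
    have h2' : (|dt ξ q| : ℤ) < 2 := by exact_mod_cast hlt2
    have : |dt ξ q| = 1 := by omega
    rcases (abs_eq (by norm_num : (0:ℤ) ≤ 1)).mp this with h | h
    · exact Or.inl h
    · exact Or.inr h
  constructor
  · have : |((dt ξ q : ℤ):ℝ)| = 1 := by
      rcases habs1 with h | h <;> rw [h] <;> norm_num
    rw [← habs, this]
  constructor
  · intro hpos
    have : 0 < ((dt ξ q : ℤ):ℝ) := by
      rw [hcast]
      have hneg' : er ξ q' < 0 := by nlinarith
      have hq'pos : (0:ℝ) < (q':ℝ) := by exact_mod_cast hq'1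
      have hqpos : (0:ℝ) < (q:ℝ) := by exact_mod_cast hden.1
      nlinarith
    have h3 : 0 < dt ξ q := by exact_mod_cast this
    omega
  · intro hneg
    have : ((dt ξ q : ℤ):ℝ) < 0 := by
      rw [hcast]
      have hpos' : 0 < er ξ q' := by nlinarith
      have hq'pos : (0:ℝ) < (q':ℝ) := by exact_mod_cast hq'1
      have hqpos : (0:ℝ) < (q:ℝ) := by exact_mod_cast hden.1
      nlinarith
    have h3 : dt ξ q < 0 := by exact_mod_cast this
    omega

end Pair

section Triple
variable {ξ : ℝ}

lemma dt_alt (hξ : Irrational ξ) {x : ℤ} (hden : Den ξ x) :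
    dt ξ (nxt ξ x) = - dt ξ x := by
  set q := nxt ξ x with hq
  have hdq : Den ξ q := den_nxt hξ hden
  have hopp := sign_opp hξ hden
  rw [← hq] at hopp
  have hx0 := er_ne_zero hξ hden.1
  rcases lt_or_gt_of_ne hx0 with hneg | hpos
  · have h1 : (pair_iden hξ hden).2.2 hneg = _ := rfl
    have hxdt := (pair_iden hξ hden).2.2 hneg
    have hqpos : 0 < er ξ q := by nlinarith
    have hqdt := (pair_iden hξ hdq).2.1 hqpos
    omega
  · have hxdt := (pair_iden hξ hden).2.1 hpos
    have hqneg : er ξ q < 0 := by nlinarith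
    have hqdt := (pair_iden hξ hdq).2.2 hqneg
    omega

lemma coprime_round (hξ : Irrational ξ) {q : ℤ} (hden : Den ξ q) :
    IsCoprime q (round ((q:ℝ)*ξ)) := by
  have hopp := sign_opp hξ hden
  have h0 := er_ne_zero hξ hden.1
  have hdt : dt ξ q = 1 ∨ dt ξ q = -1 := by
    rcases lt_or_gt_of_ne h0 with hneg | hpos
    · exact Or.inr ((pair_iden hξ hden).2.2 hneg)
    · exact Or.inl ((pair_iden hξ hden).2.1 hpos)
  rw [dt] at hdt
  rcases hdt with h | h
  · exact ⟨round (((nxt ξ q : ℤ):ℝ)*ξ), -(nxt ξ q), by linear_combination h⟩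
  · exact ⟨-round (((nxt ξ q : ℤ):ℝ)*ξ), nxt ξ q, by linear_combination -h⟩

/-- key modular rigidity: q divides (nxt q) - (prev q) -/
lemma mod_next (hξ : Irrational ξ) {x : ℤ} (hden : Den ξ x) :
    (nxt ξ x) ∣ (nxt ξ (nxt ξ x) - x) := by
  set q := nxt ξ x with hq
  set y := nxt ξ q with hy
  have hdq : Den ξ q := den_nxt hξ hden
  have halt : dt ξ q = - dt ξ x := dt_alt hξ hden
  have hsum : dt ξ x + dt ξ q = 0 := by omega
  rw [dt, dt, ← hq, ← hy] at hsum
  have key : (y - x) * round ((q:ℝ)*ξ) = q * (round (((y:ℤ):ℝ)*ξ) - round (((x:ℤ):ℝ)*ξ)) := by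
    ring_nf
    ring_nf at hsum
    linarith [hsum]
  have hdvd : q ∣ (y - x) * round ((q:ℝ)*ξ) := ⟨_, key⟩
  exact (coprime_round hξ hdq).dvd_of_dvd_mul_right hdvd

lemma fib_next (hξ : Irrational ξ) {x : ℤ} (hden : Den ξ x) :
    nxt ξ x + x ≤ nxt ξ (nxt ξ x) := by
  set q := nxt ξ x with hq
  set y := nxt ξ q with hy
  have h1 : q < y := nxt_gt hξ (den_nxt hξ hden).1
  have h2 : x < q := nxt_gt hξ hden.1
  obtain ⟨d, hd⟩ := mod_next hξ hden
  rw [← hq, ← hy] at hd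
  have : 1 ≤ d := by nlinarith [hden.1]
  nlinarith [hden.1]

lemma u_sum (hξ : Irrational ξ) {x : ℤ} (hden : Den ξ x) :
    dni (((nxt ξ x : ℤ):ℝ)*ξ) + dni (((nxt ξ (nxt ξ x) : ℤ):ℝ)*ξ) ≤ dni ((x:ℝ)*ξ) := by
  set q := nxt ξ x with hq
  set y := nxt ξ q with hy
  have hdq : Den ξ q := den_nxt hξ hden
  have hiden1 := (pair_iden hξ hden).1
  have hiden2 := (pair_iden hξ hdq).1
  rw [← hq] at hiden1
  rw [← hy] at hiden2
  have hyx : (q:ℝ) ≤ (y:ℝ) - (x:ℝ) := by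
    have h : (q + x : ℤ) ≤ y := fib_next hξ hden
    have h' : ((q:ℝ) + (x:ℝ)) ≤ (y:ℝ) := by exact_mod_cast h
    linarith
  have hqpos : (0:ℝ) < q := by have := hdq.1; exact_mod_cast this
  have hupos : 0 < dni ((q:ℝ)*ξ) := dni_pos hξ (by have := hdq.1; omega)
  nlinarith [dni_nonneg (((y:ℤ):ℝ)*ξ), dni_nonneg ((x:ℝ)*ξ)]
end Triple

section Ratio
variable {ξ η : ℝ} {T c : ℝ}

/-- F1: at a non-shared jump, the value ratio is < c². -/
lemma ratio_jump (hξ : Irrational ξ) (hη : Irrational η) (hc : 1 < c)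
    (hRH : ∀ t : ℝ, T ≤ t → psi ξ t < c * psi η t ∧ psi η t < c * psi ξ t)
    {x : ℤ} (hden : Den ξ x) (hnq : ¬ Den η (nxt ξ x))
    (hT : T + 1 ≤ ((nxt ξ x : ℤ):ℝ)) :
    dni ((x:ℝ)*ξ) < c^2 * dni (((nxt ξ x : ℤ):ℝ)*ξ) := by
  set q := nxt ξ x with hq
  have hxq : x < q := nxt_gt hξ hden.1
  have hq1 : 1 ≤ q := by have := hden.1; omega
  have hx1 := hden.1
  have hxr : ((x:ℤ):ℝ) ≤ (q:ℝ) - 1 := by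
    have : x ≤ q - 1 := by omega
    calc ((x:ℤ):ℝ) ≤ ((q - 1 : ℤ):ℝ) := by exact_mod_cast this
    _ = (q:ℝ) - 1 := by push_cast; ring
  -- psi ξ at t1 and q
  have hpsixt1 : psi ξ ((q:ℝ) - 1/2) = dni ((x:ℝ)*ξ) :=
    psi_on hξ hden (by linarith) (by rw [← hq]; linarith)
  have hpsixq : psi ξ (q:ℝ) = dni ((q:ℝ)*ξ) := by
    refine psi_on hξ (den_nxt hξ hden) (le_refl _) ?_
    have := nxt_gt hξ hq1
    exact_mod_cast this
  -- eta interval at q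
  obtain ⟨b, hbden, hbq, hbnxt⟩ := exists_interval hη (show (1:ℝ) ≤ (q:ℝ) by exact_mod_cast hq1)
  have hbne : b ≠ q := fun h => hnq (h ▸ hbden)
  have hblt : b < q := by
    have : b ≤ q := by exact_mod_cast hbq
    omega
  have hbr : ((b:ℤ):ℝ) ≤ (q:ℝ) - 1 := by
    have : b ≤ q - 1 := by omega
    calc ((b:ℤ):ℝ) ≤ ((q - 1 : ℤ):ℝ) := by exact_mod_cast this
    _ = (q:ℝ) - 1 := by push_cast; ring
  have hpsiyt1 : psi η ((q:ℝ) - 1/2) = dni ((b:ℝ)*η) :=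
    psi_on hη hbden (by linarith) (by linarith)
  have hpsiyq : psi η (q:ℝ) = dni ((b:ℝ)*η) := psi_on hη hbden hbq hbnxt
  have h1 := (hRH ((q:ℝ) - 1/2) (by linarith)).1
  have h2 := (hRH (q:ℝ) (by linarith)).2
  rw [hpsixt1, hpsiyt1] at h1
  rw [hpsiyq, hpsixq] at h2
  have hb0 : 0 ≤ dni ((b:ℝ)*η) := dni_nonneg _
  nlinarith
/-- F3: a non-shared denominator has d = 1, i.e. next = cur + prev. -/
lemma next_eq_add (hξ : Irrational ξ) (hη : Irrational η) (hc : 1 < c) (hc2 : c^2 < 2)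
    (hRH : ∀ t : ℝ, T ≤ t → psi ξ t < c * psi η t ∧ psi η t < c * psi ξ t)
    {x : ℤ} (hden : Den ξ x) (hnq : ¬ Den η (nxt ξ x))
    (hT : T + 1 ≤ ((nxt ξ x : ℤ):ℝ)) :
    nxt ξ (nxt ξ x) = (nxt ξ x) + x := by
  set q := nxt ξ x with hq
  set y := nxt ξ q with hy
  have hdq : Den ξ q := den_nxt hξ hden
  have hqy : q < y := nxt_gt hξ hdq.1
  have hx1 := hden.1
  have hxq : x < q := nxt_gt hξ hden.1
  obtain ⟨d, hd⟩ := mod_next hξ hden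
  rw [← hq, ← hy] at hd
  have hd1 : 1 ≤ d := by nlinarith
  rcases eq_or_lt_of_le hd1 with h1 | hd2
  · rw [← h1, mul_one] at hd; omega
  -- now d ≥ 2; derive a contradiction
  exfalso
  have hd2' : 2 ≤ d := hd2
  have hiden1 := (pair_iden hξ hden).1
  have hiden2 := (pair_iden hξ hdq).1
  rw [← hq] at hiden1
  rw [← hy] at hiden2
  have hratio := ratio_jump hξ hη hc hRH hden hnq hT
  rw [← hq] at hratio
  have hypos : (0:ℝ) < (y:ℝ) := by exact_mod_cast lt_of_lt_of_le (by omega : (0:ℤ) < 1) (by omega : (1:ℤ) ≤ y)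
  have hqpos : (0:ℝ) < (q:ℝ) := by exact_mod_cast lt_of_lt_of_le (by omega : (0:ℤ) < 1) hdq.1
  have hxpos : (0:ℝ) < (x:ℝ) := by exact_mod_cast lt_of_lt_of_le (by omega : (0:ℤ) < 1) hx1
  have huy : 0 < dni (((y:ℤ):ℝ)*ξ) := dni_pos hξ (by omega)
  have huq : 0 < dni (((q:ℤ):ℝ)*ξ) := dni_pos hξ (by omega)
  have hux : 0 < dni (((x:ℤ):ℝ)*ξ) := dni_pos hξ (by omega)
  have hyuq : (y:ℝ) * dni ((q:ℝ)*ξ) < 1 := by nlinarith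
  have hyx2 : 2*(q:ℝ) ≤ (y:ℝ) - (x:ℝ) := by
    have h' : 2*q ≤ y - x := by nlinarith [hdq.1]
    have h'' : ((2*q:ℤ):ℝ) ≤ ((y - x:ℤ):ℝ) := by exact_mod_cast h'
    push_cast at h''
    linarith
  have h5 : 2 < (y:ℝ) * dni ((x:ℝ)*ξ) := by nlinarith
  have h6 : (y:ℝ) * dni ((x:ℝ)*ξ) < 2 := by nlinarith
  linarith

/-- F2: two consecutive non-shared denominators are impossible. -/
lemma no_two_nonshared (hξ : Irrational ξ) (hη : Irrational η) (hc : 1 < c)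
    (hc4 : c^2*c^2 ≤ c^2 + 1)
    (hRH : ∀ t : ℝ, T ≤ t → psi ξ t < c * psi η t ∧ psi η t < c * psi ξ t)
    {w : ℤ} (hden : Den ξ w) (hn1 : ¬ Den η (nxt ξ w)) (hn2 : ¬ Den η (nxt ξ (nxt ξ w)))
    (hT : T + 1 ≤ ((nxt ξ w : ℤ):ℝ)) : False := by
  set x := nxt ξ w with hx
  set q := nxt ξ x with hq
  have hdx : Den ξ x := den_nxt hξ hden
  have hr1 := ratio_jump hξ hη hc hRH hden hn1 hT
  have hr2 := ratio_jump hξ hη hc hRH hdx (by rw [← hq]; exact hn2) (by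
    have h1 : x < q := nxt_gt hξ hdx.1
    have : ((x:ℤ):ℝ) < ((q:ℤ):ℝ) := by exact_mod_cast h1
    rw [← hq]
    have hxx : ((x:ℤ):ℝ) + 1 ≤ ((q:ℤ):ℝ) := by
      have : x + 1 ≤ q := by omega
      exact_mod_cast this
    linarith)
  rw [← hx] at hr1
  rw [← hq] at hr2
  have hsum := u_sum hξ hden
  rw [← hx, ← hq] at hsum
  have hux : 0 < dni (((x:ℤ):ℝ)*ξ) := dni_pos hξ (by have := hdx.1; omega)
  have huq : 0 < dni (((q:ℤ):ℝ)*ξ) := dni_pos hξ (by have := (den_nxt hξ hdx).1; omega)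
  have hc0 : (0:ℝ) < c := by linarith
  nlinarith
end Ratio

lemma dvd_bounded {y z : ℤ} (h : y ∣ z) (h0 : 0 < y) (h1 : -y < z) (h2 : z < y) : z = 0 := by
  obtain ⟨k, rfl⟩ := h
  rcases lt_trichotomy k 0 with hk | hk | hk
  · nlinarith
  · simp [hk]
  · nlinarith

section Clash
variable {ξ η : ℝ} {T c : ℝ}

/-- Lemma Z (asymmetric version): a shared denominator with different predecessors
    and ordered successors leads to a contradiction. -/
lemma shared_clash_asym (hξ : Irrational ξ) (hη : Irrational η) (hc : 1 < c) (hc2 : c^2 < 2)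
    (hc4 : c^2*c^2 ≤ c^2 + 1)
    (hRH : ∀ t : ℝ, T ≤ t → psi ξ t < c * psi η t ∧ psi η t < c * psi ξ t)
    {y pa pb : ℤ} (hpa : Den ξ pa) (hya : nxt ξ pa = y) (hpb : Den η pb) (hyb : nxt η pb = y)
    (hne : pa ≠ pb) (hTy : T + 1 ≤ (y:ℝ)) (hlt : nxt ξ y < nxt η y) : False := by
  have hRH' : ∀ t : ℝ, T ≤ t → psi η t < c * psi ξ t ∧ psi ξ t < c * psi η t :=
    fun t ht => ⟨(hRH t ht).2, (hRH t ht).1⟩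
  have hdyξ : Den ξ y := hya ▸ den_nxt hξ hpa
  have hdyη : Den η y := hyb ▸ den_nxt hη hpb
  set na := nxt ξ y with hna
  set nb := nxt η y with hnb
  have hy1 : 1 ≤ y := hdyξ.1
  have hpa1 : 1 ≤ pa := hpa.1
  have hpb1 : 1 ≤ pb := hpb.1
  have hyna : y < na := nxt_gt hξ hdyξ.1
  have hynb : y < nb := nxt_gt hη hdyη.1
  have hpay : pa < y := hya ▸ nxt_gt hξ hpa.1
  have hpby : pb < y := hyb ▸ nxt_gt hη hpb.1
  have oa : y ∣ na - pa := by
    have := mod_next hξ hpa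
    rwa [hya] at this
  have ob : y ∣ nb - pb := by
    have := mod_next hη hpb
    rwa [hyb] at this
  have hTna : T + 1 ≤ ((na:ℤ):ℝ) := by
    have h1 : y + 1 ≤ na := by omega
    have h2 : ((y:ℤ):ℝ) + 1 ≤ ((na:ℤ):ℝ) := by exact_mod_cast h1
    linarith
  have hTnb : T + 1 ≤ ((nb:ℤ):ℝ) := by
    have h1 : y + 1 ≤ nb := by omega
    have h2 : ((y:ℤ):ℝ) + 1 ≤ ((nb:ℤ):ℝ) := by exact_mod_cast h1
    linarith
  -- na is not an η-denominator
  have hna_not : ¬ Den η na := by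
    intro h
    have := den_between hη hdyη h hyna
    omega
  -- so nxt ξ na must be shared
  have hn2 : Den η (nxt ξ na) := by
    by_contra h
    exact no_two_nonshared hξ hη hc hc4 hRH hdyξ (by rw [← hna]; exact hna_not)
      (by rw [← hna]; exact h) (by rw [← hna]; exact hTna)
  have hF3 : nxt ξ na = na + y := by
    have := next_eq_add hξ hη hc hc2 hRH hdyξ (by rw [← hna]; exact hna_not)
      (by rw [← hna]; exact hTna)
    rw [← hna] at this
    exact this
  have hnbn2 : nb ≤ nxt ξ na := den_between hη hdyη hn2 (by omega)
  rcases eq_or_lt_of_le hnbn2 with heq | hlt2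
  · -- nb = na + y : modular contradiction
    rw [hF3] at heq
    have : y ∣ pa - pb := by
      have h1 : y ∣ (na - pa) - (nb - pb) := dvd_sub oa ob
      have h2 : (na - pa) - (nb - pb) = pb - pa + (na - nb) := by ring
      have h3 : na - nb = -y := by omega
      have h4 : y ∣ pb - pa + -y := by rw [← h3, ← h2]; exact h1
      have h5 : y ∣ pb - pa := (dvd_add_right (dvd_neg.mpr dvd_rfl)).mp (by rwa [add_comm] at h4)
      exact (dvd_sub_comm).mp h5
    have := dvd_bounded this (by omega) (by omega) (by omega)
    omega
  · -- nb strictly between na and nxt ξ na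
    have hnb_not : ¬ Den ξ nb := by
      intro h
      have := den_between hξ (den_nxt hξ hdyξ) h (by rw [← hna]; omega)
      rw [← hna] at this
      omega
    have hm2 : Den ξ (nxt η nb) := by
      by_contra h
      exact no_two_nonshared hη hξ hc hc4 hRH' hdyη (by rw [← hnb]; exact hnb_not)
        (by rw [← hnb]; exact h) (by rw [← hnb]; exact hTnb)
    have hF3' : nxt η nb = nb + y := by
      have := next_eq_add hη hξ hc hc2 hRH' hdyη (by rw [← hnb]; exact hnb_not)
        (by rw [← hnb]; exact hTnb)
      rw [← hnb] at this
      exact this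
    -- nxt η nb is a ξ-denominator strictly above nxt ξ na
    have hgt : nxt ξ na < nxt η nb := by rw [hF3, hF3']; omega
    have h1 : nxt ξ (nxt ξ na) ≤ nxt η nb := den_between hξ (den_nxt hξ (den_nxt hξ hdyξ)) hm2 hgt
    have h3 : nxt ξ na + na ≤ nxt ξ (nxt ξ na) := fib_next hξ (den_nxt hξ hdyξ)
    omega
end Clash

section YZ
variable {ξ η : ℝ} {T c : ℝ}

/-- Lemma Z: a shared denominator cannot have different predecessors. -/
lemma shared_clash (hξ : Irrational ξ) (hη : Irrational η) (hc : 1 < c) (hc2 : c^2 < 2)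
    (hc4 : c^2*c^2 ≤ c^2 + 1)
    (hRH : ∀ t : ℝ, T ≤ t → psi ξ t < c * psi η t ∧ psi η t < c * psi ξ t)
    {y pa pb : ℤ} (hpa : Den ξ pa) (hya : nxt ξ pa = y) (hpb : Den η pb) (hyb : nxt η pb = y)
    (hne : pa ≠ pb) (hTy : T + 1 ≤ (y:ℝ)) : False := by
  have hRH' : ∀ t : ℝ, T ≤ t → psi η t < c * psi ξ t ∧ psi ξ t < c * psi η t :=
    fun t ht => ⟨(hRH t ht).2, (hRH t ht).1⟩
  have hdyξ : Den ξ y := hya ▸ den_nxt hξ hpa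
  have hdyη : Den η y := hyb ▸ den_nxt hη hpb
  rcases lt_trichotomy (nxt ξ y) (nxt η y) with h | h | h
  · exact shared_clash_asym hξ hη hc hc2 hc4 hRH hpa hya hpb hyb hne hTy h
  · -- equal successors: modular contradiction
    have hy1 : 1 ≤ y := hdyξ.1
    have hpa1 : 1 ≤ pa := hpa.1
    have hpb1 : 1 ≤ pb := hpb.1
    have hpay : pa < y := hya ▸ nxt_gt hξ hpa.1
    have hpby : pb < y := hyb ▸ nxt_gt hη hpb.1
    have oa : y ∣ nxt ξ y - pa := by have := mod_next hξ hpa; rwa [hya] at this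
    have ob : y ∣ nxt η y - pb := by have := mod_next hη hpb; rwa [hyb] at this
    rw [h] at oa
    have hd : y ∣ pb - pa := by
      have h1 : y ∣ (nxt η y - pa) - (nxt η y - pb) := dvd_sub oa ob
      have h2 : (nxt η y - pa) - (nxt η y - pb) = pb - pa := by ring
      rwa [h2] at h1
    have := dvd_bounded hd (by omega) (by omega) (by omega)
    omega
  · exact shared_clash_asym hη hξ hc hc2 hc4 hRH' hpb hyb hpa hya (Ne.symm hne) hTy h

/-- Lemma Y: there are no non-shared denominators above the threshold. -/
lemma nonshared_false (hξ : Irrational ξ) (hη : Irrational η) (hc : 1 < c) (hc2 : c^2 < 2)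
    (hc4 : c^2*c^2 ≤ c^2 + 1)
    (hRH : ∀ t : ℝ, T ≤ t → psi ξ t < c * psi η t ∧ psi η t < c * psi ξ t)
    {w : ℤ} (hdw : Den ξ w) (hnq : ¬ Den η (nxt ξ (nxt ξ w)))
    (hT : T + 1 ≤ ((nxt ξ w : ℤ):ℝ)) : False := by
  have hRH' : ∀ t : ℝ, T ≤ t → psi η t < c * psi ξ t ∧ psi ξ t < c * psi η t :=
    fun t ht => ⟨(hRH t ht).2, (hRH t ht).1⟩
  set x := nxt ξ w with hx
  set q := nxt ξ x with hq
  have hdx : Den ξ x := den_nxt hξ hdw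
  have hdq : Den ξ q := den_nxt hξ hdx
  have hw1 : 1 ≤ w := hdw.1
  have hwx : w < x := nxt_gt hξ hdw.1
  have hxq : x < q := nxt_gt hξ hdx.1
  have hTq : T + 1 ≤ ((q:ℤ):ℝ) := by
    have h1 : x + 1 ≤ q := by omega
    have h2 : ((x:ℤ):ℝ) + 1 ≤ ((q:ℤ):ℝ) := by exact_mod_cast h1
    linarith
  set y := nxt ξ q with hy
  have hqy : q < y := nxt_gt hξ hdq.1
  -- y must be shared
  have hyshared : Den η y := by
    by_contra h
    exact no_two_nonshared hξ hη hc hc4 hRH hdx hnq h hTq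
  have hF3q : y = q + x := by
    exact next_eq_add hξ hη hc hc2 hRH hdx hnq hTq
  -- η-predecessor of y
  obtain ⟨z, hdz, hzy⟩ := exists_prev hη hyshared (by omega)
  have hzq : z ≠ q := fun h => hnq (h ▸ hdz)
  have hzlty : z < y := hzy ▸ nxt_gt hη hdz.1
  rcases lt_or_gt_of_ne hzq with hzltq | hqltz
  · -- z < q : apply Lemma Z at y
    have hTy : T + 1 ≤ ((y:ℤ):ℝ) := by
      have h1 : q + 1 ≤ y := by omega
      have h2 : ((q:ℤ):ℝ) + 1 ≤ ((y:ℤ):ℝ) := by exact_mod_cast h1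
      linarith
    exact shared_clash hξ hη hc hc2 hc4 hRH hdq rfl hdz hzy (by omega) (by linarith)
  · -- q < z < y
    have hz_not : ¬ Den ξ z := by
      intro h
      have := den_between hξ hdq h hqltz
      omega
    obtain ⟨zm, hdzm, hzmz⟩ := exists_prev hη hdz (by omega)
    have hTz : T + 1 ≤ ((z:ℤ):ℝ) := by
      have h1 : q + 1 ≤ z := by omega
      have h2 : ((q:ℤ):ℝ) + 1 ≤ ((z:ℤ):ℝ) := by exact_mod_cast h1
      linarith
    have hF3z : y = z + zm := by
      have := next_eq_add hη hξ hc hc2 hRH' hdzm (by rw [hzmz]; exact hz_not)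
        (by rw [hzmz]; exact hTz)
      rw [hzmz, hzy] at this
      exact this
    have hzmx : zm < x := by omega
    have hzmz' : z = nxt η zm := hzmz.symm
    -- x is strictly between zm and z, hence not an η-denominator
    have hx_not : ¬ Den η x := by
      intro h
      have := den_between hη hdzm h (by omega)
      rw [hzmz] at this
      omega
    exact no_two_nonshared hξ hη hc hc4 hRH hdw hx_not hnq hT
end YZ

section AllShared
variable {ξ η : ℝ} {T c : ℝ}

/-- all sufficiently large ξ-denominators are η-denominators -/
lemma all_shared (hξ : Irrational ξ) (hη : Irrational η) (hc : 1 < c) (hc2 : c^2 < 2)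
    (hc4 : c^2*c^2 ≤ c^2 + 1)
    (hRH : ∀ t : ℝ, T ≤ t → psi ξ t < c * psi η t ∧ psi η t < c * psi ξ t) :
    ∃ Θ : ℤ, ∀ q : ℤ, Θ ≤ q → Den ξ q → Den η q := by
  obtain ⟨b, hb, _, hbnxt⟩ := exists_interval hξ (le_max_right (T+1) 1)
  set W := nxt ξ b with hW
  have hdW : Den ξ W := den_nxt hξ hb
  have hWT : T + 1 ≤ (W:ℝ) := le_trans (le_max_left _ _) (le_of_lt hbnxt)
  refine ⟨nxt ξ (nxt ξ W) + 1, fun q hq hdq => ?_⟩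
  by_contra hnq
  -- find the two predecessors of q
  have hq2 : 2 ≤ q := by
    have h1 := (den_nxt hξ (den_nxt hξ hdW)).1
    have h2 := nxt_gt hξ (den_nxt hξ hdW).1
    have h3 := nxt_gt hξ hdW.1
    omega
  obtain ⟨x, hdx, hxq⟩ := exists_prev hξ hdq hq2
  have hDle : ∀ d : ℤ, Den ξ d → d < q → d ≤ x := by
    intro d hd hdq'
    by_contra hgt
    push_neg at hgt
    have := den_between hξ hdx hd hgt
    omega
  have hx2 : nxt ξ (nxt ξ W) ≤ x := by
    refine hDle _ (den_nxt hξ (den_nxt hξ hdW)) (by omega)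
  have hxW : W < x := by
    have h2 := nxt_gt hξ (den_nxt hξ hdW).1
    have h3 := nxt_gt hξ hdW.1
    omega
  have hx2' : 2 ≤ x := by
    have := hdW.1
    omega
  obtain ⟨w, hdw, hwx⟩ := exists_prev hξ hdx hx2'
  have hTx : T + 1 ≤ ((nxt ξ w : ℤ):ℝ) := by
    rw [hwx]
    have : W + 1 ≤ x := by omega
    have hcast : ((W:ℤ):ℝ) + 1 ≤ ((x:ℤ):ℝ) := by exact_mod_cast this
    linarith
  exact nonshared_false hξ hη hc hc2 hc4 hRH hdw (by rw [hwx, hxq]; exact hnq) hTx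

end AllShared

lemma dni_le_half (x : ℝ) : dni x ≤ 1/2 := abs_sub_round x

/-- the rational-rigidity core: a real approximated to within 1/Qₙ by a fixed
    integer ratio along a coprime chain is an integer. -/
lemma rigid_core {γ : ℝ} {Q : ℕ → ℤ} {r : ℕ → ℤ}
    (hQ1 : ∀ n : ℕ, (n:ℤ) + 1 ≤ Q n)
    (hzero : ∀ n, Q n * r (n+1) - Q (n+1) * r n = 0)
    (hcop : ∀ n, IsCoprime (Q n) (Q (n+1)))
    (hbound : ∀ n, |(Q n:ℝ) * γ - (r n : ℝ)| ≤ 1) : ∃ z : ℤ, γ = (z:ℝ) := by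
  have hk : ∀ n, ∃ k : ℤ, r n = Q n * k := by
    intro n
    have h1 : Q n ∣ Q (n+1) * r n := by
      refine ⟨r (n+1), ?_⟩
      have := hzero n
      linarith [hzero n]
    exact (hcop n).dvd_of_dvd_mul_left h1
  choose k hkk using hk
  have hkconst : ∀ n, k n = k 0 := by
    intro n
    induction n with
    | zero => rfl
    | succ n ih =>
      have h0 := hzero n
      rw [hkk n, hkk (n+1)] at h0
      have hQn : Q n ≠ 0 := by have := hQ1 n; omega
      have hQn1 : Q (n+1) ≠ 0 := by have := hQ1 (n+1); omega
      have : Q n * (Q (n+1) * k (n+1)) = Q (n+1) * (Q n * k n) := by linarith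
      have h2 : k (n+1) = k n := by
        have h3 : Q n * Q (n+1) * k (n+1) = Q n * Q (n+1) * k n := by ring_nf; ring_nf at this; linarith
        exact mul_left_cancel₀ (mul_ne_zero hQn hQn1) h3
      rw [h2, ih]
  refine ⟨k 0, ?_⟩
  by_contra hne
  have hδ : 0 < |γ - (k 0 : ℝ)| := abs_pos.mpr (sub_ne_zero.mpr hne)
  obtain ⟨n, hn⟩ := exists_nat_gt (1 / |γ - (k 0 : ℝ)|)
  have hb := hbound n
  rw [hkk n, hkconst n] at hb
  have hcast : ((Q n * k 0 : ℤ):ℝ) = (Q n : ℝ) * (k 0 : ℝ) := by push_cast; ring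
  rw [hcast] at hb
  have hfact : (Q n : ℝ) * γ - (Q n : ℝ) * (k 0 : ℝ) = (Q n:ℝ) * (γ - (k 0:ℝ)) := by ring
  rw [hfact, abs_mul] at hb
  have hQpos : (0:ℝ) < (Q n : ℝ) := by
    have := hQ1 n
    have : (1:ℤ) ≤ Q n := by omega
    exact_mod_cast lt_of_lt_of_le zero_lt_one this
  have hQn : ((n:ℝ)) + 1 ≤ (Q n : ℝ) := by
    have := hQ1 n
    exact_mod_cast this
  have habs : |(Q n:ℝ)| = (Q n:ℝ) := abs_of_pos hQpos
  rw [habs] at hb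
  rw [div_lt_iff₀ hδ] at hn
  nlinarith

lemma dt_pm {ξ : ℝ} (hξ : Irrational ξ) {q : ℤ} (hden : Den ξ q) :
    dt ξ q = 1 ∨ dt ξ q = -1 := by
  rcases lt_or_gt_of_ne (er_ne_zero hξ hden.1) with h | h
  · exact Or.inr ((pair_iden hξ hden).2.2 h)
  · exact Or.inl ((pair_iden hξ hden).2.1 h)

section Main
variable {ξ η : ℝ} {T c : ℝ}

lemma main_contra (hξ : Irrational ξ) (hη : Irrational η)
    (hsum : ∀ z : ℤ, ξ + η ≠ (z:ℝ)) (hdiff : ∀ z : ℤ, ξ - η ≠ (z:ℝ))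
    (hc : 1 < c) (hc2 : c^2 < 2) (hc4 : c^2*c^2 ≤ c^2 + 1)
    (hRH : ∀ t : ℝ, T ≤ t → psi ξ t < c * psi η t ∧ psi η t < c * psi ξ t) : False := by
  have hRH' : ∀ t : ℝ, T ≤ t → psi η t < c * psi ξ t ∧ psi ξ t < c * psi η t :=
    fun t ht => ⟨(hRH t ht).2, (hRH t ht).1⟩
  obtain ⟨Θ₁, hΘ₁⟩ := all_shared hξ hη hc hc2 hc4 hRH
  obtain ⟨Θ₂, hΘ₂⟩ := all_shared hη hξ hc hc2 hc4 hRH'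
  set Θ := max Θ₁ Θ₂ with hΘ
  -- starting shared denominator
  obtain ⟨b, hb, _, hbnxt⟩ := exists_interval hξ (le_max_right ((Θ:ℝ)) 1)
  set s₀ := nxt ξ b with hs₀
  have hds₀ : Den ξ s₀ := den_nxt hξ hb
  have hs₀Θ : Θ ≤ s₀ := by
    have h1 : (Θ:ℝ) < (s₀:ℝ) := lt_of_le_of_lt (le_max_left _ _) hbnxt
    exact_mod_cast le_of_lt h1
  -- the common denominator sequence
  set Q : ℕ → ℤ := fun n => (nxt ξ)^[n] s₀ with hQ
  have hQ0 : Q 0 = s₀ := rfl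
  have hQsucc : ∀ n, Q (n+1) = nxt ξ (Q n) := fun n => Function.iterate_succ_apply' (nxt ξ) n s₀
  have hQdξ : ∀ n, Den ξ (Q n) := by
    intro n
    induction n with
    | zero => exact hds₀
    | succ n ih => rw [hQsucc n]; exact den_nxt hξ ih
  have hQmono : ∀ n, Q n < Q (n+1) := by
    intro n
    rw [hQsucc n]
    exact nxt_gt hξ (hQdξ n).1
  have hQΘ : ∀ n, Θ ≤ Q n := by
    intro n
    induction n with
    | zero => exact hs₀Θ
    | succ n ih => have := hQmono n; omega
  have hQdη : ∀ n, Den η (Q n) := fun n => hΘ₁ (Q n) (le_trans (le_max_left _ _) (hQΘ n)) (hQdξ n)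
  have hQsucc' : ∀ n, Q (n+1) = nxt η (Q n) := by
    intro n
    have h1 : Den η (Q (n+1)) := hQdη (n+1)
    have h2 : nxt η (Q n) ≤ Q (n+1) := by
      refine den_between hη (hQdη n) h1 ?_
      exact hQmono n
    have h3 : Den η (nxt η (Q n)) := den_nxt hη (hQdη n)
    have h4 : Den ξ (nxt η (Q n)) := by
      refine hΘ₂ _ ?_ h3
      have := nxt_gt hη (hQdη n).1
      have := hQΘ n
      omega
    have h5 : nxt ξ (Q n) ≤ nxt η (Q n) := den_between hξ (hQdξ n) h4 (nxt_gt hη (hQdη n).1)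
    have h6 := hQsucc n
    omega
  have hQ1 : ∀ n : ℕ, (n:ℤ) + 1 ≤ Q n := by
    intro n
    induction n with
    | zero => simpa [hQ0] using hds₀.1
    | succ n ih =>
      have := hQmono n
      push_cast
      omega
  -- sign bookkeeping
  have haltξ : ∀ n, er ξ (Q n) * er ξ (Q (n+1)) < 0 := by
    intro n
    have := sign_opp hξ (hQdξ n)
    rwa [← hQsucc n] at this
  have haltη : ∀ n, er η (Q n) * er η (Q (n+1)) < 0 := by
    intro n
    have := sign_opp hη (hQdη n)
    rwa [← hQsucc' n] at this
  have hQne : ∀ n, Q n ≠ 0 := fun n => by have := (hQdξ n).1; omega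
  have hPP : ∀ n, 0 < (er ξ (Q n) * er η (Q n)) * (er ξ (Q (n+1)) * er η (Q (n+1))) := by
    intro n
    have h := mul_pos_of_neg_of_neg (haltξ n) (haltη n)
    nlinarith [h]
  have hPne : er ξ (Q 0) * er η (Q 0) ≠ 0 :=
    mul_ne_zero (er_ne_zero hξ (hQdξ 0).1) (er_ne_zero hη (hQdη 0).1)
  -- determinants
  have hdtξ : ∀ n, dt ξ (Q n) = Q n * round ((Q (n+1) : ℝ)*ξ) - Q (n+1) * round ((Q n : ℝ)*ξ) := by
    intro n
    rw [dt, ← hQsucc n]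
  have hdtη : ∀ n, dt η (Q n) = Q n * round ((Q (n+1) : ℝ)*η) - Q (n+1) * round ((Q n : ℝ)*η) := by
    intro n
    rw [dt, ← hQsucc' n]
  have hcop : ∀ n, IsCoprime (Q n) (Q (n+1)) := by
    intro n
    rcases dt_pm hξ (hQdξ n) with h | h <;> rw [hdtξ n] at h
    · exact ⟨round ((Q (n+1) : ℝ)*ξ), -round ((Q n : ℝ)*ξ), by linear_combination h⟩
    · exact ⟨-round ((Q (n+1) : ℝ)*ξ), round ((Q n : ℝ)*ξ), by linear_combination -h⟩
  rcases lt_or_gt_of_ne hPne with hP0 | hP0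
  · -- opposite signs : ξ + η is an integer
    have hsign : ∀ n, er ξ (Q n) * er η (Q n) < 0 := by
      intro n
      induction n with
      | zero => exact hP0
      | succ n ih =>
        by_contra hle
        push_neg at hle
        have := hPP n
        nlinarith
    have hdteq : ∀ n, dt ξ (Q n) = - dt η (Q n) := by
      intro n
      rcases lt_or_gt_of_ne (er_ne_zero hξ (hQdξ n).1) with h | h
      · have hpos : 0 < er η (Q n) := by nlinarith [hsign n]
        rw [(pair_iden hξ (hQdξ n)).2.2 h, (pair_iden hη (hQdη n)).2.1 hpos]
        try ring
      · have hneg : er η (Q n) < 0 := by nlinarith [hsign n]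
        rw [(pair_iden hξ (hQdξ n)).2.1 h, (pair_iden hη (hQdη n)).2.2 hneg]
        try ring
    obtain ⟨z, hz⟩ := rigid_core (γ := ξ + η)
      (Q := Q) (r := fun n => round ((Q n : ℝ)*ξ) + round ((Q n : ℝ)*η)) hQ1
      (by
        intro n
        have h := hdteq n
        rw [hdtξ n, hdtη n] at h
        linear_combination h)
      hcop
      (by
        intro n
        have h1 : (Q n:ℝ) * (ξ + η) - ((round ((Q n : ℝ)*ξ) + round ((Q n : ℝ)*η) : ℤ):ℝ)
            = er ξ (Q n) + er η (Q n) := by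
          simp only [er]
          push_cast
          ring
        rw [h1]
        calc |er ξ (Q n) + er η (Q n)| ≤ |er ξ (Q n)| + |er η (Q n)| := abs_add_le _ _
        _ ≤ 1/2 + 1/2 := by
            gcongr <;> [exact (dni_eq_abs_er ξ (Q n)) ▸ dni_le_half _;
              exact (dni_eq_abs_er η (Q n)) ▸ dni_le_half _]
        _ = 1 := by norm_num)
    exact hsum z hz
  · -- same signs : ξ - η is an integer
    have hsign : ∀ n, 0 < er ξ (Q n) * er η (Q n) := by
      intro n
      induction n with
      | zero => exact hP0
      | succ n ih =>
        by_contra hle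
        push_neg at hle
        have := hPP n
        nlinarith
    have hdteq : ∀ n, dt ξ (Q n) = dt η (Q n) := by
      intro n
      rcases lt_or_gt_of_ne (er_ne_zero hξ (hQdξ n).1) with h | h
      · have hneg : er η (Q n) < 0 := by nlinarith [hsign n]
        rw [(pair_iden hξ (hQdξ n)).2.2 h, (pair_iden hη (hQdη n)).2.2 hneg]
        try ring
      · have hpos : 0 < er η (Q n) := by nlinarith [hsign n]
        rw [(pair_iden hξ (hQdξ n)).2.1 h, (pair_iden hη (hQdη n)).2.1 hpos]
        try ring
    obtain ⟨z, hz⟩ := rigid_core (γ := ξ - η)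
      (Q := Q) (r := fun n => round ((Q n : ℝ)*ξ) - round ((Q n : ℝ)*η)) hQ1
      (by
        intro n
        have h := hdteq n
        rw [hdtξ n, hdtη n] at h
        linear_combination h)
      hcop
      (by
        intro n
        have h1 : (Q n:ℝ) * (ξ - η) - ((round ((Q n : ℝ)*ξ) - round ((Q n : ℝ)*η) : ℤ):ℝ)
            = er ξ (Q n) - er η (Q n) := by
          simp only [er]
          push_cast
          ring
        rw [h1]
        calc |er ξ (Q n) - er η (Q n)| ≤ |er ξ (Q n)| + |er η (Q n)| := abs_sub _ _
        _ ≤ 1/2 + 1/2 := by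
            gcongr <;> [exact (dni_eq_abs_er ξ (Q n)) ▸ dni_le_half _;
              exact (dni_eq_abs_er η (Q n)) ▸ dni_le_half _]
        _ = 1 := by norm_num)
    exact hdiff z hz
end Main

lemma psi_pos {ξ : ℝ} (hξ : Irrational ξ) {t : ℝ} (ht : 1 ≤ t) : 0 < psi ξ t := by
  obtain ⟨b, hb, hb1, hb2⟩ := exists_interval hξ ht
  rw [psi_on hξ hb hb1 hb2]
  exact dni_pos hξ (by have := hb.1; omega)

/-- Folgerung: under the same hypotheses, |1/ψ_α(t) − 1/ψ_β(t)| ≥ K·t for some t ≥ T. -/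
theorem folgerung (α β : ℝ) (hα : Irrational α) (hβ : Irrational β)
    (hsum : ∀ z : ℤ, α + β ≠ (z : ℝ)) (hdiff : ∀ z : ℤ, α - β ≠ (z : ℝ)) :
    ∀ T : ℝ, 1 ≤ T → ∃ t : ℝ, T ≤ t ∧
      |1 / psi α t - 1 / psi β t| ≥ (Real.sqrt ((Real.sqrt 5 + 1) / 2) - 1) * t := by
  intro T hT
  by_contra hcon
  push_neg at hcon
  set c : ℝ := Real.sqrt ((Real.sqrt 5 + 1) / 2) with hcdef
  have hs5 : Real.sqrt 5 ^ 2 = 5 := Real.sq_sqrt (by norm_num)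
  have hs5nn : 0 ≤ Real.sqrt 5 := Real.sqrt_nonneg 5
  have hs5gt : 2 < Real.sqrt 5 := by nlinarith
  have hs5lt : Real.sqrt 5 < 3 := by nlinarith
  have hφnn : (0:ℝ) ≤ (Real.sqrt 5 + 1) / 2 := by linarith
  have hc2 : c^2 = (Real.sqrt 5 + 1) / 2 := Real.sq_sqrt hφnn
  have hcnn : 0 ≤ c := Real.sqrt_nonneg _
  have hc1 : 1 < c := by nlinarith
  have hclt : c^2 < 2 := by rw [hc2]; linarith
  have hc4 : c^2*c^2 ≤ c^2 + 1 := by rw [hc2]; nlinarith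
  -- establish the ratio hypothesis at threshold T
  have hRH : ∀ t : ℝ, T ≤ t → psi α t < c * psi β t ∧ psi β t < c * psi α t := by
    intro t ht
    have ht1 : 1 ≤ t := le_trans hT ht
    have ht0 : 0 < t := lt_of_lt_of_le zero_lt_one ht1
    have hpα : 0 < psi α t := psi_pos hα ht1
    have hpβ : 0 < psi β t := psi_pos hβ ht1
    have hmα : t ≤ 1 / psi α t := by
      rw [le_div_iff₀ hpα]
      have := psi_le_one_div (ξ := α) ht1
      calc t * psi α t ≤ t * (1/t) := by nlinarith
      _ = 1 := by field_simp
    have hmβ : t ≤ 1 / psi β t := by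
      rw [le_div_iff₀ hpβ]
      have := psi_le_one_div (ξ := β) ht1
      calc t * psi β t ≤ t * (1/t) := by nlinarith
      _ = 1 := by field_simp
    have hgap := hcon t ht
    rw [abs_lt] at hgap
    have hK0 : 0 ≤ c - 1 := by linarith
    constructor
    · -- psi α t < c * psi β t, from 1/ψβ < 1/ψα + (c-1)t ≤ c/ψα
      have h1 : 1/psi β t < 1/psi α t + (c-1)*t := by linarith [hgap.1]
      have h2 : (c-1)*t ≤ (c-1)*(1/psi α t) := by nlinarith
      have h3 : 1/psi β t < c * (1/psi α t) := by nlinarith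
      rw [mul_one_div, div_lt_div_iff₀ hpβ hpα] at h3
      linarith
    · have h1 : 1/psi α t < 1/psi β t + (c-1)*t := by linarith [hgap.2]
      have h2 : (c-1)*t ≤ (c-1)*(1/psi β t) := by nlinarith
      have h3 : 1/psi α t < c * (1/psi β t) := by nlinarith
      rw [mul_one_div, div_lt_div_iff₀ hpα hpβ] at h3
      linarith
  exact main_contra hα hβ hsum hdiff hc1 hclt hc4 hRH
end

section
/- Sign-change theorem (Kan–Moshchevitin): if α, β are irrational with α ± β ∉ ℤ, then the difference ψ_α(t) − ψ_β(t) changes sign infinitely often as t → ∞. -/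
namespace SatzA

lemma dni_nonneg (x : ℝ) : 0 ≤ dni x := abs_nonneg _

lemma dni_le_int (x : ℝ) (z : ℤ) : dni x ≤ |x - z| := round_le x z

lemma irr_nat_mul {ξ : ℝ} (hξ : Irrational ξ) {q : ℕ} (hq : q ≠ 0) :
    Irrational ((q : ℝ) * ξ) := by
  have : ((q : ℤ) : ℝ) = (q : ℝ) := by push_cast; ring
  exact this ▸ hξ.intCast_mul (by exact_mod_cast hq)

lemma dni_pos {x : ℝ} (hx : Irrational x) : 0 < dni x :=
  abs_pos.2 (sub_ne_zero.2 (hx.ne_int _))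

lemma dni_mul_pos {ξ : ℝ} (hξ : Irrational ξ) {q : ℕ} (hq : 0 < q) :
    0 < dni ((q : ℝ) * ξ) := dni_pos (irr_nat_mul hξ hq.ne')

/-- Dirichlet: values of `dni (q ξ)` get arbitrarily small. -/
lemma exists_dni_lt {ξ : ℝ} (hξ : Irrational ξ) {δ : ℝ} (hδ : 0 < δ) :
    ∃ q : ℕ, 0 < q ∧ dni ((q : ℝ) * ξ) < δ := by
  obtain ⟨N, hN⟩ := exists_nat_gt (1 / δ)
  have hN0 : 0 < N := by
    rcases Nat.eq_zero_or_pos N with h | h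
    · subst h; simp at hN; exact absurd hN (not_lt.2 (by positivity))
    · exact h
  obtain ⟨j, k, hk0, hkN, hjk⟩ := Real.exists_int_int_abs_mul_sub_le ξ hN0
  refine ⟨k.toNat, by omega, ?_⟩
  have hcast : ((k.toNat : ℕ) : ℝ) = (k : ℝ) := by
    exact_mod_cast congrArg (Int.cast : ℤ → ℝ) (Int.toNat_of_nonneg hk0.le)
  calc dni ((k.toNat : ℝ) * ξ) ≤ |(k.toNat : ℝ) * ξ - j| := dni_le_int _ j
    _ = |(k : ℝ) * ξ - j| := by rw [hcast]
    _ ≤ 1 / (N + 1) := hjk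
    _ < δ := by
        rw [div_lt_iff₀ (by positivity)]
        rw [div_lt_iff₀ hδ] at hN
        nlinarith

/-- There is a strictly larger `q'` with strictly smaller `dni (q' ξ)`,
in fact smaller than the min over `[1, q]`. -/
lemma exists_next {ξ : ℝ} (hξ : Irrational ξ) {q : ℕ} (hq : 0 < q) :
    ∃ q' : ℕ, q < q' ∧ dni ((q' : ℝ) * ξ) < dni ((q : ℝ) * ξ) := by
  have hne : (Finset.Icc 1 q).Nonempty := ⟨1, by simp; omega⟩
  set δ := (Finset.Icc 1 q).inf' hne (fun j => dni ((j : ℝ) * ξ)) with hδdef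
  obtain ⟨j₀, hj₀mem, hj₀⟩ := Finset.exists_mem_eq_inf' hne (fun j => dni ((j : ℝ) * ξ))
  have hδpos : 0 < δ := by
    rw [hδdef, hj₀]
    exact dni_mul_pos hξ (by simp at hj₀mem; omega)
  obtain ⟨q', hq'pos, hq'⟩ := exists_dni_lt hξ hδpos
  have hgt : q < q' := by
    by_contra h
    push_neg at h
    have : δ ≤ dni ((q' : ℝ) * ξ) :=
      Finset.inf'_le _ (by simp; omega)
    linarith
  exact ⟨q', hgt, lt_of_lt_of_le hq' (Finset.inf'_le _ (by simp; omega))⟩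

open scoped Classical in
/-- Next best-approximation denominator. -/
noncomputable def nxt (ξ : ℝ) (q : ℕ) : ℕ :=
  if h : ∃ q' : ℕ, q < q' ∧ dni ((q' : ℝ) * ξ) < dni ((q : ℝ) * ξ) then Nat.find h else q + 1

lemma nxt_gt (ξ : ℝ) (q : ℕ) : q < nxt ξ q := by
  unfold nxt
  split
  · next h => exact (Nat.find_spec h).1
  · omega

lemma nxt_lt {ξ : ℝ} (hξ : Irrational ξ) {q : ℕ} (hq : 0 < q) :
    dni ((nxt ξ q : ℝ) * ξ) < dni ((q : ℝ) * ξ) := by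
  unfold nxt
  rw [dif_pos (exists_next hξ hq)]
  exact (Nat.find_spec (exists_next hξ hq)).2

lemma nxt_min {ξ : ℝ} (hξ : Irrational ξ) {q : ℕ} (hq : 0 < q) {j : ℕ}
    (h1 : q < j) (h2 : j < nxt ξ q) : dni ((q : ℝ) * ξ) ≤ dni ((j : ℝ) * ξ) := by
  unfold nxt at h2
  rw [dif_pos (exists_next hξ hq)] at h2
  by_contra h
  push_neg at h
  exact Nat.find_min (exists_next hξ hq) h2 ⟨h1, h⟩ |>.elim

/-- The sequence of best approximation denominators. -/
noncomputable def bq (ξ : ℝ) (n : ℕ) : ℕ := (nxt ξ)^[n] 1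

lemma bq_zero (ξ : ℝ) : bq ξ 0 = 1 := rfl

lemma bq_succ (ξ : ℝ) (n : ℕ) : bq ξ (n + 1) = nxt ξ (bq ξ n) := by
  unfold bq
  rw [Function.iterate_succ_apply']

lemma bq_pos (ξ : ℝ) (n : ℕ) : 0 < bq ξ n := by
  induction n with
  | zero => simp [bq_zero]
  | succ n ih => rw [bq_succ]; exact lt_trans ih (nxt_gt ξ _)

lemma bq_strictMono (ξ : ℝ) : StrictMono (bq ξ) :=
  strictMono_nat_of_lt_succ (fun n => by rw [bq_succ]; exact nxt_gt ξ _)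

lemma bq_ge (ξ : ℝ) (n : ℕ) : n + 1 ≤ bq ξ n := by
  induction n with
  | zero => simp [bq_zero]
  | succ n ih =>
    have h2 : bq ξ n < bq ξ (n + 1) := bq_strictMono ξ (by omega)
    omega

/-- The error sequence. -/
noncomputable def er (ξ : ℝ) (n : ℕ) : ℝ := dni ((bq ξ n : ℝ) * ξ)

lemma er_pos {ξ : ℝ} (hξ : Irrational ξ) (n : ℕ) : 0 < er ξ n :=
  dni_mul_pos hξ (bq_pos ξ n)

lemma er_succ_lt {ξ : ℝ} (hξ : Irrational ξ) (n : ℕ) : er ξ (n + 1) < er ξ n := by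
  unfold er
  rw [bq_succ]
  exact nxt_lt hξ (bq_pos ξ n)

lemma er_strictAnti {ξ : ℝ} (hξ : Irrational ξ) : StrictAnti (er ξ) :=
  strictAnti_nat_of_succ_lt (er_succ_lt hξ)

/-- `er ξ n` is the minimum of `dni (j ξ)` over `1 ≤ j ≤ bq ξ n`. -/
lemma er_min_le {ξ : ℝ} (hξ : Irrational ξ) (n : ℕ) {j : ℕ} (h1 : 0 < j)
    (h2 : j ≤ bq ξ n) : er ξ n ≤ dni ((j : ℝ) * ξ) := by
  induction n with
  | zero =>
    have hj : j = 1 := by have := bq_zero ξ; omega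
    subst hj
    simp [er, bq_zero]
  | succ n ih =>
    rcases Nat.lt_or_ge (bq ξ n) j with h | h
    · rcases Nat.lt_or_ge j (bq ξ (n + 1)) with h' | h'
      · have := nxt_min hξ (bq_pos ξ n) h (by rwa [← bq_succ])
        exact le_trans (er_succ_lt hξ n).le this
      · have : j = bq ξ (n + 1) := le_antisymm h2 h'
        rw [this]; exact le_refl _
    · exact le_trans (er_succ_lt hξ n).le (ih h)

lemma er_min_lt {ξ : ℝ} (hξ : Irrational ξ) (n : ℕ) {j : ℕ} (h1 : 0 < j)
    (h2 : j < bq ξ (n + 1)) : er ξ n ≤ dni ((j : ℝ) * ξ) := by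
  rcases Nat.lt_or_ge (bq ξ n) j with h | h
  · exact nxt_min hξ (bq_pos ξ n) h (by rwa [← bq_succ])
  · exact er_min_le hξ n h1 h

/-- Signed error. -/
noncomputable def th (ξ : ℝ) (n : ℕ) : ℝ :=
  (bq ξ n : ℝ) * ξ - round ((bq ξ n : ℝ) * ξ)

lemma abs_th (ξ : ℝ) (n : ℕ) : |th ξ n| = er ξ n := rfl

lemma th_ne_zero {ξ : ℝ} (hξ : Irrational ξ) (n : ℕ) : th ξ n ≠ 0 := by
  intro h
  have := er_pos hξ n
  rw [← abs_th, h] at this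
  simp at this

/-- Dirichlet bound: `q_{n+1} · ξ_n < 1`. -/
lemma er_mul_lt {ξ : ℝ} (hξ : Irrational ξ) (n : ℕ) :
    (bq ξ (n + 1) : ℝ) * er ξ n < 1 := by
  set Q := bq ξ (n + 1) with hQ
  have hQ2 : 2 ≤ Q := le_trans (by omega) (bq_ge ξ (n + 1))
  have hN0 : 0 < Q - 1 := by omega
  obtain ⟨j, k, hk0, hkN, hjk⟩ := Real.exists_int_int_abs_mul_sub_le ξ hN0
  have hcastQ : ((Q - 1 : ℕ) : ℝ) + 1 = (Q : ℝ) := by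
    push_cast [Nat.cast_sub (by omega : 1 ≤ Q)]; ring
  have hkQ : k.toNat < Q := by omega
  have hkpos : 0 < k.toNat := by omega
  have h1 : er ξ n ≤ dni ((k.toNat : ℝ) * ξ) := er_min_lt hξ n hkpos hkQ
  have hcast : ((k.toNat : ℕ) : ℝ) = (k : ℝ) := by
    exact_mod_cast congrArg (Int.cast : ℤ → ℝ) (Int.toNat_of_nonneg hk0.le)
  have h2 : dni ((k.toNat : ℝ) * ξ) ≤ 1 / (Q : ℝ) := by
    calc dni ((k.toNat : ℝ) * ξ) ≤ |(k.toNat : ℝ) * ξ - j| := dni_le_int _ j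
      _ = |(k : ℝ) * ξ - j| := by rw [hcast]
      _ ≤ 1 / (((Q - 1 : ℕ) : ℝ) + 1) := hjk
      _ = 1 / (Q : ℝ) := by rw [hcastQ]
  have hle : er ξ n ≤ 1 / (Q : ℝ) := le_trans h1 h2
  have hne : er ξ n ≠ 1 / (Q : ℝ) := by
    intro h
    have hirr : Irrational ((bq ξ n : ℝ) * ξ - (round ((bq ξ n : ℝ) * ξ) : ℤ)) :=
      (irr_nat_mul hξ (bq_pos ξ n).ne').sub_intCast _
    have habs : |(bq ξ n : ℝ) * ξ - (round ((bq ξ n : ℝ) * ξ) : ℤ)| = 1 / (Q : ℝ) := h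
    have hrat : ¬Irrational (1 / (Q : ℝ)) := by
      have : (1 / (Q : ℝ)) = ((1 / (Q : ℚ) : ℚ) : ℝ) := by push_cast; ring
      rw [this]
      exact Rat.not_irrational _
    rcases abs_eq (by positivity : (0:ℝ) ≤ 1 / (Q : ℝ)) |>.1 habs with h' | h'
    · exact hrat (h' ▸ hirr)
    · exact hrat (by rw [h'] at hirr; simpa using hirr.neg)
  have hQpos : (0:ℝ) < (Q : ℝ) := by positivity
  have : er ξ n < 1 / (Q : ℝ) := lt_of_le_of_ne hle hne
  rw [lt_div_iff₀ hQpos] at this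
  linarith

/-- Signs of consecutive best approximations alternate. -/
lemma th_alt {ξ : ℝ} (hξ : Irrational ξ) (n : ℕ) : th ξ n * th ξ (n + 1) < 0 := by
  set a := th ξ n with ha
  set b := th ξ (n + 1) with hb
  have haE : |a| = er ξ n := abs_th ξ n
  have hbE : |b| = er ξ (n + 1) := abs_th ξ (n + 1)
  have hlt : er ξ (n + 1) < er ξ n := er_succ_lt hξ n
  have ha0 : a ≠ 0 := th_ne_zero hξ n
  have hb0 : b ≠ 0 := th_ne_zero hξ (n + 1)
  rcases lt_trichotomy (a * b) 0 with h | h | h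
  · exact h
  · exact absurd h (mul_ne_zero ha0 hb0)
  · exfalso
    -- same sign
    set d : ℕ := bq ξ (n + 1) - bq ξ n with hd
    have hmono : bq ξ n < bq ξ (n + 1) := bq_strictMono ξ (by omega)
    have hdpos : 0 < d := by omega
    have hdlt : d < bq ξ (n + 1) := by have := bq_pos ξ n; omega
    have hdcast : (d : ℝ) = (bq ξ (n + 1) : ℝ) - (bq ξ n : ℝ) := by
      rw [hd, Nat.cast_sub hmono.le]
    set r0 : ℤ := round ((bq ξ n : ℝ) * ξ) with hr0
    set r1 : ℤ := round ((bq ξ (n + 1) : ℝ) * ξ) with hr1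
    have hkey : dni ((d : ℝ) * ξ) ≤ |b - a| := by
      have : (d : ℝ) * ξ - ((r1 - r0 : ℤ) : ℝ) = b - a := by
        rw [hdcast, hb, ha]
        unfold th
        push_cast
        ring
      calc dni ((d : ℝ) * ξ) ≤ |(d : ℝ) * ξ - ((r1 - r0 : ℤ) : ℝ)| := dni_le_int _ _
        _ = |b - a| := by rw [this]
    have hba : |b - a| < er ξ n := by
      rw [abs_sub_lt_iff]
      rcases abs_cases a with ⟨ha1, ha2⟩ | ⟨ha1, ha2⟩ <;>
        rcases abs_cases b with ⟨hb1, hb2⟩ | ⟨hb1, hb2⟩ <;>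
        constructor <;> nlinarith [er_pos hξ n, er_pos hξ (n + 1)]
    have := er_min_lt hξ n hdpos hdlt
    linarith
/-- The fundamental identity and coprimality. -/
lemma key_identity {ξ : ℝ} (hξ : Irrational ξ) (n : ℕ) :
    (bq ξ (n + 1) : ℝ) * er ξ n + (bq ξ n : ℝ) * er ξ (n + 1) = 1 ∧
      IsCoprime (bq ξ n : ℤ) (bq ξ (n + 1) : ℤ) := by
  set a := th ξ n with ha
  set b := th ξ (n + 1) with hb
  set r0 : ℤ := round ((bq ξ n : ℝ) * ξ) with hr0
  set r1 : ℤ := round ((bq ξ (n + 1) : ℝ) * ξ) with hr1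
  set D : ℤ := (bq ξ n : ℤ) * r1 - (bq ξ (n + 1) : ℤ) * r0 with hD
  have hDr : (D : ℝ) = (bq ξ (n + 1) : ℝ) * a - (bq ξ n : ℝ) * b := by
    rw [hD, ha, hb]; unfold th; push_cast; ring
  have halt : a * b < 0 := th_alt hξ n
  have haE : |a| = er ξ n := abs_th ξ n
  have hbE : |b| = er ξ (n + 1) := abs_th ξ (n + 1)
  have habs : |(D : ℝ)| = (bq ξ (n + 1) : ℝ) * er ξ n + (bq ξ n : ℝ) * er ξ (n + 1) := by
    rw [hDr, ← haE, ← hbE]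
    have hq0 : (0:ℝ) < (bq ξ n : ℝ) := by exact_mod_cast bq_pos ξ n
    have hq1 : (0:ℝ) < (bq ξ (n + 1) : ℝ) := by exact_mod_cast bq_pos ξ (n + 1)
    rcases abs_cases ((bq ξ (n + 1) : ℝ) * a - (bq ξ n : ℝ) * b) with ⟨hD1, hD2⟩ | ⟨hD1, hD2⟩ <;>
      rcases abs_cases a with ⟨ha1, ha2⟩ | ⟨ha1, ha2⟩ <;>
      rcases abs_cases b with ⟨hb1, hb2⟩ | ⟨hb1, hb2⟩ <;>
      rw [hD1, ha1, hb1] <;>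
      first
        | linarith
        | (exfalso; nlinarith)
  have h1 : (bq ξ (n + 1) : ℝ) * er ξ n < 1 := er_mul_lt hξ n
  have h2 : (bq ξ n : ℝ) * er ξ (n + 1) < 1 := by
    have hq01 : (bq ξ n : ℝ) < (bq ξ (n + 1) : ℝ) := by
      exact_mod_cast bq_strictMono ξ (by omega : n < n + 1)
    have := er_pos hξ (n + 1)
    have := er_succ_lt hξ n
    nlinarith
  have hpos : 0 < |(D : ℝ)| := by
    rw [habs]
    have hq1 : (0:ℝ) < (bq ξ (n + 1) : ℝ) := by exact_mod_cast bq_pos ξ (n + 1)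
    have hq0 : (0:ℝ) < (bq ξ n : ℝ) := by exact_mod_cast bq_pos ξ n
    nlinarith [er_pos hξ n, er_pos hξ (n + 1)]
  have hlt2 : |(D : ℝ)| < 2 := by rw [habs]; linarith
  have hD1 : D = 1 ∨ D = -1 := by
    have h3 : |D| < 2 := by exact_mod_cast (by push_cast; exact hlt2 : (|D| : ℝ) < 2)
    have h4 : D ≠ 0 := by
      intro h
      rw [h] at hpos; simp at hpos
    rcases abs_lt.mp h3 with ⟨hl, hr⟩
    omega
  constructor
  · have : |(D : ℝ)| = 1 := by
      rcases hD1 with h | h <;> rw [h] <;> norm_num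
    rw [habs] at this; linarith
  · rcases hD1 with h | h
    · exact ⟨r1, -r0, by linarith [hD ▸ h]⟩
    · exact ⟨-r1, r0, by linarith [hD ▸ h]⟩

lemma identity {ξ : ℝ} (hξ : Irrational ξ) (n : ℕ) :
    (bq ξ (n + 1) : ℝ) * er ξ n + (bq ξ n : ℝ) * er ξ (n + 1) = 1 :=
  (key_identity hξ n).1

lemma coprime {ξ : ℝ} (hξ : Irrational ξ) (n : ℕ) :
    IsCoprime (bq ξ n : ℤ) (bq ξ (n + 1) : ℤ) :=
  (key_identity hξ n).2

/-- Fibonacci-type growth. -/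
lemma bq_fib {ξ : ℝ} (hξ : Irrational ξ) (n : ℕ) :
    bq ξ n + bq ξ (n + 1) ≤ bq ξ (n + 2) := by
  set a := th ξ n with ha
  set c := th ξ (n + 2) with hc
  have hac : 0 < a * c := by
    have h1 := th_alt hξ n
    have h2 := th_alt hξ (n + 1)
    have hb0 : th ξ (n + 1) ≠ 0 := th_ne_zero hξ (n + 1)
    nlinarith [mul_pos_of_neg_of_neg h1 h2, mul_self_pos.mpr hb0]
  by_contra hcon
  push_neg at hcon
  set d : ℕ := bq ξ (n + 2) - bq ξ n with hd
  have hmono : bq ξ n < bq ξ (n + 2) := bq_strictMono ξ (by omega)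
  have hdpos : 0 < d := by omega
  have hdlt : d < bq ξ (n + 1) := by omega
  have hdcast : (d : ℝ) = (bq ξ (n + 2) : ℝ) - (bq ξ n : ℝ) := by
    rw [hd, Nat.cast_sub hmono.le]
  set r0 : ℤ := round ((bq ξ n : ℝ) * ξ) with hr0
  set r2 : ℤ := round ((bq ξ (n + 2) : ℝ) * ξ) with hr2
  have hkey : dni ((d : ℝ) * ξ) ≤ |c - a| := by
    have : (d : ℝ) * ξ - ((r2 - r0 : ℤ) : ℝ) = c - a := by
      rw [hdcast, hc, ha]; unfold th; push_cast; ring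
    calc dni ((d : ℝ) * ξ) ≤ |(d : ℝ) * ξ - ((r2 - r0 : ℤ) : ℝ)| := dni_le_int _ _
      _ = |c - a| := by rw [this]
  have haE : |a| = er ξ n := abs_th ξ n
  have hcE : |c| = er ξ (n + 2) := abs_th ξ (n + 2)
  have hlt : er ξ (n + 2) < er ξ n := by
    have := er_succ_lt hξ n
    have := er_succ_lt hξ (n + 1)
    linarith
  have hca : |c - a| < er ξ n := by
    rw [abs_sub_lt_iff]
    rcases abs_cases a with ⟨ha1, ha2⟩ | ⟨ha1, ha2⟩ <;>
      rcases abs_cases c with ⟨hc1, hc2⟩ | ⟨hc1, hc2⟩ <;>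
      constructor <;> nlinarith [er_pos hξ n, er_pos hξ (n + 2)]
  have hn2 : n < n + 1 := by omega
  have := er_min_lt hξ n hdpos hdlt
  linarith

/-- The step-function formula for ψ. -/
lemma psi_eq {ξ : ℝ} (hξ : Irrational ξ) (n : ℕ) {t : ℝ} (h1 : (bq ξ n : ℝ) ≤ t)
    (h2 : t < (bq ξ (n + 1) : ℝ)) : psi ξ t = er ξ n := by
  have hmem : er ξ n ∈ {v : ℝ | ∃ q : ℤ, 1 ≤ q ∧ (q : ℝ) ≤ t ∧ v = dni ((q : ℝ) * ξ)} := by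
    refine ⟨(bq ξ n : ℤ), by exact_mod_cast bq_pos ξ n, by exact_mod_cast h1, ?_⟩
    unfold er
    norm_num
  unfold psi
  apply le_antisymm
  · exact csInf_le ⟨0, fun v ⟨q, hq1, hq2, hq3⟩ => hq3 ▸ dni_nonneg _⟩ hmem
  · apply le_csInf ⟨_, hmem⟩
    rintro v ⟨q, hq1, hq2, rfl⟩
    have hqlt : (q : ℝ) < (bq ξ (n + 1) : ℝ) := lt_of_le_of_lt hq2 h2
    have hqnat : q.toNat < bq ξ (n + 1) := by
      have : q < (bq ξ (n + 1) : ℤ) := by exact_mod_cast hqlt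
      omega
    have hqpos : 0 < q.toNat := by omega
    have hcast : ((q.toNat : ℕ) : ℝ) = (q : ℝ) := by
      exact_mod_cast congrArg (Int.cast : ℤ → ℝ) (Int.toNat_of_nonneg (by omega : (0:ℤ) ≤ q))
    have := er_min_lt hξ n hqpos hqnat
    rwa [hcast] at this

/-- Every `t ≥ 1` lies in some step interval. -/
lemma exists_interval (ξ : ℝ) {t : ℝ} (ht : 1 ≤ t) :
    ∃ n, (bq ξ n : ℝ) ≤ t ∧ t < (bq ξ (n + 1) : ℝ) := by
  have hex : ∃ n : ℕ, t < (bq ξ n : ℝ) := by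
    obtain ⟨N, hN⟩ := exists_nat_gt t
    refine ⟨N, lt_of_lt_of_le hN ?_⟩
    exact_mod_cast le_trans (by omega : N ≤ N + 1) (bq_ge ξ N)
  classical
  have h0 : Nat.find hex ≠ 0 := by
    intro h
    have := Nat.find_spec hex
    rw [h] at this
    rw [show bq ξ 0 = 1 from bq_zero ξ] at this
    push_cast at this
    linarith
  obtain ⟨n, hn⟩ : ∃ n, Nat.find hex = n + 1 := ⟨Nat.find hex - 1, by omega⟩
  refine ⟨n, ?_, ?_⟩
  · have := Nat.find_min hex (by omega : n < Nat.find hex)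
    push_neg at this
    exact this
  · have := Nat.find_spec hex
    rwa [hn] at this

/-- If `q₀ γ` and `q₁ γ` are integers with `q₀, q₁` coprime, then `γ` is an integer. -/
lemma int_of_coprime_mul {γ : ℝ} {q0 q1 : ℕ} (hcop : IsCoprime (q0 : ℤ) (q1 : ℤ))
    (hq0 : 0 < q0) (z0 z1 : ℤ) (h0 : (q0 : ℝ) * γ = z0) (h1 : (q1 : ℝ) * γ = z1) :
    ∃ z : ℤ, γ = z := by
  have key : z0 * (q1 : ℤ) = (q0 : ℤ) * z1 := by
    have : ((z0 * (q1 : ℤ) : ℤ) : ℝ) = (((q0 : ℤ) * z1 : ℤ) : ℝ) := by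
      push_cast
      rw [← h0, ← h1]; ring
    exact_mod_cast this
  have hdvd : (q0 : ℤ) ∣ z0 := hcop.dvd_of_dvd_mul_right ⟨z1, key⟩
  obtain ⟨c, hc⟩ := hdvd
  refine ⟨c, ?_⟩
  have hq0r : ((q0 : ℕ) : ℝ) ≠ 0 := by positivity
  have : (q0 : ℝ) * γ = (q0 : ℝ) * (c : ℝ) := by
    rw [h0, hc]; push_cast; ring
  exact mul_left_cancel₀ hq0r this

open scoped Classical in
/-- Main lemma: if ψ_β ≤ ψ_α eventually, then α − β or α + β is an integer. -/
lemma no_one_sided {α β T : ℝ} (hα : Irrational α) (hβ : Irrational β)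
    (h : ∀ t, T ≤ t → psi β t ≤ psi α t) :
    (∃ z : ℤ, α - β = z) ∨ (∃ z : ℤ, α + β = z) := by
  -- the alignment index
  have hf : ∀ n : ℕ, ∃ m : ℕ, er β m ≤ er α n := by
    intro n
    obtain ⟨q, hq, hlt⟩ := exists_dni_lt hβ (er_pos hα n)
    exact ⟨q, le_trans (er_min_le hβ q hq (by have := bq_ge β q; omega)) hlt.le⟩
  set f : ℕ → ℕ := fun n => Nat.find (hf n) with hfdef
  have hfE : ∀ n, er β (f n) ≤ er α n := fun n => Nat.find_spec (hf n)
  have hfmono : Monotone f := by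
    apply monotone_nat_of_le_succ
    intro n
    apply Nat.find_min' (hf n)
    exact le_trans (hfE (n + 1)) (er_strictAnti hα (by omega : n < n + 1)).le
  -- the starting index
  obtain ⟨N₀, hN₀⟩ := exists_nat_gt T
  have hT : ∀ n, N₀ ≤ n → T ≤ (bq α n : ℝ) := by
    intro n hn
    have h1 : (N₀ : ℝ) ≤ (bq α n : ℝ) := by
      exact_mod_cast le_trans (by omega : N₀ ≤ n + 1) (bq_ge α n)
    linarith
  -- the fundamental constraint: β reaches each record level no later than α
  have hr : ∀ n, N₀ ≤ n → bq β (f n) ≤ bq α n := by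
    intro n hn
    have hpsiα : psi α (bq α n : ℝ) = er α n := by
      apply psi_eq hα n le_rfl
      exact_mod_cast bq_strictMono α (by omega : n < n + 1)
    have ht1 : (1 : ℝ) ≤ (bq α n : ℝ) := by exact_mod_cast bq_pos α n
    obtain ⟨m, hm1, hm2⟩ := exists_interval β ht1
    have hpsiβ : psi β (bq α n : ℝ) = er β m := psi_eq hβ m hm1 hm2
    have hcomp : er β m ≤ er α n := by
      rw [← hpsiβ, ← hpsiα]; exact h _ (hT n hn)
    have hfle : f n ≤ m := Nat.find_min' (hf n) hcomp
    have : (bq β (f n) : ℝ) ≤ (bq α n : ℝ) :=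
      le_trans (by exact_mod_cast (bq_strictMono β).monotone hfle) hm1
    exact_mod_cast this
  -- Claim 1: f never jumps by more than one
  have claim1 : ∀ n, N₀ ≤ n → f (n + 1) ≤ f n + 1 := by
    intro n hn
    by_contra hcon
    push_neg at hcon
    obtain ⟨k, hk⟩ : ∃ k, f (n + 1) = k + 2 := ⟨f (n + 1) - 2, by omega⟩
    have hkm : f n ≤ k := by omega
    have hid := identity hβ k
    have hfib := bq_fib hβ k
    have hrb : bq β (k + 2) ≤ bq α (n + 1) := hk ▸ hr (n + 1) (by omega)
    have hE1 : er β k ≤ er α n :=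
      le_trans ((er_strictAnti hβ).antitone hkm) (hfE n)
    have hE2 : er β (k + 1) ≤ er α n :=
      le_trans ((er_strictAnti hβ).antitone (by omega : f n ≤ k + 1)) (hfE n)
    have hmul := er_mul_lt hα n
    have hc1 : (bq β (k + 1) : ℝ) + (bq β k : ℝ) ≤ (bq α (n + 1) : ℝ) := by
      exact_mod_cast le_trans (by omega : bq β (k + 1) + bq β k ≤ bq β (k + 2)) hrb
    have hp1 : (0:ℝ) < (bq β k : ℝ) := by exact_mod_cast bq_pos β k
    have hp2 : (0:ℝ) < (bq β (k + 1) : ℝ) := by exact_mod_cast bq_pos β (k + 1)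
    have hp3 : (0:ℝ) < er α n := er_pos hα n
    have hp4 : (0:ℝ) < er β k := er_pos hβ k
    have hp5 : (0:ℝ) < er β (k + 1) := er_pos hβ (k + 1)
    have s1 : (bq β (k + 1) : ℝ) * er β k ≤ (bq β (k + 1) : ℝ) * er α n :=
      mul_le_mul_of_nonneg_left hE1 hp2.le
    have s2 : (bq β k : ℝ) * er β (k + 1) ≤ (bq β k : ℝ) * er α n :=
      mul_le_mul_of_nonneg_left hE2 hp1.le
    have s3 : (bq β (k + 1) : ℝ) * er α n + (bq β k : ℝ) * er α n ≤
        (bq α (n + 1) : ℝ) * er α n := by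
      rw [← add_mul]; exact mul_le_mul_of_nonneg_right hc1 hp3.le
    linarith
  -- Claim 2: a unit step forces exact agreement
  have claim2 : ∀ n, N₀ ≤ n → f (n + 1) = f n + 1 →
      bq β (f n) = bq α n ∧ er β (f n) = er α n ∧
        bq β (f n + 1) = bq α (n + 1) ∧ er β (f n + 1) = er α (n + 1) := by
    intro n hn hstep
    set m := f n with hm
    have I1 := identity hα n
    have I2 := identity hβ m
    have hA : er β m ≤ er α n := hfE n
    have hB : er β (m + 1) ≤ er α (n + 1) := by
      have := hfE (n + 1); rwa [hstep] at this
    have hC : (bq β m : ℝ) ≤ (bq α n : ℝ) := by exact_mod_cast hr n hn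
    have hD : (bq β (m + 1) : ℝ) ≤ (bq α (n + 1) : ℝ) := by
      have := hr (n + 1) (by omega); rw [hstep] at this; exact_mod_cast this
    have hp0 : (0:ℝ) < (bq α n : ℝ) := by exact_mod_cast bq_pos α n
    have hp1 : (0:ℝ) < (bq α (n + 1) : ℝ) := by exact_mod_cast bq_pos α (n + 1)
    have hp2 : (0:ℝ) < (bq β m : ℝ) := by exact_mod_cast bq_pos β m
    have hp3 : (0:ℝ) < (bq β (m + 1) : ℝ) := by exact_mod_cast bq_pos β (m + 1)
    have hq3 : (0:ℝ) < er α n := er_pos hα n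
    have hq4 : (0:ℝ) < er α (n + 1) := er_pos hα (n + 1)
    have hq5 : (0:ℝ) < er β m := er_pos hβ m
    have hq6 : (0:ℝ) < er β (m + 1) := er_pos hβ (m + 1)
    have s1 : (bq β (m + 1) : ℝ) * er β m ≤ (bq α (n + 1) : ℝ) * er β m :=
      mul_le_mul_of_nonneg_right hD hq5.le
    have s2 : (bq β m : ℝ) * er β (m + 1) ≤ (bq α n : ℝ) * er α (n + 1) :=
      mul_le_mul hC hB hq6.le hp0.le
    -- e1 : er β m = er α n
    have e1 : er β m = er α n := by
      have hle : (bq α (n + 1) : ℝ) * er α n ≤ (bq α (n + 1) : ℝ) * er β m := by linarith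
      have := le_of_mul_le_mul_left hle hp1
      linarith
    rw [e1] at I2 s1
    -- e2 : bq β (m+1) = bq α (n+1)
    have e2 : bq β (m + 1) = bq α (n + 1) := by
      by_contra hne
      have hlt : bq β (m + 1) + 1 ≤ bq α (n + 1) := by
        have : bq β (m + 1) ≤ bq α (n + 1) := by exact_mod_cast hD
        omega
      have hltr : (bq β (m + 1) : ℝ) + 1 ≤ (bq α (n + 1) : ℝ) := by exact_mod_cast hlt
      have s3 : (bq β (m + 1) : ℝ) * er α n ≤ ((bq α (n + 1) : ℝ) - 1) * er α n :=
        mul_le_mul_of_nonneg_right (by linarith) hq3.le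
      nlinarith
    have e2r : (bq β (m + 1) : ℝ) = (bq α (n + 1) : ℝ) := by exact_mod_cast e2
    -- e3 : the second products agree
    have e3 : (bq β m : ℝ) * er β (m + 1) = (bq α n : ℝ) * er α (n + 1) := by
      rw [e2r] at I2
      linarith
    -- e4 : bq β m = bq α n
    have e4 : bq β m = bq α n := by
      by_contra hne
      have hlt : bq β m + 1 ≤ bq α n := by
        have : bq β m ≤ bq α n := by exact_mod_cast hC
        omega
      have hltr : (bq β m : ℝ) + 1 ≤ (bq α n : ℝ) := by exact_mod_cast hlt
      have s4 : (bq β m : ℝ) * er β (m + 1) < (bq α n : ℝ) * er β (m + 1) :=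
        mul_lt_mul_of_pos_right (by linarith) hq6
      have s5 : (bq α n : ℝ) * er β (m + 1) ≤ (bq α n : ℝ) * er α (n + 1) :=
        mul_le_mul_of_nonneg_left hB hp0.le
      linarith
    have e4r : (bq β m : ℝ) = (bq α n : ℝ) := by exact_mod_cast e4
    have e5 : er β (m + 1) = er α (n + 1) := by
      rw [e4r] at e3
      exact mul_left_cancel₀ hp0.ne' e3
    exact ⟨e4, e1, e2, e5⟩
  -- f is unbounded
  have hfub : ∀ m : ℕ, ∃ n, N₀ ≤ n ∧ m < f n := by
    intro m
    obtain ⟨n₁, hn₁⟩ := exists_nat_gt (1 / er β m)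
    set n := max n₁ N₀ with hndef
    refine ⟨n, le_max_right _ _, ?_⟩
    have hEm : 0 < er β m := er_pos hβ m
    have hsmall : er α n < er β m := by
      have hmul := er_mul_lt hα n
      have hge : (n₁ : ℝ) ≤ (bq α (n + 1) : ℝ) := by
        exact_mod_cast le_trans (le_trans (le_max_left n₁ N₀) (by omega : n ≤ n + 2)) (bq_ge α (n + 1))
      have h1 : 1 / er β m < (bq α (n + 1) : ℝ) := lt_of_lt_of_le hn₁ hge
      have hp : (0:ℝ) < (bq α (n + 1) : ℝ) := by exact_mod_cast bq_pos α (n + 1)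
      have hap : 0 < er α n := er_pos hα n
      rw [div_lt_iff₀ hEm] at h1
      by_contra hcc
      push_neg at hcc
      have : (bq α (n + 1) : ℝ) * er β m ≤ (bq α (n + 1) : ℝ) * er α n :=
        mul_le_mul_of_nonneg_left hcc hp.le
      linarith
    by_contra hcon
    push_neg at hcon
    have : er β m ≤ er β (f n) := (er_strictAnti hβ).antitone hcon
    have := hfE n
    linarith
  -- Claim 3: f always steps by exactly one beyond N₀
  have claim3 : ∀ n, N₀ ≤ n → f (n + 1) = f n + 1 := by
    intro n hn
    by_contra hne
    have hmn : f n ≤ f (n + 1) := hfmono (by omega : n ≤ n + 1)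
    have hstall : f (n + 1) = f n := by
      have := claim1 n hn; omega
    have hexrise : ∃ j, n ≤ j ∧ f (j + 1) ≠ f j := by
      by_contra hcon
      push_neg at hcon
      have hconst : ∀ j, n ≤ j → f j = f n := by
        intro j hj
        induction j, hj using Nat.le_induction with
        | base => rfl
        | succ j hj ih => rw [hcon j hj, ih]
      obtain ⟨n', hn'1, hn'2⟩ := hfub (f n)
      have hj : f (max n n') = f n := hconst _ (le_max_left _ _)
      have : f n' ≤ f (max n n') := hfmono (le_max_right _ _)
      omega
    classical
    obtain ⟨hj₀n, hj₀ne⟩ := Nat.find_spec hexrise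
    have hmin : ∀ j, j < Nat.find hexrise → ¬(n ≤ j ∧ f (j + 1) ≠ f j) :=
      fun j hj => Nat.find_min hexrise hj
    generalize hgen : Nat.find hexrise = j₀ at hj₀n hj₀ne hmin
    have hj₀gt : n < j₀ := by
      rcases Nat.lt_or_ge n j₀ with h' | h'
      · exact h'
      · exfalso
        have : j₀ = n := le_antisymm h' hj₀n
        rw [this] at hj₀ne
        exact hj₀ne hstall
    have hconst : ∀ j, n ≤ j → j ≤ j₀ → f j = f n := by
      intro j hj1 hj2
      induction j, hj1 using Nat.le_induction with
      | base => rfl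
      | succ j hj ih =>
        have hjlt : j < j₀ := by omega
        have hstep : f (j + 1) = f j := by
          by_contra hc
          exact hmin j hjlt ⟨hj, hc⟩
        rw [hstep, ih (by omega)]
    have hrise : f (j₀ + 1) = f j₀ + 1 := by
      have h1 := claim1 j₀ (by omega)
      have h2 := hfmono (by omega : j₀ ≤ j₀ + 1)
      omega
    have heq := (claim2 j₀ (by omega) hrise).1
    have hfj₀ : f j₀ = f n := hconst j₀ hj₀n le_rfl
    rw [hfj₀] at heq
    have hle := hr n hn
    have : bq α n < bq α j₀ := bq_strictMono α hj₀gt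
    omega
  -- full alignment beyond N₀
  have halign : ∀ n, N₀ ≤ n → bq β (f n) = bq α n ∧ er β (f n) = er α n :=
    fun n hn => ⟨(claim2 n hn (claim3 n hn)).1, (claim2 n hn (claim3 n hn)).2.1⟩
  -- the sign argument
  have hstep0 : f (N₀ + 1) = f N₀ + 1 := claim3 N₀ le_rfl
  obtain ⟨hQ0, hE0⟩ := halign N₀ le_rfl
  obtain ⟨hQ1, hE1⟩ := halign (N₀ + 1) (by omega)
  rw [hstep0] at hQ1 hE1
  -- |th α n| = |th β (f n)|
  have habs0 : |th α N₀| = |th β (f N₀)| := by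
    rw [abs_th, abs_th, hE0]
  have habs1 : |th α (N₀ + 1)| = |th β (f N₀ + 1)| := by
    rw [abs_th, abs_th, hE1]
  have haltα := th_alt hα N₀
  have haltβ := th_alt hβ (f N₀)
  -- relate th β (f n) to bq α n
  have hth0 : th β (f N₀) = (bq α N₀ : ℝ) * β - (round ((bq α N₀ : ℝ) * β) : ℤ) := by
    unfold th; rw [hQ0]
  have hth1 : th β (f N₀ + 1) =
      (bq α (N₀ + 1) : ℝ) * β - (round ((bq α (N₀ + 1) : ℝ) * β) : ℤ) := by
    unfold th; rw [hQ1]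
  have hthα0 : th α N₀ = (bq α N₀ : ℝ) * α - (round ((bq α N₀ : ℝ) * α) : ℤ) := rfl
  have hthα1 : th α (N₀ + 1) =
      (bq α (N₀ + 1) : ℝ) * α - (round ((bq α (N₀ + 1) : ℝ) * α) : ℤ) := rfl
  have hcop := coprime hα N₀
  have hq0pos := bq_pos α N₀
  rcases abs_eq_abs.mp habs0 with hsgn0 | hsgn0 <;> rcases abs_eq_abs.mp habs1 with hsgn1 | hsgn1
  · -- same sign twice : α - β ∈ ℤ
    left
    have h0 : (bq α N₀ : ℝ) * (α - β) =
        ((round ((bq α N₀ : ℝ) * α) - round ((bq α N₀ : ℝ) * β) : ℤ) : ℝ) := by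
      rw [hth0, hthα0] at hsgn0
      push_cast
      linarith
    have h1 : (bq α (N₀ + 1) : ℝ) * (α - β) =
        ((round ((bq α (N₀ + 1) : ℝ) * α) - round ((bq α (N₀ + 1) : ℝ) * β) : ℤ) : ℝ) := by
      rw [hth1, hthα1] at hsgn1
      push_cast
      linarith
    exact int_of_coprime_mul hcop hq0pos _ _ h0 h1
  · -- mixed signs : contradiction with alternation
    exfalso
    rw [hsgn0, hsgn1] at haltα
    nlinarith
  · exfalso
    rw [hsgn0, hsgn1] at haltα
    nlinarith
  · -- opposite sign twice : α + β ∈ ℤ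
    right
    have h0 : (bq α N₀ : ℝ) * (α + β) =
        ((round ((bq α N₀ : ℝ) * α) + round ((bq α N₀ : ℝ) * β) : ℤ) : ℝ) := by
      rw [hth0, hthα0] at hsgn0
      push_cast
      linarith
    have h1 : (bq α (N₀ + 1) : ℝ) * (α + β) =
        ((round ((bq α (N₀ + 1) : ℝ) * α) + round ((bq α (N₀ + 1) : ℝ) * β) : ℤ) : ℝ) := by
      rw [hth1, hthα1] at hsgn1
      push_cast
      linarith
    exact int_of_coprime_mul hcop hq0pos _ _ h0 h1

end SatzA

/-- Satz A (Kan–Moshchevitin): ψ_α(t) − ψ_β(t) changes sign infinitely often. -/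
theorem satzA (α β : ℝ) (hα : Irrational α) (hβ : Irrational β)
    (hsum : ∀ z : ℤ, α + β ≠ (z : ℝ)) (hdiff : ∀ z : ℤ, α - β ≠ (z : ℝ)) :
    ∀ T : ℝ, ∃ t₁ t₂ : ℝ, T ≤ t₁ ∧ T ≤ t₂ ∧
      psi α t₁ - psi β t₁ > 0 ∧ psi α t₂ - psi β t₂ < 0 := by
  intro T
  by_contra hcon
  push_neg at hcon
  by_cases hpos : ∃ t, T ≤ t ∧ 0 < psi α t - psi β t
  · obtain ⟨t₁, ht₁, hP⟩ := hpos
    have hall : ∀ t, T ≤ t → psi β t ≤ psi α t := by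
      intro t ht
      have := hcon t₁ t ht₁ ht (by linarith)
      linarith
    rcases SatzA.no_one_sided hα hβ hall with ⟨z, hz⟩ | ⟨z, hz⟩
    · exact hdiff z hz
    · exact hsum z hz
  · push_neg at hpos
    have hall : ∀ t, T ≤ t → psi α t ≤ psi β t := by
      intro t ht
      have := hpos t ht
      linarith
    rcases SatzA.no_one_sided hβ hα hall with ⟨z, hz⟩ | ⟨z, hz⟩
    · exact hdiff (-z) (by push_cast; linarith)
    · exact hsum z (by linarith)
end

section
/- Optimality: for every ε > 0 there exist irrational numbers α, β with α ± β ∉ ℤ such that for all sufficiently large t, |ψ_α(t) − ψ_β(t)| ≤ (K + ε) · min(ψ_α(t), ψ_β(t)), where K = √((√5+1)/2) − 1. In particular, K in the main theorem cannot be replaced by any larger constant. -/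
namespace Satz2Aux

/-- golden ratio as a (semireducible) def so that `ring` treats it as an atom -/
noncomputable def gA : ℝ := (1 + Real.sqrt 5) / 2
/-- conjugate golden ratio -/
noncomputable def gB : ℝ := (1 - Real.sqrt 5) / 2

lemma gA_eq : gA = Real.goldenRatio := rfl
lemma gB_eq : gB = Real.goldenConj := rfl

end Satz2Aux

local notation "τ" => Satz2Aux.gA
local notation "σ" => Satz2Aux.gB

namespace Satz2Aux

lemma hadd : τ + σ = 1 := by rw [gA_eq, gB_eq]; exact Real.goldenRatio_add_goldenConj
lemma hmul : τ * σ = -1 := by rw [gA_eq, gB_eq]; exact Real.goldenRatio_mul_goldenConj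
lemma hsub : τ - σ = Real.sqrt 5 := by rw [gA_eq, gB_eq]; exact Real.goldenRatio_sub_goldenConj
lemma hAsq : τ^2 = τ + 1 := by rw [gA_eq]; exact Real.goldenRatio_sq
lemma hBsq : σ^2 = σ + 1 := by rw [gB_eq]; exact Real.goldenConj_sq
lemma one_lt_gA : 1 < τ := by rw [gA_eq]; exact Real.one_lt_goldenRatio
lemma gA_pos : 0 < τ := lt_trans one_pos one_lt_gA
lemma gA_lt_two : τ < 2 := by rw [gA_eq]; exact Real.goldenRatio_lt_two
lemma gB_neg : σ < 0 := by rw [gB_eq]; exact Real.goldenConj_neg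
lemma neg_one_lt_gB : -1 < σ := by rw [gB_eq]; exact Real.neg_one_lt_goldenConj
lemma abs_gB : |σ| = τ⁻¹ := by
  rw [abs_of_neg gB_neg, gA_eq, gB_eq, Real.inv_goldenRatio]
lemma gA_irrational : Irrational τ := by rw [gA_eq]; exact Real.goldenRatio_irrational
lemma abs_gB_lt_one : |σ| < 1 := by
  rw [abs_of_neg gB_neg]; linarith [neg_one_lt_gB]
lemma abs_gB_pos : 0 < |σ| := by
  rw [abs_pos]; exact ne_of_lt gB_neg
lemma gA_mul_abs_gB : τ * |σ| = 1 := by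
  rw [abs_gB]; exact mul_inv_cancel₀ (ne_of_gt gA_pos)

end Satz2Aux

namespace Satz2Aux

/-- denominators of the convergents of τ/(Nτ+1) -/
def Xs (N : ℤ) : ℕ → ℤ
  | 0 => 1
  | 1 => N
  | n+2 => Xs N (n+1) + Xs N n

/-- numerators -/
def Ys : ℕ → ℤ
  | 0 => 0
  | 1 => 1
  | n+2 => Ys (n+1) + Ys n

lemma Xs_ge (N : ℤ) (hN : 1 ≤ N) : ∀ n : ℕ, max 1 (n : ℤ) ≤ Xs N n := by
  intro n
  induction n using Nat.twoStepInduction with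
  | zero => simp [Xs]
  | one => simpa [Xs] using hN
  | more n ih1 ih2 =>
      have h1 : (1:ℤ) ≤ Xs N n := le_trans (le_max_left _ _) ih1
      have h2 : (n:ℤ)+1 ≤ Xs N (n+1) := le_trans (by simp) ih2
      simp only [Xs, max_le_iff]
      constructor <;> push_cast <;> omega

lemma Xs_pos (N : ℤ) (hN : 1 ≤ N) (n : ℕ) : 1 ≤ Xs N n :=
  le_trans (le_max_left _ _) (Xs_ge N hN n)

lemma det_eq (N : ℤ) : ∀ n : ℕ, Xs N n * Ys (n+1) - Xs N (n+1) * Ys n = (-1)^n := by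
  intro n
  induction n using Nat.twoStepInduction with
  | zero => simp [Xs, Ys]
  | one => simp [Xs, Ys]
  | more n ih1 ih2 =>
      have e1 : Xs N (n+2) = Xs N (n+1) + Xs N n := rfl
      have e2 : Ys (n+2) = Ys (n+1) + Ys n := rfl
      have e3 : Xs N (n+3) = Xs N (n+2) + Xs N (n+1) := rfl
      have e4 : Ys (n+3) = Ys (n+2) + Ys (n+1) := rfl
      have : Xs N (n+2) * Ys (n+3) - Xs N (n+3) * Ys (n+2)
          = -(Xs N (n+1) * Ys (n+2) - Xs N (n+2) * Ys (n+1)) := by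
        rw [e3, e4]; ring
      rw [this, ih2]
      ring


lemma goldConj_pow_rec (n : ℕ) : σ^(n+2) = σ^(n+1) + σ^n := by
  have h : σ^2 = σ + 1 := hBsq
  calc σ^(n+2) = σ^n * σ^2 := by ring
  _ = σ^n * (σ + 1) := by rw [h]
  _ = σ^(n+1) + σ^n := by ring

lemma gold_pow_rec (n : ℕ) : τ^(n+2) = τ^(n+1) + τ^n := by
  have h : τ^2 = τ + 1 := hAsq
  calc τ^(n+2) = τ^n * τ^2 := by ring
  _ = τ^n * (τ + 1) := by rw [h]
  _ = τ^(n+1) + τ^n := by ring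

section Real

variable (N : ℤ)

noncomputable def L : ℝ := N * τ + 1
noncomputable def B : ℝ := τ / L N

lemma L_pos (hN : 1 ≤ N) : (0:ℝ) < L N := by
  have h : (1:ℝ) ≤ (N:ℝ) := by exact_mod_cast hN
  unfold L; nlinarith [one_lt_gA]

lemma L_ge (hN : 1 ≤ N) : τ + 1 ≤ L N := by
  have h : (1:ℝ) ≤ (N:ℝ) := by exact_mod_cast hN
  unfold L; nlinarith [gA_pos]

/-- key error identity: Xₙ β − Yₙ = τ σⁿ / L -/
lemma err_eq (hN : 1 ≤ N) : ∀ n : ℕ, (Xs N n : ℝ) * B N - (Ys n : ℝ) = τ * σ^n / L N := by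
  have hL : (0:ℝ) < L N := L_pos N hN
  intro n
  induction n using Nat.twoStepInduction with
  | zero => simp [Xs, Ys, B]
  | one =>
      have h2 : τ * σ = -1 := hmul
      have hL' : L N ≠ 0 := ne_of_gt hL
      simp only [Xs, Ys, B, pow_one, Int.cast_one]
      field_simp
      unfold L
      linear_combination -h2
  | more n ih1 ih2 =>
      have e1 : Xs N (n+2) = Xs N (n+1) + Xs N n := rfl
      have e2 : Ys (n+2) = Ys (n+1) + Ys n := rfl
      have hσ := goldConj_pow_rec n
      rw [e1, e2]
      push_cast
      rw [show ((Xs N (n+1) : ℝ) + (Xs N n : ℝ)) * B N - ((Ys (n+1) : ℝ) + (Ys n : ℝ))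
        = ((Xs N (n+1) : ℝ) * B N - Ys (n+1)) + ((Xs N n : ℝ) * B N - Ys n) by ring]
      rw [ih2, ih1, hσ]
      field_simp

/-- closed form bound ingredient: √5 Xₙ = L(τ−1)τⁿ − L'(σ−1)σⁿ with L' = Nσ+1 -/
lemma Xs_closed (n : ℕ) :
    Real.sqrt 5 * (Xs N n : ℝ) = L N * (τ - 1) * τ^n - (N * σ + 1) * (σ - 1) * σ^n := by
  induction n using Nat.twoStepInduction with
  | zero =>
      simp only [Xs, pow_zero, mul_one, Int.cast_one]
      unfold L
      linear_combination -hsub - (N:ℝ) * hAsq + (N:ℝ) * hBsq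
  | one =>
      simp only [Xs, pow_one]
      unfold L
      linear_combination -(N:ℝ) * hsub - ((N:ℝ)*τ+1) * hAsq + ((N:ℝ)*σ+1) * hBsq
  | more n ih1 ih2 =>
      have e1 : Xs N (n+2) = Xs N (n+1) + Xs N n := rfl
      have hσ := goldConj_pow_rec n
      have hτ := gold_pow_rec n
      rw [e1]
      push_cast
      rw [mul_add, ih1, ih2, hσ, hτ]
      ring


lemma one_sub_gB : 1 - σ = τ := by linear_combination -hadd

lemma sqrt5_ge : (2.2:ℝ) ≤ Real.sqrt 5 := by
  nlinarith [Real.sq_sqrt (by norm_num : (0:ℝ) ≤ 5), Real.sqrt_nonneg 5]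

lemma sqrt5_le : Real.sqrt 5 ≤ 2.24 := by
  nlinarith [Real.sq_sqrt (by norm_num : (0:ℝ) ≤ 5), Real.sqrt_nonneg 5]

lemma gA_ge : (1.5:ℝ) ≤ τ := by
  have := sqrt5_ge; unfold gA; linarith

lemma gA_le : τ ≤ 1.62 := by
  have := sqrt5_le; unfold gA; linarith

lemma round_eq_of_abs_sub_lt {x : ℝ} {m : ℤ} (h : |x - (m:ℝ)| < 1/2) : round x = m := by
  rw [round_eq, Int.floor_eq_iff]
  rw [abs_lt] at h
  constructor
  · linarith [h.1]
  · push_cast; linarith [h.2]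

lemma abs_err (hN : 1 ≤ N) (n : ℕ) :
    |(Xs N n : ℝ) * B N - (Ys n : ℝ)| = τ * |σ|^n / L N := by
  rw [err_eq N hN n, abs_div, abs_mul, abs_pow, abs_of_pos gA_pos,
    abs_of_pos (L_pos N hN)]

lemma err_small (hN : 1 ≤ N) (n : ℕ) (hn : 2 ≤ n) :
    τ * |σ|^n / L N < 1/2 := by
  have hL := L_ge N hN
  have hLpos := L_pos N hN
  have h1 : |σ|^n ≤ |σ|^2 := pow_le_pow_of_le_one (abs_nonneg _) (le_of_lt abs_gB_lt_one) hn
  have h2 : τ * |σ|^2 = |σ| := by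
    calc τ * |σ|^2 = (τ*|σ|)*|σ| := by ring
    _ = |σ| := by rw [gA_mul_abs_gB, one_mul]
  have h3 : τ * |σ|^n ≤ |σ| := by nlinarith [gA_pos, h1]
  rw [div_lt_iff₀ hLpos]
  nlinarith [gA_ge, abs_gB_lt_one]

lemma best_approx (hN : 1 ≤ N) (n : ℕ) (q p : ℤ) (hq1 : 1 ≤ q)
    (hq2 : q < Xs N (n+1)) :
    τ * |σ|^n / L N ≤ |(q:ℝ) * B N - (p:ℝ)| := by
  have hL := L_pos N hN
  have hdet : Xs N n * Ys (n+1) - Xs N (n+1) * Ys n = (-1)^n := det_eq N n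
  have hE2 : ((-1:ℤ)^n) * ((-1:ℤ)^n) = 1 := by
    rw [← pow_add]
    exact Even.neg_one_pow ⟨n, by ring⟩
  set E : ℤ := (-1)^n with hE
  set x : ℤ := E * (q * Ys (n+1) - p * Xs N (n+1)) with hx
  set y : ℤ := E * (p * Xs N n - q * Ys n) with hy
  have hqxy : x * Xs N n + y * Xs N (n+1) = q := by
    rw [hx, hy]; linear_combination (E*q) * hdet + q * hE2
  have hpxy : x * Ys n + y * Ys (n+1) = p := by
    rw [hx, hy]; linear_combination (E*p) * hdet + p * hE2
  have hqR : (x:ℝ) * (Xs N n : ℝ) + (y:ℝ) * (Xs N (n+1):ℝ) = (q:ℝ) := by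
    exact_mod_cast congrArg (fun z : ℤ => (z:ℝ)) hqxy
  have hpR : (x:ℝ) * (Ys n : ℝ) + (y:ℝ) * (Ys (n+1):ℝ) = (p:ℝ) := by
    exact_mod_cast congrArg (fun z : ℤ => (z:ℝ)) hpxy
  have hqb : (q:ℝ) * B N - (p:ℝ)
      = τ * σ^n / L N * ((x:ℝ) + (y:ℝ) * σ) := by
    have e1 := err_eq N hN n
    have e2 := err_eq N hN (n+1)
    have expand : (q:ℝ) * B N - (p:ℝ)
        = (x:ℝ) * ((Xs N n:ℝ) * B N - (Ys n:ℝ)) + (y:ℝ) * ((Xs N (n+1):ℝ) * B N - (Ys (n+1):ℝ)) := by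
      linear_combination -(B N) * hqR + hpR
    rw [expand, e1, e2]
    field_simp
    ring
  have hXn := Xs_pos N hN n
  have hXn1 := Xs_pos N hN (n+1)
  have key : 1 ≤ |(x:ℝ) + (y:ℝ) * σ| := by
    have hσneg := gB_neg
    have hσgt := neg_one_lt_gB
    rcases lt_trichotomy x 0 with hx0 | hx0 | hx0
    · rcases le_or_gt 0 y with hy0 | hy0
      · have hxR : (x:ℝ) ≤ -1 := by exact_mod_cast (show x ≤ (-1:ℤ) by omega)
        have hyR : (0:ℝ) ≤ (y:ℝ) := by exact_mod_cast hy0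
        have hsum : (x:ℝ) + (y:ℝ)*σ ≤ -1 := by nlinarith
        rw [abs_of_nonpos (by linarith)]
        linarith
      · exfalso
        have hx1 : x ≤ -1 := by omega
        have hy1 : y ≤ -1 := by omega
        nlinarith [hqxy, hXn, hXn1, hq1]
    · exfalso
      rw [hx0] at hqxy
      simp only [zero_mul, zero_add] at hqxy
      rcases le_or_gt y 0 with hy0 | hy0
      · nlinarith [hqxy, hXn1, hq1]
      · have hy1 : 1 ≤ y := hy0
        nlinarith [hqxy, hXn1, hq2]
    · rcases le_or_gt y 0 with hy0 | hy0
      · have hxR : (1:ℝ) ≤ (x:ℝ) := by exact_mod_cast (show (1:ℤ) ≤ x by omega)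
        have hyR : (y:ℝ) ≤ 0 := by exact_mod_cast hy0
        have hsum : (1:ℝ) ≤ (x:ℝ) + (y:ℝ)*σ := by nlinarith
        rw [abs_of_nonneg (by linarith)]
        linarith
      · exfalso
        have hx1 : 1 ≤ x := hx0
        have hy1 : 1 ≤ y := hy0
        nlinarith [hqxy, hXn, hXn1, hq2]
  rw [hqb, abs_mul]
  have habs : |τ * σ^n / L N| = τ * |σ|^n / L N := by
    rw [abs_div, abs_mul, abs_pow, abs_of_pos gA_pos, abs_of_pos hL]
  rw [habs]
  have hpos : 0 < τ * |σ|^n / L N :=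
    div_pos (mul_pos gA_pos (pow_pos abs_gB_pos n)) hL
  nlinarith [hpos, key]

lemma psi_eval (hN : 1 ≤ N) (n : ℕ) (hn : 2 ≤ n) (t : ℝ)
    (h1 : (Xs N n : ℝ) ≤ t) (h2 : t < (Xs N (n+1) : ℝ)) :
    psi (B N) t = τ * |σ|^n / L N := by
  apply IsLeast.csInf_eq
  constructor
  · refine ⟨Xs N n, Xs_pos N hN n, h1, ?_⟩
    have habs := abs_err N hN n
    have hsmall := err_small N hN n hn
    have hr : round ((Xs N n:ℝ) * B N) = Ys n :=
      round_eq_of_abs_sub_lt (by rw [habs]; exact hsmall)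
    unfold dni
    rw [hr, habs]
  · rintro v ⟨q, hq1, hqt, rfl⟩
    have hq2 : q < Xs N (n+1) := by
      have : (q:ℝ) < (Xs N (n+1):ℝ) := lt_of_le_of_lt hqt h2
      exact_mod_cast this
    exact best_approx N hN n q (round ((q:ℝ) * B N)) hq1 hq2

lemma exists_index (hN : 1 ≤ N) (M : ℕ) (t : ℝ) (ht : (Xs N M : ℝ) ≤ t) :
    ∃ n : ℕ, M ≤ n ∧ (Xs N n : ℝ) ≤ t ∧ t < (Xs N (n+1) : ℝ) := by
  have hub : ∃ j : ℕ, t < (Xs N (M + j + 1) : ℝ) := by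
    obtain ⟨j, hj⟩ := exists_nat_gt t
    refine ⟨j, lt_of_lt_of_le hj ?_⟩
    have h := Xs_ge N hN (M + j + 1)
    have h' : ((M + j + 1 : ℕ) : ℤ) ≤ Xs N (M + j + 1) := le_trans (le_max_right _ _) h
    have hjz : (j:ℤ) ≤ ((M+j+1 : ℕ):ℤ) := by push_cast; omega
    have : ((j:ℤ):ℝ) ≤ ((Xs N (M+j+1) : ℤ):ℝ) := by exact_mod_cast le_trans hjz h'
    exact_mod_cast this
  classical
  let j0 := Nat.find hub
  refine ⟨M + j0, Nat.le_add_right _ _, ?_, Nat.find_spec hub⟩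
  rcases Nat.eq_zero_or_pos j0 with h0 | h0
  · have : M + j0 = M := by omega
    rw [this]; exact ht
  · have hmin := Nat.find_min hub (show j0 - 1 < j0 by omega)
    push_neg at hmin
    have : M + (j0 - 1) + 1 = M + j0 := by omega
    rwa [this] at hmin

lemma Xs_approx (hN : 1 ≤ N) (n : ℕ) (hn : 10 ≤ n) :
    |Real.sqrt 5 * (Xs N n : ℝ) - L N * (τ-1) * τ^n| ≤ (1/100) * (L N * (τ-1) * τ^n) := by
  have hc := Xs_closed N n
  have heq : Real.sqrt 5 * (Xs N n : ℝ) - L N * (τ-1) * τ^n = -((N * σ + 1) * (σ - 1) * σ^n) := by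
    linear_combination hc
  rw [heq, abs_neg]
  have hNR : (1:ℝ) ≤ (N:ℝ) := by exact_mod_cast hN
  have h1 : |(N:ℝ) * σ + 1| ≤ L N := by
    unfold L
    rw [abs_le]
    constructor <;> nlinarith [gB_neg, neg_one_lt_gB, gA_ge]
  have h2 : |σ - 1| = τ := by
    rw [abs_of_neg (by nlinarith [gB_neg] : σ - 1 < 0)]
    linear_combination one_sub_gB
  have h3 : |(N * σ + 1) * (σ - 1) * σ^n| = |(N:ℝ) * σ + 1| * τ * |σ|^n := by
    rw [abs_mul, abs_mul, h2, abs_pow]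
  rw [h3]
  have hLpos := L_pos N hN
  have hApos := gA_pos
  have hpow : τ^n * |σ|^n = 1 := by
    rw [← mul_pow, gA_mul_abs_gB, one_pow]
  have hσsq : |σ|^2 ≤ 2/5 := by
    rw [sq_abs]
    nlinarith [gA_ge, gA_le, hadd]
  have ha : |σ|^n ≤ (2/5:ℝ)^5 := by
    calc |σ|^n ≤ |σ|^10 := pow_le_pow_of_le_one (abs_nonneg _) (le_of_lt abs_gB_lt_one) hn
    _ = (|σ|^2)^5 := by ring
    _ ≤ (2/5:ℝ)^5 := pow_le_pow_left₀ (sq_nonneg _) hσsq 5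
  have hann : (0:ℝ) ≤ |σ|^n := pow_nonneg (abs_nonneg _) n
  have key : τ * |σ|^n * |σ|^n ≤ (1/100)*(τ-1) := by
    nlinarith [gA_le, gA_ge, ha, hann, mul_self_le_mul_self hann ha]
  calc |(N:ℝ) * σ + 1| * τ * |σ|^n ≤ L N * τ * |σ|^n := by
        apply mul_le_mul_of_nonneg_right (mul_le_mul_of_nonneg_right h1 (le_of_lt hApos)) hann
  _ = L N * τ * |σ|^n * (τ^n * |σ|^n) := by rw [hpow, mul_one]
  _ = L N * (τ * |σ|^n * |σ|^n) * τ^n := by ring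
  _ ≤ L N * ((1/100)*(τ-1)) * τ^n := by
        apply mul_le_mul_of_nonneg_right (mul_le_mul_of_nonneg_left key (le_of_lt hLpos))
          (le_of_lt (pow_pos hApos n))
  _ = (1/100) * (L N * (τ-1) * τ^n) := by ring

end Real

end Satz2Aux

set_option maxHeartbeats 1000000 in
open Satz2Aux in
/-- Satz 2 (optimality): K cannot be replaced by any larger constant. -/
theorem satz2 :
    ∀ ε : ℝ, 0 < ε → ∃ α β : ℝ, Irrational α ∧ Irrational β ∧
      (∀ z : ℤ, α + β ≠ (z : ℝ)) ∧ (∀ z : ℤ, α - β ≠ (z : ℝ)) ∧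
      ∃ T : ℝ, ∀ t : ℝ, T ≤ t →
        |psi α t - psi β t| ≤
          (Real.sqrt ((Real.sqrt 5 + 1) / 2) - 1 + ε) * min (psi α t) (psi β t) := by
  intro ε hε
  set ε' : ℝ := min ε (1/8) with hε'def
  have hε'pos : 0 < ε' := lt_min hε (by norm_num)
  have hε'le : ε' ≤ 1/8 := min_le_right _ _
  have hε'ε : ε' ≤ ε := min_le_left _ _
  set s : ℝ := Real.sqrt ((Real.sqrt 5 + 1)/2) with hsdef
  have hs_nonneg : 0 ≤ s := Real.sqrt_nonneg _
  have hs_sq : s^2 = τ := by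
    rw [hsdef, Real.sq_sqrt (by positivity)]
    unfold Satz2Aux.gA; ring
  have hs_ge : (1.22:ℝ) ≤ s := by nlinarith [hs_sq, gA_ge, hs_nonneg]
  have hs_le : s ≤ 1.3 := by nlinarith [hs_sq, gA_le, hs_nonneg]
  obtain ⟨k, hk⟩ : ∃ k : ℕ, 16/ε' < τ^k := pow_unbounded_of_one_lt _ one_lt_gA
  set c : ℝ := s * τ^(k+1) with hcdef
  have hc_pos : 0 < c := mul_pos (by linarith) (pow_pos gA_pos _)
  have hc_big : 16*τ/ε' ≤ c := by
    have h1 : τ * (16/ε') ≤ τ * τ^k := by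
      have := le_of_lt hk
      nlinarith [gA_pos]
    have h2 : τ * τ^k ≤ s * τ^(k+1) := by
      have : τ^(k+1) = τ * τ^k := by ring
      rw [this]
      nlinarith [hs_ge, gA_pos, pow_pos gA_pos k]
    have h3 : 16*τ/ε' = τ * (16/ε') := by ring
    rw [hcdef, h3]
    linarith
  obtain ⟨N, hNge, hNlt⟩ : ∃ N : ℤ, (c-1)/τ ≤ (N:ℝ) ∧ (N:ℝ) < (c-1)/τ + 1 :=
    ⟨⌈(c-1)/τ⌉, Int.le_ceil _, Int.ceil_lt_add_one _⟩
  have hcbig2 : (192:ℝ) ≤ c := by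
    have h1 : (192:ℝ) ≤ 16*τ/ε' := by
      rw [le_div_iff₀ hε'pos]
      nlinarith [gA_ge, hε'le]
    linarith
  have hN3R : (3:ℝ) ≤ (N:ℝ) := by
    have : (3:ℝ) ≤ (c-1)/τ := by
      rw [le_div_iff₀ gA_pos]
      linarith only [gA_le, hcbig2]
    linarith
  have hN3 : (3:ℤ) ≤ N := by exact_mod_cast hN3R
  have hN1 : (1:ℤ) ≤ N := by omega
  have hLpos := L_pos N hN1
  have hLc : c ≤ L N := by
    unfold L
    rw [div_le_iff₀ gA_pos] at hNge
    nlinarith [hNge]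
  have hLρ : L N ≤ c*(1+ε'/16) := by
    have h1 : L N ≤ c + τ := by
      have h' : (N:ℝ)*τ < ((c-1)/τ + 1)*τ := mul_lt_mul_of_pos_right hNlt gA_pos
      rw [add_mul, div_mul_cancel₀ _ (ne_of_gt gA_pos), one_mul] at h'
      unfold L
      linarith
    have h2 : τ ≤ c*ε'/16 := by
      have heq : 16*τ/ε' * ε' = 16*τ := by field_simp
      nlinarith [mul_le_mul_of_nonneg_right hc_big (le_of_lt hε'pos), heq]
    linarith
  -- irrationality
  have hirr : ∀ M : ℤ, 1 ≤ M → Irrational (B M) := by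
    intro M hM
    have h1 : Irrational (τ + ((M - 1 : ℤ) : ℝ)) := gA_irrational.add_intCast (M - 1)
    have h2 : Irrational (τ + ((M - 1 : ℤ) : ℝ))⁻¹ := h1.inv
    have h3 : B M = (τ + ((M - 1 : ℤ) : ℝ))⁻¹ := by
      have hLM := L_pos M hM
      have hmul1 : (τ + ((M - 1 : ℤ) : ℝ)) * B M = 1 := by
        unfold B
        rw [mul_div_assoc', div_eq_one_iff_eq (ne_of_gt hLM)]
        unfold L
        push_cast
        linear_combination hAsq
      exact (inv_eq_of_mul_eq_one_right hmul1).symm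
    rw [h3]; exact h2
  -- value of B 1
  have hB1 : B 1 = τ - 1 := by
    unfold B L
    rw [div_eq_iff (by push_cast; nlinarith [gA_pos] : ((1:ℤ):ℝ) * τ + 1 ≠ 0)]
    push_cast
    linear_combination -hAsq
  have hL1 : L 1 = τ + 1 := by unfold L; push_cast; ring
  have hβL : B N * ((N:ℝ)*τ+1) = τ := by
    have : ((N:ℝ)*τ+1) = L N := by unfold L; ring
    rw [this]
    exact div_mul_cancel₀ _ (ne_of_gt hLpos)
  -- non-integer conditions
  have hadd_ne : ∀ z : ℤ, B 1 + B N ≠ (z:ℝ) := by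
    intro z h
    have hsub : B N - ((z:ℝ) - τ + 1) = 0 := by
      rw [hB1] at h; linarith
    have hkey : ((N*z - 2 : ℤ):ℝ) * τ = ((N - z - 1 : ℤ):ℝ) := by
      push_cast
      linear_combination hβL - ((N:ℝ)*τ+1) * hsub + (N:ℝ) * hAsq
    rcases eq_or_ne (N*z - 2) 0 with h0 | h0
    · have h2 : N*z = 2 := by omega
      rcases le_or_gt z 0 with hz | hz
      · nlinarith [hN3]
      · nlinarith [hN3, hz]
    · exact ((gA_irrational.intCast_mul h0).ne_int (N - z - 1)) hkey
  have hsub_ne : ∀ z : ℤ, B 1 - B N ≠ (z:ℝ) := by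
    intro z h
    have hsub : B N - (τ - 1 - (z:ℝ)) = 0 := by
      rw [hB1] at h; linarith
    have hkey : ((N*z : ℤ):ℝ) * τ = ((N - 1 - z : ℤ):ℝ) := by
      push_cast
      linear_combination -hβL + ((N:ℝ)*τ+1) * hsub + (N:ℝ) * hAsq
    rcases eq_or_ne (N*z) 0 with h0 | h0
    · have hz : z = 0 := by
        rcases mul_eq_zero.1 h0 with h | h
        · omega
        · exact h
      have : N - 1 - z = 0 := by
        have h2 : ((N - 1 - z : ℤ):ℝ) = 0 := by
          rw [← hkey, h0]; push_cast; ring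
        exact_mod_cast h2
      omega
    · exact ((gA_irrational.intCast_mul h0).ne_int (N - 1 - z)) hkey
  refine ⟨B 1, B N, hirr 1 le_rfl, hirr N hN1, hadd_ne, hsub_ne,
    max ((Xs 1 20 : ℤ):ℝ) ((Xs N 20 : ℤ):ℝ), ?_⟩
  intro t ht
  obtain ⟨n, hn20, hn1, hn2⟩ := exists_index 1 le_rfl 20 t (le_trans (le_max_left _ _) ht)
  obtain ⟨m, hm20, hm1, hm2⟩ := exists_index N hN1 20 t (le_trans (le_max_right _ _) ht)
  have hψα : psi (B 1) t = τ * |σ|^n / L 1 := psi_eval 1 le_rfl n (by omega) t hn1 hn2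
  have hψβ : psi (B N) t = τ * |σ|^m / L N := psi_eval N hN1 m (by omega) t hm1 hm2
  have h5pos : (0:ℝ) < Real.sqrt 5 := by linarith [sqrt5_ge]
  have hτ1 : (0:ℝ) < τ - 1 := by linarith [gA_ge]
  have bnd : ∀ (Nv : ℤ), 1 ≤ Nv → ∀ (j : ℕ), 10 ≤ j →
      (99/100)*(L Nv*(τ-1)*τ^j) ≤ Real.sqrt 5 * ((Xs Nv j : ℤ):ℝ) ∧
      Real.sqrt 5 * ((Xs Nv j : ℤ):ℝ) ≤ (101/100)*(L Nv*(τ-1)*τ^j) := by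
    intro Nv hNv j hj
    have h := Xs_approx Nv hNv j hj
    rw [abs_le] at h
    constructor <;> linarith [h.1, h.2]
  have hI0 : (99/100)*(L 1*(τ-1)*τ^n) < (101/100)*(L N*(τ-1)*τ^(m+1)) := by
    have h1 := (bnd 1 le_rfl n (by omega)).1
    have h2 := (bnd N hN1 (m+1) (by omega)).2
    have h3 : Real.sqrt 5 * ((Xs 1 n : ℤ):ℝ) ≤ Real.sqrt 5 * t :=
      mul_le_mul_of_nonneg_left hn1 (le_of_lt h5pos)
    have h4 : Real.sqrt 5 * t < Real.sqrt 5 * ((Xs N (m+1) : ℤ):ℝ) :=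
      mul_lt_mul_of_pos_left hm2 h5pos
    linarith
  have hII0 : (99/100)*(L N*(τ-1)*τ^m) < (101/100)*(L 1*(τ-1)*τ^(n+1)) := by
    have h1 := (bnd N hN1 m (by omega)).1
    have h2 := (bnd 1 le_rfl (n+1) (by omega)).2
    have h3 : Real.sqrt 5 * ((Xs N m : ℤ):ℝ) ≤ Real.sqrt 5 * t :=
      mul_le_mul_of_nonneg_left hm1 (le_of_lt h5pos)
    have h4 : Real.sqrt 5 * t < Real.sqrt 5 * ((Xs 1 (n+1) : ℤ):ℝ) :=
      mul_lt_mul_of_pos_left hn2 h5pos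
    linarith
  have hI1 : (99/100)*((τ+1)*τ^n) < (101/100)*(L N*τ^(m+1)) := by
    rw [hL1] at hI0
    have := lt_of_mul_lt_mul_right
      (show ((99/100)*((τ+1)*τ^n))*(τ-1) < ((101/100)*(L N*τ^(m+1)))*(τ-1) by linarith only [hI0])
      (le_of_lt hτ1)
    exact this
  have hII1 : (99/100)*(L N*τ^m) < (101/100)*((τ+1)*τ^(n+1)) := by
    rw [hL1] at hII0
    have := lt_of_mul_lt_mul_right
      (show ((99/100)*(L N*τ^m))*(τ-1) < ((101/100)*((τ+1)*τ^(n+1)))*(τ-1) by linarith only [hII0])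
      (le_of_lt hτ1)
    exact this
  have eqn2 : τ^(n+2) = (τ+1)*τ^n := by
    rw [pow_add, hAsq]; ring
  have eqn3 : τ^(n+3) = (τ+1)*τ^(n+1) := by
    rw [show n+3 = (n+1)+2 by ring, pow_add, hAsq]; ring
  have hI : (99/100)*τ^(n+2) < (101/100)*(L N*τ^(m+1)) := by rw [eqn2]; linarith
  have hII : (99/100)*(L N*τ^m) < (101/100)*τ^(n+3) := by rw [eqn3]; linarith
  -- dichotomy
  have hQpos : (0:ℝ) < τ^(k+1)*τ^(m+1) := mul_pos (pow_pos gA_pos _) (pow_pos gA_pos _)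
  have hsb : s*(1+ε'/16) ≤ 1.32 := by
    have h1 : (1+ε'/16) ≤ 129/128 := by linarith only [hε'le]
    have h2 : s*(1+ε'/16) ≤ 1.3*(129/128) :=
      mul_le_mul hs_le h1 (by linarith only [hε'pos]) (by norm_num)
    linarith only [h2]
  have hb' : L N*τ^(m+1) ≤ 1.32*(τ^(k+1)*τ^(m+1)) := by
    calc L N*τ^(m+1) ≤ (c*(1+ε'/16))*τ^(m+1) :=
          mul_le_mul_of_nonneg_right hLρ (le_of_lt (pow_pos gA_pos _))
    _ = (s*(1+ε'/16))*(τ^(k+1)*τ^(m+1)) := by rw [hcdef]; ring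
    _ ≤ 1.32*(τ^(k+1)*τ^(m+1)) := mul_le_mul_of_nonneg_right hsb (le_of_lt hQpos)
  have hppI : τ^(n+2) < τ^(k+m+3) := by
    have e : τ^(k+m+3) = τ^(k+1)*τ^(m+1)*τ := by
      rw [show k+m+3 = (k+1)+(m+1)+1 by ring, pow_add, pow_add, pow_one]
    have hτQ : (τ^(k+1)*τ^(m+1))*(1.5:ℝ) ≤ (τ^(k+1)*τ^(m+1))*τ :=
      mul_le_mul_of_nonneg_left gA_ge (le_of_lt hQpos)
    rw [e]
    linarith only [hI, hb', hτQ, hQpos]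
  have hnkm : n ≤ k + m := by
    have := (pow_lt_pow_iff_right₀ one_lt_gA).1 hppI
    omega
  have hppII : τ^(k+m+1) < τ^(n+3) := by
    have e2 : τ^(k+m+1) = τ^(k+1)*τ^m := by rw [← pow_add]; congr 1; omega
    have hlo : c*τ^m ≤ L N*τ^m := mul_le_mul_of_nonneg_right hLc (le_of_lt (pow_pos gA_pos m))
    have hsc : c*τ^m = s*τ^(k+m+1) := by rw [hcdef, e2]; ring
    have hsτ : (1.22:ℝ)*τ^(k+m+1) ≤ s*τ^(k+m+1) :=
      mul_le_mul_of_nonneg_right hs_ge (le_of_lt (pow_pos gA_pos _))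
    linarith only [hII, hlo, hsc, hsτ, pow_pos gA_pos (n+3), pow_pos gA_pos (k+m+1)]
  have hkmn : k + m ≤ n + 1 := by
    have := (pow_lt_pow_iff_right₀ one_lt_gA).1 hppII
    omega
  -- closed forms of psi
  have hpown : |σ|^n * τ^n = 1 := by rw [← mul_pow, mul_comm, gA_mul_abs_gB, one_pow]
  have hpowm : |σ|^m * τ^m = 1 := by rw [← mul_pow, mul_comm, gA_mul_abs_gB, one_pow]
  have hψα' : psi (B 1) t = τ / τ^(n+2) := by
    rw [hψα, hL1, div_eq_div_iff (ne_of_gt (by linarith only [gA_pos] : (0:ℝ) < τ + 1)) (ne_of_gt (pow_pos gA_pos (n+2)))]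
    rw [pow_add]
    linear_combination (τ*τ^2)*hpown + τ*hAsq
  have hψβ' : psi (B N) t = τ / (τ^m * L N) := by
    rw [hψβ, div_eq_div_iff (ne_of_gt hLpos) (ne_of_gt (mul_pos (pow_pos gA_pos m) hLpos))]
    linear_combination (τ*L N)*hpowm
  have hψαpos : 0 < psi (B 1) t := by
    rw [hψα']; exact div_pos gA_pos (pow_pos gA_pos _)
  have hψβpos : 0 < psi (B N) t := by
    rw [hψβ']; exact div_pos gA_pos (mul_pos (pow_pos gA_pos m) hLpos)
  -- the two key inequalities
  have hd : k + m = n ∨ k + m = n + 1 := by omega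
  have hsεnn : (0:ℝ) ≤ (s+ε')*τ := mul_nonneg (by linarith) (le_of_lt gA_pos)
  have hss : s*s = τ := by linear_combination hs_sq
  have FA : τ * τ^(n+2) ≤ (s+ε')*τ*(τ^m * L N) := by
    rcases hd with he | he
    · -- k+m = n
      have hpid : τ^(k+1)*τ^m = τ^(n+1) := by rw [← pow_add]; congr 1; omega
      have hlo2 : s*τ^(n+1) ≤ τ^m*L N := by
        calc s*τ^(n+1) = (s*τ^(k+1))*τ^m := by rw [← hpid]; ring
        _ = c*τ^m := by rw [hcdef]
        _ ≤ L N*τ^m := mul_le_mul_of_nonneg_right hLc (le_of_lt (pow_pos gA_pos m))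
        _ = τ^m*L N := by ring
      have hmul := mul_le_mul_of_nonneg_left hlo2 hsεnn
      have hPpos : (0:ℝ) < τ^(n+1) := pow_pos gA_pos _
      have h3 : 0 ≤ ε'*s*(τ*τ^(n+1)) :=
        mul_nonneg (mul_nonneg (le_of_lt hε'pos) hs_nonneg) (le_of_lt (mul_pos gA_pos hPpos))
      have e1 : (s+ε')*τ*(s*τ^(n+1)) = (s*s)*(τ*τ^(n+1)) + ε'*s*(τ*τ^(n+1)) := by ring
      have ep : τ^(n+2) = τ^(n+1)*τ := by rw [pow_succ]
      rw [ep]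
      calc τ*(τ^(n+1)*τ) = (s*s)*(τ*τ^(n+1)) := by rw [hss]; ring
      _ ≤ (s+ε')*τ*(s*τ^(n+1)) := by rw [e1]; linarith only [h3]
      _ ≤ (s+ε')*τ*(τ^m*L N) := hmul
    · -- k+m = n+1
      have hpid : τ^(k+1)*τ^m = τ^(n+2) := by rw [← pow_add]; congr 1; omega
      have hlo2 : s*τ^(n+2) ≤ τ^m*L N := by
        calc s*τ^(n+2) = (s*τ^(k+1))*τ^m := by rw [← hpid]; ring
        _ = c*τ^m := by rw [hcdef]
        _ ≤ L N*τ^m := mul_le_mul_of_nonneg_right hLc (le_of_lt (pow_pos gA_pos m))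
        _ = τ^m*L N := by ring
      have hmul := mul_le_mul_of_nonneg_left hlo2 hsεnn
      have hPpos : (0:ℝ) < τ^(n+2) := pow_pos gA_pos _
      have h3 : 0 ≤ ε'*s*(τ*τ^(n+2)) :=
        mul_nonneg (mul_nonneg (le_of_lt hε'pos) hs_nonneg) (le_of_lt (mul_pos gA_pos hPpos))
      have e1 : (s+ε')*τ*(s*τ^(n+2)) = (s*s)*(τ*τ^(n+2)) + ε'*s*(τ*τ^(n+2)) := by ring
      have h4 : τ*τ^(n+2) ≤ τ*(τ*τ^(n+2)) :=
        le_mul_of_one_le_left (le_of_lt (mul_pos gA_pos hPpos)) (le_of_lt one_lt_gA)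
      calc τ*τ^(n+2) ≤ τ*(τ*τ^(n+2)) := h4
      _ = (s*s)*(τ*τ^(n+2)) := by rw [hss]
      _ ≤ (s+ε')*τ*(s*τ^(n+2)) := by rw [e1]; linarith only [h3]
      _ ≤ (s+ε')*τ*(τ^m*L N) := hmul
  have hb1 : s*(1+ε'/16) ≤ s + ε' := by
    have hε1 : s*ε' ≤ 1.3*ε' := mul_le_mul_of_nonneg_right hs_le (le_of_lt hε'pos)
    linarith only [hε1, hε'pos]
  have FB : τ * (τ^m * L N) ≤ (s+ε')*τ*τ^(n+2) := by
    rcases hd with he | he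
    · -- k+m = n
      have hpid : τ^(k+1)*τ^m = τ^(n+1) := by rw [← pow_add]; congr 1; omega
      have hhi2 : τ^m*L N ≤ s*(1+ε'/16)*τ^(n+1) := by
        calc τ^m*L N = L N*τ^m := by ring
        _ ≤ (c*(1+ε'/16))*τ^m := mul_le_mul_of_nonneg_right hLρ (le_of_lt (pow_pos gA_pos m))
        _ = s*(1+ε'/16)*τ^(n+1) := by rw [hcdef, ← hpid]; ring
      have hPpos : (0:ℝ) < τ^(n+1) := pow_pos gA_pos _
      have hmul := mul_le_mul_of_nonneg_left hhi2 (le_of_lt gA_pos)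
      have ep : τ^(n+2) = τ^(n+1)*τ := by rw [pow_succ]
      rw [ep]
      have hscal : s*(1+ε'/16) ≤ (s+ε')*τ := by
        have b2 : s + ε' ≤ (s+ε')*τ :=
          le_mul_of_one_le_right (by linarith only [hs_ge, hε'pos]) (le_of_lt one_lt_gA)
        linarith only [hb1, b2]
      have hmul2 := mul_le_mul_of_nonneg_right hscal (le_of_lt (mul_pos gA_pos hPpos))
      linarith only [hmul, hmul2]
    · -- k+m = n+1
      have hpid : τ^(k+1)*τ^m = τ^(n+2) := by rw [← pow_add]; congr 1; omega
      have hhi2 : τ^m*L N ≤ s*(1+ε'/16)*τ^(n+2) := by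
        calc τ^m*L N = L N*τ^m := by ring
        _ ≤ (c*(1+ε'/16))*τ^m := mul_le_mul_of_nonneg_right hLρ (le_of_lt (pow_pos gA_pos m))
        _ = s*(1+ε'/16)*τ^(n+2) := by rw [hcdef, ← hpid]; ring
      have hPpos : (0:ℝ) < τ^(n+2) := pow_pos gA_pos _
      have hmul := mul_le_mul_of_nonneg_left hhi2 (le_of_lt gA_pos)
      have hmul2 := mul_le_mul_of_nonneg_right hb1 (le_of_lt (mul_pos gA_pos hPpos))
      linarith only [hmul, hmul2]
  have goalA : psi (B N) t ≤ (s+ε') * psi (B 1) t := by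
    rw [hψα', hψβ', ← mul_div_assoc,
      div_le_div_iff₀ (mul_pos (pow_pos gA_pos m) hLpos) (pow_pos gA_pos (n+2))]
    linarith only [FA]
  have goalB : psi (B 1) t ≤ (s+ε') * psi (B N) t := by
    rw [hψα', hψβ', ← mul_div_assoc,
      div_le_div_iff₀ (pow_pos gA_pos (n+2)) (mul_pos (pow_pos gA_pos m) hLpos)]
    linarith only [FB]
  have hεψα : ε' * psi (B 1) t ≤ ε * psi (B 1) t :=
    mul_le_mul_of_nonneg_right hε'ε (le_of_lt hψαpos)
  have hεψβ : ε' * psi (B N) t ≤ ε * psi (B N) t :=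
    mul_le_mul_of_nonneg_right hε'ε (le_of_lt hψβpos)
  rcases le_total (psi (B 1) t) (psi (B N) t) with hc1 | hc1
  · rw [abs_of_nonpos (by linarith only [hc1]), min_eq_left hc1]
    linarith only [goalA, hεψα]
  · rw [abs_of_nonneg (by linarith only [hc1]), min_eq_right hc1]
    linarith only [goalB, hεψβ]
end
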